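/- arXiv:0708.0853 — 5 statements merged into one kernel-verified Lean document; each statement's English description precedes it below -/
import Mathlib

section
/- Let G be a group with a finite symmetric generating set S and let (W_t)_{t≥0} be the simple random walk on the Cayley graph of G determined by S. Let X be a Banach space satisfying the p-smoothness inequality with constant S_p for some 1 < p ≤ 2, let π be a homomorphism from G to the group of linear isometric automorphisms of X, and let f ∈ Z¹(G,π) be a 1-cocycle. Then for every t ∈ ℕ, E[‖f(W_t)‖^p] ≤ C_p · t · E[‖f(W₁)‖^p], where C_p = 2^{2p} S_p^p / (2^{p−1} − 1). -/
open MeasureTheory ENNReal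

/-- The word length distance on a group `G` associated to a generating set `S`. -/
noncomputable def wordDist {G : Type*} [Group G] (S : Set G) (x y : G) : ℕ :=
  sInf {n : ℕ | ∃ l : List G, l.length = n ∧ (∀ s ∈ l, s ∈ S) ∧ x⁻¹ * y = l.prod}

/-- `S` is a symmetric generating set of `G`. -/
def IsSymmGenSet {G : Type*} [Group G] (S : Set G) : Prop :=
  (∀ s ∈ S, s⁻¹ ∈ S) ∧ Subgroup.closure S = ⊤

/-- `E[F(W_t)]` for the simple random walk `W_t = σ₁ ⋯ σ_t` on the Cayley graph of `G`
determined by `S`, where the steps `σ_i` are i.i.d. uniform on the finite set `S`: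
the average of `F` over all words of length `t` in `S`. -/
noncomputable def walkExp {G : Type*} [Group G] (S : Finset G) (t : ℕ) (F : G → ℝ) : ℝ :=
  (∑ σ : Fin t → {x // x ∈ S}, F (List.ofFn fun i => (σ i : G)).prod) / (S.card : ℝ) ^ t

set_option linter.unusedSectionVars false
set_option maxHeartbeats 4000000

namespace CWAux

variable {G : Type*} [Group G] {S : Finset G}
variable {X : Type*} [NormedAddCommGroup X] [NormedSpace ℝ X]

/-- Product in `G` of a word over `S`. -/
def prodw (S : Finset G) : List {x // x ∈ S} → G := fun l => (l.map Subtype.val).prod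

@[simp] lemma prodw_nil : prodw S ([] : List {x // x ∈ S}) = 1 := rfl

@[simp] lemma prodw_cons (s : {x // x ∈ S}) (l : List {x // x ∈ S}) :
    prodw S (s :: l) = (s : G) * prodw S l := by
  simp [prodw]

lemma prodw_append (l m : List {x // x ∈ S}) :
    prodw S (l ++ m) = prodw S l * prodw S m := by
  simp [prodw]

/-- Abstract martingale-type sum. -/
def MW (π : G →* (X ≃ₗᵢ[ℝ] X)) (Θ : List {x // x ∈ S} → G) (h : {x // x ∈ S} → X) :
    List {x // x ∈ S} → X
  | [] => 0
  | s :: l => MW π Θ h l + π (Θ l) (h s)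

@[simp] lemma MW_nil (π : G →* (X ≃ₗᵢ[ℝ] X)) (Θ : List {x // x ∈ S} → G)
    (h : {x // x ∈ S} → X) : MW π Θ h [] = 0 := rfl

@[simp] lemma MW_cons (π : G →* (X ≃ₗᵢ[ℝ] X)) (Θ : List {x // x ∈ S} → G)
    (h : {x // x ∈ S} → X) (s : {x // x ∈ S}) (l : List {x // x ∈ S}) :
    MW π Θ h (s :: l) = MW π Θ h l + π (Θ l) (h s) := rfl

/-- Two-point power mean inequality. -/
lemma two_pm {p : ℝ} (hp : 1 ≤ p) {x y : ℝ} (hx : 0 ≤ x) (hy : 0 ≤ y) :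
    (x + y) ^ p ≤ 2 ^ (p - 1) * (x ^ p + y ^ p) := by
  have := Real.rpow_sum_le_const_mul_sum_rpow (Finset.univ : Finset (Fin 2)) ![x, y] hp
  simpa [Fin.sum_univ_two, abs_of_nonneg hx, abs_of_nonneg hy] using this

/-- Power mean for sums over a fintype. -/
lemma sum_pm {ι : Type*} [Fintype ι] {p : ℝ} (hp : 1 ≤ p) (c : ι → ℝ) (hc : ∀ i, 0 ≤ c i) :
    (∑ i, c i) ^ p ≤ (Fintype.card ι : ℝ) ^ (p - 1) * ∑ i, c i ^ p := by
  have := Real.rpow_sum_le_const_mul_sum_rpow (Finset.univ : Finset ι) c hp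
  simp only [abs_of_nonneg (hc _)] at this
  simpa [Finset.card_univ] using this

/-- The basic smoothness + conditional Jensen step. -/
lemma step_bound {p Sp : ℝ} (hp1 : 1 < p)
    (hsmooth : ∀ x y : X, ‖x + y‖ ^ p + ‖x - y‖ ^ p ≤ 2 * ‖x‖ ^ p + 2 * Sp ^ p * ‖y‖ ^ p)
    (hn : 0 < S.card) (a : X) (b : {x // x ∈ S} → X) (hb : ∑ s : {x // x ∈ S}, b s = 0) :
    ∑ s : {x // x ∈ S}, ‖a + b s‖ ^ p ≤
      (S.card : ℝ) * ‖a‖ ^ p + 2 * Sp ^ p * ∑ s : {x // x ∈ S}, ‖b s‖ ^ p := by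
  have hp0 : (0:ℝ) < p := lt_trans one_pos hp1
  have hcard : (Fintype.card {x // x ∈ S} : ℝ) = (S.card : ℝ) := by
    rw [Fintype.card_coe]
  have hnR : (0:ℝ) < (S.card : ℝ) := by exact_mod_cast hn
  -- Jensen: card * ‖a‖ ≤ ∑ ‖a - b s‖
  have hJ1 : (S.card : ℝ) * ‖a‖ ≤ ∑ s : {x // x ∈ S}, ‖a - b s‖ := by
    have h1 : ∑ s : {x // x ∈ S}, (a - b s) = (S.card : ℕ) • a := by
      rw [Finset.sum_sub_distrib, hb, sub_zero, Finset.sum_const, Finset.card_univ,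
        Fintype.card_coe]
    have h2 : ‖∑ s : {x // x ∈ S}, (a - b s)‖ = (S.card : ℝ) * ‖a‖ := by
      rw [h1, ← Nat.cast_smul_eq_nsmul ℝ, norm_smul]
      simp
    rw [← h2]
    exact norm_sum_le _ _
  -- power mean: ∑ ‖a - b s‖^p ≥ card * ‖a‖^p
  have hJ : (S.card : ℝ) * ‖a‖ ^ p ≤ ∑ s : {x // x ∈ S}, ‖a - b s‖ ^ p := by
    have h3 : ((S.card : ℝ) * ‖a‖) ^ p ≤ (∑ s : {x // x ∈ S}, ‖a - b s‖) ^ p :=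
      Real.rpow_le_rpow (by positivity) hJ1 hp0.le
    have h4 := sum_pm (le_of_lt hp1) (fun s : {x // x ∈ S} => ‖a - b s‖) (fun s => norm_nonneg _)
    rw [hcard] at h4
    have h5 : ((S.card : ℝ) * ‖a‖) ^ p = (S.card : ℝ) ^ p * ‖a‖ ^ p :=
      Real.mul_rpow hnR.le (norm_nonneg _)
    have h6 : (S.card : ℝ) ^ p = (S.card : ℝ) ^ (p - 1) * (S.card : ℝ) := by
      rw [← Real.rpow_add_one (ne_of_gt hnR) (p-1)]
      congr 1
      ring
    have h7 : (S.card:ℝ) ^ (p-1) * (S.card:ℝ) * ‖a‖ ^ p ≤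
        (S.card:ℝ) ^ (p-1) * ∑ s : {x // x ∈ S}, ‖a - b s‖ ^ p := by
      calc (S.card:ℝ) ^ (p-1) * (S.card:ℝ) * ‖a‖ ^ p
          = ((S.card : ℝ) * ‖a‖) ^ p := by rw [h5, h6]
        _ ≤ (∑ s : {x // x ∈ S}, ‖a - b s‖) ^ p := h3
        _ ≤ (S.card:ℝ) ^ (p-1) * ∑ s : {x // x ∈ S}, ‖a - b s‖ ^ p := h4
    have h8 : (0:ℝ) < (S.card : ℝ) ^ (p-1) := Real.rpow_pos_of_pos hnR _
    nlinarith [h8]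
  have hsm : ∀ s : {x // x ∈ S},
      ‖a + b s‖ ^ p ≤ 2 * ‖a‖ ^ p + 2 * Sp ^ p * ‖b s‖ ^ p - ‖a - b s‖ ^ p := by
    intro s
    have := hsmooth a (b s)
    linarith
  calc ∑ s : {x // x ∈ S}, ‖a + b s‖ ^ p
      ≤ ∑ s : {x // x ∈ S}, (2 * ‖a‖ ^ p + 2 * Sp ^ p * ‖b s‖ ^ p - ‖a - b s‖ ^ p) :=
        Finset.sum_le_sum fun s _ => hsm s
    _ = (S.card : ℝ) * (2 * ‖a‖ ^ p) + 2 * Sp ^ p * (∑ s : {x // x ∈ S}, ‖b s‖ ^ p)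
        - ∑ s : {x // x ∈ S}, ‖a - b s‖ ^ p := by
        rw [Finset.sum_sub_distrib, Finset.sum_add_distrib, Finset.sum_const, Finset.card_univ,
          Fintype.card_coe, Finset.mul_sum]
        simp [nsmul_eq_mul]
    _ ≤ (S.card : ℝ) * ‖a‖ ^ p + 2 * Sp ^ p * ∑ s : {x // x ∈ S}, ‖b s‖ ^ p := by
        nlinarith [hJ]


lemma ofFn_cons' {α : Type*} {k : ℕ} (s : α) (τ : Fin k → α) :
    List.ofFn (Fin.cons s τ : Fin (k+1) → α) = s :: List.ofFn τ := by
  rw [List.ofFn_succ]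
  simp

/-- Pisier-type martingale inequality. -/
lemma MW_bound {p Sp : ℝ} (hp1 : 1 < p) (hSp : 0 < Sp)
    (hsmooth : ∀ x y : X, ‖x + y‖ ^ p + ‖x - y‖ ^ p ≤ 2 * ‖x‖ ^ p + 2 * Sp ^ p * ‖y‖ ^ p)
    (hn : 0 < S.card) (π : G →* (X ≃ₗᵢ[ℝ] X)) (Θ : List {x // x ∈ S} → G)
    (h : {x // x ∈ S} → X) (hh : ∑ s : {x // x ∈ S}, h s = 0) :
    ∀ k : ℕ, (∑ σ : Fin k → {x // x ∈ S}, ‖MW π Θ h (List.ofFn σ)‖ ^ p) * (S.card : ℝ) ≤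
      2 * Sp ^ p * k * (S.card : ℝ) ^ k * ∑ s : {x // x ∈ S}, ‖h s‖ ^ p := by
  have hp0 : (0:ℝ) < p := lt_trans one_pos hp1
  have hnR : (0:ℝ) < (S.card : ℝ) := by exact_mod_cast hn
  have hH : (0:ℝ) ≤ ∑ s : {x // x ∈ S}, ‖h s‖ ^ p :=
    Finset.sum_nonneg fun s _ => Real.rpow_nonneg (norm_nonneg _) p
  intro k
  induction k with
  | zero =>
      have : ∀ σ : Fin 0 → {x // x ∈ S}, ‖MW π Θ h (List.ofFn σ)‖ ^ p = 0 := by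
        intro σ
        simp [List.ofFn_zero, Real.zero_rpow (ne_of_gt hp0)]
      rw [Finset.sum_congr rfl (fun σ _ => this σ)]
      simp
  | succ k ih =>
      -- split off the first coordinate
      have hsplit : (∑ σ : Fin (k+1) → {x // x ∈ S}, ‖MW π Θ h (List.ofFn σ)‖ ^ p)
          = ∑ τ : Fin k → {x // x ∈ S}, ∑ s : {x // x ∈ S},
              ‖MW π Θ h (List.ofFn τ) + π (Θ (List.ofFn τ)) (h s)‖ ^ p := by
        rw [← Equiv.sum_comp (Fin.consEquiv (fun _ => ({x // x ∈ S} : Type _)))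
          (fun σ => ‖MW π Θ h (List.ofFn σ)‖ ^ p), Fintype.sum_prod_type]
        rw [Finset.sum_comm]
        apply Finset.sum_congr rfl
        intro τ _
        apply Finset.sum_congr rfl
        intro s _
        have : (Fin.consEquiv (fun _ => ({x // x ∈ S} : Type _))) (s, τ) = Fin.cons s τ := rfl
        rw [this, ofFn_cons', MW_cons]
      rw [hsplit]
      have hstep : ∀ τ : Fin k → {x // x ∈ S},
          ∑ s : {x // x ∈ S}, ‖MW π Θ h (List.ofFn τ) + π (Θ (List.ofFn τ)) (h s)‖ ^ p ≤
          (S.card : ℝ) * ‖MW π Θ h (List.ofFn τ)‖ ^ p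
            + 2 * Sp ^ p * ∑ s : {x // x ∈ S}, ‖h s‖ ^ p := by
        intro τ
        have hb : ∑ s : {x // x ∈ S}, π (Θ (List.ofFn τ)) (h s) = 0 := by
          rw [← map_sum, hh, map_zero]
        have := step_bound hp1 hsmooth hn (MW π Θ h (List.ofFn τ))
          (fun s => π (Θ (List.ofFn τ)) (h s)) hb
        simpa [LinearIsometryEquiv.norm_map] using this
      have hsum : (∑ τ : Fin k → {x // x ∈ S}, ∑ s : {x // x ∈ S},
            ‖MW π Θ h (List.ofFn τ) + π (Θ (List.ofFn τ)) (h s)‖ ^ p) ≤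
          (S.card : ℝ) * (∑ τ : Fin k → {x // x ∈ S}, ‖MW π Θ h (List.ofFn τ)‖ ^ p)
            + (S.card : ℝ) ^ k * (2 * Sp ^ p * ∑ s : {x // x ∈ S}, ‖h s‖ ^ p) := by
        calc (∑ τ : Fin k → {x // x ∈ S}, ∑ s : {x // x ∈ S},
            ‖MW π Θ h (List.ofFn τ) + π (Θ (List.ofFn τ)) (h s)‖ ^ p)
            ≤ ∑ τ : Fin k → {x // x ∈ S}, ((S.card : ℝ) * ‖MW π Θ h (List.ofFn τ)‖ ^ p
              + 2 * Sp ^ p * ∑ s : {x // x ∈ S}, ‖h s‖ ^ p) :=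
              Finset.sum_le_sum fun τ _ => hstep τ
          _ = (S.card : ℝ) * (∑ τ : Fin k → {x // x ∈ S}, ‖MW π Θ h (List.ofFn τ)‖ ^ p)
              + (S.card : ℝ) ^ k * (2 * Sp ^ p * ∑ s : {x // x ∈ S}, ‖h s‖ ^ p) := by
              rw [Finset.sum_add_distrib, ← Finset.mul_sum, Finset.sum_const, Finset.card_univ]
              congr 1
              rw [nsmul_eq_mul]
              congr 2
              rw [Fintype.card_fun, Fintype.card_coe, Fintype.card_fin]
              push_cast
              ring
      have hMk : (0:ℝ) ≤ ∑ τ : Fin k → {x // x ∈ S}, ‖MW π Θ h (List.ofFn τ)‖ ^ p :=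
        Finset.sum_nonneg fun τ _ => Real.rpow_nonneg (norm_nonneg _) p
      have hSpp : (0:ℝ) < Sp ^ p := Real.rpow_pos_of_pos hSp p
      have hpowk : (0:ℝ) < (S.card : ℝ) ^ k := pow_pos hnR k
      calc (∑ τ : Fin k → {x // x ∈ S}, ∑ s : {x // x ∈ S},
            ‖MW π Θ h (List.ofFn τ) + π (Θ (List.ofFn τ)) (h s)‖ ^ p) * (S.card : ℝ)
          ≤ ((S.card : ℝ) * (∑ τ : Fin k → {x // x ∈ S}, ‖MW π Θ h (List.ofFn τ)‖ ^ p)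
            + (S.card : ℝ) ^ k * (2 * Sp ^ p * ∑ s : {x // x ∈ S}, ‖h s‖ ^ p)) * (S.card : ℝ) :=
            mul_le_mul_of_nonneg_right hsum hnR.le
        _ = (S.card : ℝ) * ((∑ τ : Fin k → {x // x ∈ S}, ‖MW π Θ h (List.ofFn τ)‖ ^ p)
              * (S.card : ℝ))
            + (S.card : ℝ) ^ (k+1) * (2 * Sp ^ p * ∑ s : {x // x ∈ S}, ‖h s‖ ^ p) := by
            ring
        _ ≤ (S.card : ℝ) * (2 * Sp ^ p * k * (S.card : ℝ) ^ k * ∑ s : {x // x ∈ S}, ‖h s‖ ^ p)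
            + (S.card : ℝ) ^ (k+1) * (2 * Sp ^ p * ∑ s : {x // x ∈ S}, ‖h s‖ ^ p) := by
            have := mul_le_mul_of_nonneg_left ih hnR.le
            linarith
        _ = 2 * Sp ^ p * (k+1 : ℕ) * (S.card : ℝ) ^ (k+1) * ∑ s : {x // x ∈ S}, ‖h s‖ ^ p := by
            push_cast
            ring

section Cocycle

variable (π : G →* (X ≃ₗᵢ[ℝ] X)) (f : G → X)

lemma pi_mul_apply (a b : G) (v : X) : π (a * b) v = π a (π b v) := by
  rw [map_mul]
  rfl

lemma f_one (hcocycle : ∀ x y : G, f (x * y) = π x (f y) + f x) : f 1 = 0 := by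
  have := hcocycle 1 1
  simp only [mul_one, map_one] at this
  have h2 : f 1 = (LinearIsometryEquiv.refl ℝ X) (f 1) + f 1 := by
    convert this using 2
    rfl
  simp at h2
  exact h2

lemma pi_f_inv (hcocycle : ∀ x y : G, f (x * y) = π x (f y) + f x) (s : G) :
    π s (f s⁻¹) = - f s := by
  have := hcocycle s s⁻¹
  rw [mul_inv_cancel, f_one π f hcocycle] at this
  exact eq_neg_of_add_eq_zero_left this.symm

/-- `Mlist l = ∑ π(s₁⋯s_{i-1})(f sᵢ - μ)`. -/
def Mlist (π : G →* (X ≃ₗᵢ[ℝ] X)) (f : G → X) (μ : X) : List {x // x ∈ S} → X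
  | [] => 0
  | s :: l => (f (s : G) - μ) + π (s : G) (Mlist π f μ l)

@[simp] lemma Mlist_nil (μ : X) : Mlist π f μ ([] : List {x // x ∈ S}) = 0 := rfl

@[simp] lemma Mlist_cons (μ : X) (s : {x // x ∈ S}) (l : List {x // x ∈ S}) :
    Mlist π f μ (s :: l) = (f (s : G) - μ) + π (s : G) (Mlist π f μ l) := rfl

/-- `Ntil l = ∑ π(s₁⋯sᵢ)(f sᵢ⁻¹ - μ)`. -/
def Ntil (π : G →* (X ≃ₗᵢ[ℝ] X)) (f : G → X) (μ : X) : List {x // x ∈ S} → X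
  | [] => 0
  | s :: l => π (s : G) ((f ((s : G)⁻¹) - μ) + Ntil π f μ l)

@[simp] lemma Ntil_nil (μ : X) : Ntil π f μ ([] : List {x // x ∈ S}) = 0 := rfl

@[simp] lemma Ntil_cons (μ : X) (s : {x // x ∈ S}) (l : List {x // x ∈ S}) :
    Ntil π f μ (s :: l) = π (s : G) ((f ((s : G)⁻¹) - μ) + Ntil π f μ l) := rfl

/-- The Lyons–Zheng type identity. -/
lemma lz_identity (hcocycle : ∀ x y : G, f (x * y) = π x (f y) + f x) (μ : X) :
    ∀ l : List {x // x ∈ S},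
      f (prodw S l) + f (prodw S l) =
        Mlist π f μ l - Ntil π f μ l + (μ - π (prodw S l) μ) := by
  intro l
  induction l with
  | nil =>
      simp [f_one π f hcocycle]
  | cons s l ih =>
      have hc : f ((s : G) * prodw S l) = π (s : G) (f (prodw S l)) + f (s : G) :=
        hcocycle _ _
      have ih' : Mlist π f μ l =
          f (prodw S l) + f (prodw S l) + Ntil π f μ l - μ + π (prodw S l) μ := by
        rw [ih]
        abel
      have hinv : π (s : G) (f ((s : G)⁻¹)) = - f (s : G) := pi_f_inv π f hcocycle _
      rw [prodw_cons, Mlist_cons, Ntil_cons, hc, ih']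
      rw [pi_mul_apply]
      simp only [map_add, map_sub, map_neg, hinv]
      abel

lemma Mlist_snoc (μ : X) (m : List {x // x ∈ S}) (s : {x // x ∈ S}) :
    Mlist π f μ (m ++ [s]) = Mlist π f μ m + π (prodw S m) (f (s : G) - μ) := by
  induction m with
  | nil => simp
  | cons a m ih =>
      simp only [List.cons_append, Mlist_cons, ih, prodw_cons, map_add, pi_mul_apply]
      abel

lemma Mlist_reverse (μ : X) :
    ∀ l : List {x // x ∈ S}, Mlist π f μ l.reverse =
      MW π (fun m => prodw S m.reverse) (fun s => f (s : G) - μ) l := by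
  intro l
  induction l with
  | nil => simp
  | cons a l ih =>
      rw [List.reverse_cons, Mlist_snoc π f, ih, MW_cons]

lemma Ntil_eq_MW (μ : X) :
    ∀ l : List {x // x ∈ S}, Ntil π f μ l =
      π (prodw S l) (MW π (fun m => (prodw S m)⁻¹) (fun s => f ((s : G)⁻¹) - μ) l) := by
  intro l
  induction l with
  | nil => simp
  | cons a l ih =>
      rw [Ntil_cons, prodw_cons, MW_cons, ih]
      have hcancel : ∀ v : X, (π (prodw S l)) ((π ((prodw S l)⁻¹)) v) = v := fun v => by
        rw [← pi_mul_apply, mul_inv_cancel, map_one]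
        rfl
      simp only [map_add, pi_mul_apply, hcancel]
      abel

lemma ofFn_rev {α : Type*} : ∀ {k : ℕ} (g : Fin k → α),
    List.ofFn (fun i => g i.rev) = (List.ofFn g).reverse := by
  intro k
  induction k with
  | zero => intro g; simp
  | succ k ih =>
      intro g
      rw [List.ofFn_succ, List.ofFn_succ' g, List.concat_eq_append, List.reverse_append]
      simp only [List.reverse_cons, List.reverse_nil, List.nil_append, List.singleton_append]
      congr 1
      rw [← ih (fun i => g (Fin.castSucc i))]
      apply congrArg
      funext i
      rw [Fin.rev_succ]

lemma sum_reverse {t : ℕ} (F : List {x // x ∈ S} → ℝ) :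
    ∑ σ : Fin t → {x // x ∈ S}, F ((List.ofFn σ).reverse) =
      ∑ σ : Fin t → {x // x ∈ S}, F (List.ofFn σ) := by
  calc ∑ σ : Fin t → {x // x ∈ S}, F ((List.ofFn σ).reverse)
      = ∑ σ : Fin t → {x // x ∈ S},
          F (List.ofFn ((Equiv.arrowCongr Fin.revPerm (Equiv.refl {x // x ∈ S})) σ)) := by
        apply Finset.sum_congr rfl
        intro σ _
        have h1 : (Equiv.arrowCongr Fin.revPerm (Equiv.refl {x // x ∈ S})) σ
            = fun i => σ (Fin.rev i) := by
          funext i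
          simp [Equiv.arrowCongr, Fin.revPerm]
        rw [h1, ofFn_rev]
    _ = ∑ σ : Fin t → {x // x ∈ S}, F (List.ofFn σ) :=
        Equiv.sum_comp (Equiv.arrowCongr Fin.revPerm (Equiv.refl {x // x ∈ S}))
          (fun σ => F (List.ofFn σ))

end Cocycle

section Numeric

lemma core_exp {p : ℝ} (hp1 : 1 < p) (hp2 : p ≤ 2) :
    (2:ℝ) ^ (p+1) * ((2:ℝ) ^ (p-1) - 1) ≤ (3:ℝ) ^ p := by
  set s := p - 1 with hs
  have hs0 : 0 < s := by simp [hs]; linarith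
  have hs1 : s ≤ 1 := by simp [hs]; linarith
  -- tangent line bounds at s = 1
  have t34 : (3/4:ℝ) * (1 + (s-1) * Real.log (3/4)) ≤ (3/4:ℝ) ^ s := by
    have h0 : (3/4:ℝ) ^ s = (3/4:ℝ) ^ (1 + (s-1)) := by
      congr 1
      ring
    have h1 : (3/4:ℝ) ^ s = (3/4:ℝ) * (3/4:ℝ) ^ (s-1) := by
      rw [h0, Real.rpow_add (by norm_num), Real.rpow_one]
    rw [h1]
    apply mul_le_mul_of_nonneg_left _ (by norm_num)
    rw [Real.rpow_def_of_pos (by norm_num : (0:ℝ) < 3/4)]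
    calc 1 + (s-1) * Real.log (3/4) = Real.log (3/4) * (s-1) + 1 := by ring
      _ ≤ Real.exp (Real.log (3/4) * (s-1)) := Real.add_one_le_exp _
  have t12 : (1/2:ℝ) * (1 + (s-1) * Real.log (1/2)) ≤ (1/2:ℝ) ^ s := by
    have h0 : (1/2:ℝ) ^ s = (1/2:ℝ) ^ (1 + (s-1)) := by
      congr 1
      ring
    have h1 : (1/2:ℝ) ^ s = (1/2:ℝ) * (1/2:ℝ) ^ (s-1) := by
      rw [h0, Real.rpow_add (by norm_num), Real.rpow_one]
    rw [h1]
    apply mul_le_mul_of_nonneg_left _ (by norm_num)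
    rw [Real.rpow_def_of_pos (by norm_num : (0:ℝ) < 1/2)]
    calc 1 + (s-1) * Real.log (1/2) = Real.log (1/2) * (s-1) + 1 := by ring
      _ ≤ Real.exp (Real.log (1/2) * (s-1)) := Real.add_one_le_exp _
  have hL1 : Real.log (3/4) ≤ 0 := Real.log_nonpos (by norm_num) (by norm_num)
  have hL2 : Real.log (1/2) ≤ 0 := Real.log_nonpos (by norm_num) (by norm_num)
  -- key : 3 * (3/4)^s + 4 * (1/2)^s ≥ 4
  have key : (4:ℝ) ≤ 3 * (3/4:ℝ) ^ s + 4 * (1/2:ℝ) ^ s := by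
    nlinarith [t34, t12, mul_nonneg (mul_nonneg (by linarith : (0:ℝ) ≤ 1 - s)
      (by norm_num : (0:ℝ) ≤ (3:ℝ))) (neg_nonneg.mpr hL1),
      mul_nonneg (mul_nonneg (by linarith : (0:ℝ) ≤ 1 - s)
      (by norm_num : (0:ℝ) ≤ (4:ℝ))) (neg_nonneg.mpr hL2)]
  -- multiply by 4^s
  have h4s : (0:ℝ) < (4:ℝ) ^ s := Real.rpow_pos_of_pos (by norm_num) s
  have hmul : (4:ℝ) * (4:ℝ) ^ s ≤ (3 * (3/4:ℝ) ^ s + 4 * (1/2:ℝ) ^ s) * (4:ℝ) ^ s :=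
    mul_le_mul_of_nonneg_right key h4s.le
  have e34 : (3/4:ℝ) ^ s * (4:ℝ) ^ s = (3:ℝ) ^ s := by
    rw [← Real.mul_rpow (by norm_num) (by norm_num)]
    norm_num
  have e12 : (1/2:ℝ) ^ s * (4:ℝ) ^ s = (2:ℝ) ^ s := by
    rw [← Real.mul_rpow (by norm_num) (by norm_num)]
    norm_num
  have key2 : (4:ℝ) * (4:ℝ) ^ s ≤ 3 * (3:ℝ) ^ s + 4 * (2:ℝ) ^ s := by
    calc (4:ℝ) * (4:ℝ) ^ s ≤ (3 * (3/4:ℝ) ^ s + 4 * (1/2:ℝ) ^ s) * (4:ℝ) ^ s := hmul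
      _ = 3 * ((3/4:ℝ) ^ s * (4:ℝ) ^ s) + 4 * ((1/2:ℝ) ^ s * (4:ℝ) ^ s) := by ring
      _ = 3 * (3:ℝ) ^ s + 4 * (2:ℝ) ^ s := by rw [e34, e12]
  -- now convert to the target form
  have e2p1 : (2:ℝ) ^ (p+1) = 4 * (2:ℝ) ^ s := by
    rw [show p + 1 = s + 2 by rw [hs]; ring, Real.rpow_add (by norm_num)]
    rw [show (2:ℝ) ^ (2:ℝ) = 4 by
      rw [show (2:ℝ) = ((2:ℕ):ℝ) by norm_num]
      rw [Real.rpow_natCast]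
      norm_num]
    ring
  have e2p2 : (2:ℝ) ^ (p+1) * (2:ℝ) ^ (p-1) = 4 * (4:ℝ) ^ s := by
    rw [← Real.rpow_add (by norm_num)]
    rw [show p + 1 + (p-1) = 2 + (s + s) by rw [hs]; ring]
    rw [Real.rpow_add (by norm_num), Real.rpow_add (by norm_num)]
    rw [show (2:ℝ) ^ (2:ℝ) = 4 by
      rw [show (2:ℝ) = ((2:ℕ):ℝ) by norm_num]
      rw [Real.rpow_natCast]
      norm_num]
    rw [show (4:ℝ) = (2:ℝ) * 2 by norm_num, Real.mul_rpow (by norm_num) (by norm_num)]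
  have e3p : (3:ℝ) ^ p = 3 * (3:ℝ) ^ s := by
    rw [show p = 1 + s by rw [hs]; ring, Real.rpow_add (by norm_num), Real.rpow_one]
  rw [mul_sub, mul_one, e2p2, e2p1, e3p]
  linarith [key2]

lemma rpow_two_eq_four : (2:ℝ) ^ (2:ℝ) = 4 := by
  rw [show (2:ℝ) = ((2:ℕ):ℝ) by norm_num]
  rw [Real.rpow_natCast]
  norm_num

lemma core_num {p : ℝ} (hp1 : 1 < p) (hp2 : p ≤ 2) {σp t : ℝ}
    (hσ : (2:ℝ) ^ (p-1) - 1 ≤ σp) (ht : 1 ≤ t) :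
    ((2 ^ (p+1) * σp * t) ^ (1/p) + 1) ^ p ≤ 2 ^ (2*p) * σp / ((2:ℝ) ^ (p-1) - 1) * t := by
  have hp0 : (0:ℝ) < p := lt_trans one_pos hp1
  set δ := (2:ℝ) ^ (p-1) - 1 with hδdef
  have hδ : 0 < δ := by
    have : (1:ℝ) < (2:ℝ) ^ (p-1) := by
      rw [show (1:ℝ) = (2:ℝ) ^ (0:ℝ) by rw [Real.rpow_zero]]
      exact Real.rpow_lt_rpow_left_iff (by norm_num) |>.mpr (by linarith)
    simp [hδdef]
    linarith
  have hσ0 : 0 < σp := lt_of_lt_of_le hδ hσ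
  have hσt : δ ≤ σp * t := by nlinarith
  have hσt0 : 0 < σp * t := by nlinarith
  have h2p1 : (0:ℝ) < (2:ℝ) ^ (p+1) := Real.rpow_pos_of_pos (by norm_num) _
  have h22p : (0:ℝ) < (2:ℝ) ^ (2*p) := Real.rpow_pos_of_pos (by norm_num) _
  have hinvp : (0:ℝ) < 1/p := by positivity
  -- c2 ≤ c1 where c1 = (2^{2p}/δ)^{1/p}, c2 = (2^{p+1})^{1/p}
  have hbase : (2:ℝ) ^ (p+1) ≤ (2:ℝ) ^ (2*p) / δ := by
    rw [le_div_iff₀ hδ]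
    calc (2:ℝ) ^ (p+1) * δ ≤ (3:ℝ) ^ p := core_exp hp1 hp2
      _ ≤ (4:ℝ) ^ p := Real.rpow_le_rpow (by norm_num) (by norm_num) hp0.le
      _ = (2:ℝ) ^ (2*p) := by
          rw [show (4:ℝ) = (2:ℝ)^(2:ℝ) from rpow_two_eq_four.symm, ← Real.rpow_mul (by norm_num)]
  -- key : (2^{p+1} σ t)^{1/p} + 1 ≤ (2^{2p} σ t / δ)^{1/p}
  have key : (2 ^ (p+1) * σp * t) ^ (1/p) + 1 ≤ ((2:ℝ) ^ (2*p) * (σp * t) / δ) ^ (1/p) := by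
    have split1 : ((2:ℝ) ^ (2*p) * (σp * t) / δ) ^ (1/p)
        = ((2:ℝ) ^ (2*p) / δ) ^ (1/p) * (σp * t) ^ (1/p) := by
      rw [← Real.mul_rpow (by positivity) (by positivity)]
      congr 1
      ring
    have split2 : ((2:ℝ) ^ (p+1) * σp * t) ^ (1/p)
        = ((2:ℝ) ^ (p+1)) ^ (1/p) * (σp * t) ^ (1/p) := by
      rw [← Real.mul_rpow (by positivity) (by positivity)]
      congr 1
      ring
    rw [split1, split2]
    have hc : ((2:ℝ) ^ (p+1)) ^ (1/p) ≤ ((2:ℝ) ^ (2*p) / δ) ^ (1/p) :=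
      Real.rpow_le_rpow (by positivity) hbase hinvp.le
    have hu : δ ^ (1/p) ≤ (σp * t) ^ (1/p) := Real.rpow_le_rpow hδ.le hσt hinvp.le
    have hgap : 1 ≤ (((2:ℝ) ^ (2*p) / δ) ^ (1/p) - ((2:ℝ) ^ (p+1)) ^ (1/p)) * δ ^ (1/p) := by
      have e1 : ((2:ℝ) ^ (2*p) / δ) ^ (1/p) * δ ^ (1/p) = ((2:ℝ) ^ (2*p)) ^ (1/p) := by
        rw [← Real.mul_rpow (by positivity) hδ.le, div_mul_cancel₀ _ (ne_of_gt hδ)]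
      have e2 : ((2:ℝ) ^ (2*p)) ^ (1/p) = 4 := by
        rw [← Real.rpow_mul (by norm_num), show 2*p*(1/p) = 2 by field_simp]
        exact rpow_two_eq_four
      have e3 : ((2:ℝ) ^ (p+1)) ^ (1/p) * δ ^ (1/p) = ((2:ℝ) ^ (p+1) * δ) ^ (1/p) := by
        rw [← Real.mul_rpow (by positivity) hδ.le]
      have e4 : ((2:ℝ) ^ (p+1) * δ) ^ (1/p) ≤ 3 := by
        calc ((2:ℝ) ^ (p+1) * δ) ^ (1/p) ≤ ((3:ℝ) ^ p) ^ (1/p) :=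
            Real.rpow_le_rpow (by positivity) (core_exp hp1 hp2) hinvp.le
          _ = 3 := by
            rw [← Real.rpow_mul (by norm_num), show p*(1/p) = 1 by field_simp, Real.rpow_one]
      have : (((2:ℝ) ^ (2*p) / δ) ^ (1/p) - ((2:ℝ) ^ (p+1)) ^ (1/p)) * δ ^ (1/p)
          = ((2:ℝ) ^ (2*p)) ^ (1/p) - ((2:ℝ) ^ (p+1) * δ) ^ (1/p) := by
        rw [sub_mul, e1, e3]
      rw [this, e2]
      linarith
    have hdiffpos : 0 ≤ ((2:ℝ) ^ (2*p) / δ) ^ (1/p) - ((2:ℝ) ^ (p+1)) ^ (1/p) := by linarith [hc]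
    nlinarith [mul_le_mul_of_nonneg_left hu hdiffpos, hgap,
      Real.rpow_nonneg hδ.le (1/p), Real.rpow_nonneg hσt0.le (1/p)]
  -- raise to the p-th power
  have hLnn : (0:ℝ) ≤ (2 ^ (p+1) * σp * t) ^ (1/p) + 1 := by positivity
  have main : ((2 ^ (p+1) * σp * t) ^ (1/p) + 1) ^ p
      ≤ (((2:ℝ) ^ (2*p) * (σp * t) / δ) ^ (1/p)) ^ p :=
    Real.rpow_le_rpow hLnn key hp0.le
  have eid : (((2:ℝ) ^ (2*p) * (σp * t) / δ) ^ (1/p)) ^ p = (2:ℝ) ^ (2*p) * (σp * t) / δ := by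
    rw [← Real.rpow_mul (by positivity), show (1/p)*p = 1 by field_simp, Real.rpow_one]
  rw [eid] at main
  calc ((2 ^ (p+1) * σp * t) ^ (1/p) + 1) ^ p ≤ (2:ℝ) ^ (2*p) * (σp * t) / δ := main
    _ = 2 ^ (2*p) * σp / δ * t := by ring

/-- Minkowski for three nonnegative functions. -/
lemma mink3 {ι : Type*} [Fintype ι] {p : ℝ} (hp : 1 ≤ p) (u v w : ι → ℝ)
    (hu : ∀ i, 0 ≤ u i) (hv : ∀ i, 0 ≤ v i) (hw : ∀ i, 0 ≤ w i) :
    (∑ i, (u i + (v i + w i)) ^ p) ^ (1/p) ≤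
      (∑ i, u i ^ p) ^ (1/p) + ((∑ i, v i ^ p) ^ (1/p) + (∑ i, w i ^ p) ^ (1/p)) := by
  have h1 : (∑ i, (u i + (v i + w i)) ^ p) ^ (1/p) ≤
      (∑ i, u i ^ p) ^ (1/p) + (∑ i, (v i + w i) ^ p) ^ (1/p) := by
    have := Real.Lp_add_le Finset.univ u (fun i => v i + w i) hp
    simp only [abs_of_nonneg (hu _), abs_of_nonneg (add_nonneg (hv _) (hw _)),
      abs_of_nonneg (add_nonneg (hu _) (add_nonneg (hv _) (hw _)))] at this
    exact this
  have h2 : (∑ i, (v i + w i) ^ p) ^ (1/p) ≤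
      (∑ i, v i ^ p) ^ (1/p) + (∑ i, w i ^ p) ^ (1/p) := by
    have := Real.Lp_add_le Finset.univ v w hp
    simp only [abs_of_nonneg (hv _), abs_of_nonneg (hw _),
      abs_of_nonneg (add_nonneg (hv _) (hw _))] at this
    exact this
  linarith

lemma sum_one {S : Finset G} (F : G → ℝ) :
    ∑ σ : Fin 1 → {x // x ∈ S}, F (List.ofFn fun i => ((σ i : G))).prod
      = ∑ s : {x // x ∈ S}, F (s : G) := by
  rw [← Equiv.sum_comp ((Equiv.funUnique (Fin 1) {x // x ∈ S}).symm)
    (fun σ : Fin 1 → {x // x ∈ S} => F (List.ofFn fun i => ((σ i : G))).prod)]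
  apply Finset.sum_congr rfl
  intro s _
  simp

lemma f_word_zero (π : G →* (X ≃ₗᵢ[ℝ] X)) (f : G → X)
    (hcocycle : ∀ x y : G, f (x * y) = π x (f y) + f x)
    (hz : ∀ s : {x // x ∈ S}, f (s : G) = 0) :
    ∀ l : List {x // x ∈ S}, f (prodw S l) = 0 := by
  intro l
  induction l with
  | nil => simpa using f_one π f hcocycle
  | cons s l ih =>
      rw [prodw_cons, hcocycle, ih, hz, map_zero, add_zero]

end Numeric

end CWAux

/-- If `X` is `p`-smooth with constant `S_p` (`1 < p ≤ 2`) and `f : G → X` is a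
`1`-cocycle for an isometric linear action `π` of `G` on `X`, then for every `t ∈ ℕ`,
`E[‖f(W_t)‖^p] ≤ C_p · t · E[‖f(W₁)‖^p]` with `C_p = 2^{2p} S_p^p / (2^{p-1} - 1)`. -/
theorem cocycle_walk_growth
    {G : Type*} [Group G] (S : Finset G) (hS : IsSymmGenSet (S : Set G))
    {X : Type*} [NormedAddCommGroup X] [NormedSpace ℝ X] [CompleteSpace X]
    (p Sp : ℝ) (hp1 : 1 < p) (hp2 : p ≤ 2) (hSp : 0 < Sp)
    (hsmooth : ∀ x y : X, ‖x + y‖ ^ p + ‖x - y‖ ^ p ≤ 2 * ‖x‖ ^ p + 2 * Sp ^ p * ‖y‖ ^ p)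
    (π : G →* (X ≃ₗᵢ[ℝ] X)) (f : G → X)
    (hcocycle : ∀ x y : G, f (x * y) = π x (f y) + f x) :
    ∀ t : ℕ, walkExp S t (fun w => ‖f w‖ ^ p) ≤
      (2 ^ (2 * p) * Sp ^ p / (2 ^ (p - 1) - 1)) * t * walkExp S 1 (fun w => ‖f w‖ ^ p) := by
  have hp0 : (0:ℝ) < p := lt_trans one_pos hp1
  have hδpos : (0:ℝ) < 2 ^ (p - 1) - 1 := by
    have : (1:ℝ) < (2:ℝ) ^ (p-1) := by
      rw [show (1:ℝ) = (2:ℝ) ^ (0:ℝ) by rw [Real.rpow_zero]]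
      exact Real.rpow_lt_rpow_left_iff (by norm_num) |>.mpr (by linarith)
    linarith
  have hSpp : (0:ℝ) < Sp ^ p := Real.rpow_pos_of_pos hSp p
  have hCpos : (0:ℝ) < 2 ^ (2 * p) * Sp ^ p / (2 ^ (p - 1) - 1) := by
    have h22p : (0:ℝ) < (2:ℝ) ^ (2*p) := Real.rpow_pos_of_pos (by norm_num) _
    positivity
  have hf1 : f 1 = 0 := CWAux.f_one π f hcocycle
  intro t
  -- trivial case t = 0
  rcases Nat.eq_zero_or_pos t with ht0 | htpos
  · subst ht0
    have hL : walkExp S 0 (fun w => ‖f w‖ ^ p) = 0 := by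
      rw [walkExp]
      have : ∀ σ : Fin 0 → {x // x ∈ S},
          ‖f (List.ofFn fun i => ((σ i : G))).prod‖ ^ p = 0 := by
        intro σ
        simp [hf1, Real.zero_rpow (ne_of_gt hp0)]
      rw [Finset.sum_congr rfl (fun σ _ => this σ)]
      simp
    rw [hL]
    simp only [Nat.cast_zero, mul_zero, zero_mul]
    exact le_refl 0
  -- t = t' + 1
  obtain ⟨t', rfl⟩ : ∃ t'', t = t'' + 1 := ⟨t - 1, (Nat.succ_pred_eq_of_pos htpos).symm⟩
  by_cases hcard : S.card = 0
  · -- S is empty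
    have hSempty : IsEmpty {x // x ∈ S} := by
      rw [Finset.card_eq_zero] at hcard
      subst hcard
      exact ⟨fun s => (Finset.notMem_empty _ s.2)⟩
    have hemptyfun : ∀ k : ℕ, IsEmpty (Fin (k+1) → {x // x ∈ S}) :=
      fun k => ⟨fun g => IsEmpty.false (g 0)⟩
    have hL : walkExp S (t'+1) (fun w => ‖f w‖ ^ p) = 0 := by
      rw [walkExp]
      haveI := hemptyfun t'
      rw [Finset.univ_eq_empty, Finset.sum_empty, zero_div]
    have hR : walkExp S 1 (fun w => ‖f w‖ ^ p) = 0 := by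
      rw [walkExp]
      haveI := hemptyfun 0
      rw [Finset.univ_eq_empty, Finset.sum_empty, zero_div]
    rw [hL, hR, mul_zero]
  -- now S is nonempty
  have hn : 0 < S.card := Nat.pos_of_ne_zero hcard
  have hnR : (0:ℝ) < (S.card : ℝ) := by exact_mod_cast hn
  by_cases ha1 : (∑ s : {x // x ∈ S}, ‖f (s : G)‖ ^ p) = 0
  · -- f vanishes on S
    have hz : ∀ s : {x // x ∈ S}, f (s : G) = 0 := by
      intro s
      have hall := (Finset.sum_eq_zero_iff_of_nonneg
        (fun i _ => Real.rpow_nonneg (norm_nonneg _) p)).mp ha1 s (Finset.mem_univ s)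
      have hzz : ‖f (s : G)‖ = 0 := by
        by_contra hne
        have h1 : 0 < ‖f (s : G)‖ := lt_of_le_of_ne (norm_nonneg _) (Ne.symm hne)
        have h2 := Real.rpow_pos_of_pos h1 p
        rw [hall] at h2
        exact lt_irrefl 0 h2
      simpa using hzz
    have hL : walkExp S (t'+1) (fun w => ‖f w‖ ^ p) = 0 := by
      rw [walkExp]
      have hzero : ∀ σ : Fin (t'+1) → {x // x ∈ S},
          ‖f (List.ofFn fun i => ((σ i : G))).prod‖ ^ p = 0 := by
        intro σ
        have hw : (List.ofFn fun i => ((σ i : G))).prod = CWAux.prodw S (List.ofFn σ) := by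
          simp [CWAux.prodw, List.map_ofFn]
          rfl
        rw [hw, CWAux.f_word_zero π f hcocycle hz]
        simp [Real.zero_rpow (ne_of_gt hp0)]
      rw [Finset.sum_congr rfl (fun σ _ => hzero σ), Finset.sum_const, smul_zero, zero_div]
    have hR : walkExp S 1 (fun w => ‖f w‖ ^ p) = 0 := by
      rw [walkExp, CWAux.sum_one (fun w => ‖f w‖ ^ p), ha1, zero_div]
    rw [hL, hR, mul_zero]
  -- main case
  have ha1nonneg : (0:ℝ) ≤ ∑ s : {x // x ∈ S}, ‖f (s : G)‖ ^ p :=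
    Finset.sum_nonneg fun s _ => Real.rpow_nonneg (norm_nonneg _) p
  have ha1pos : (0:ℝ) < ∑ s : {x // x ∈ S}, ‖f (s : G)‖ ^ p :=
    lt_of_le_of_ne ha1nonneg (Ne.symm ha1)
  set a1 : ℝ := ∑ s : {x // x ∈ S}, ‖f (s : G)‖ ^ p with ha1def
  -- Sp^p is at least 2^{p-1} - 1
  have hσδ : (2:ℝ) ^ (p-1) - 1 ≤ Sp ^ p := by
    obtain ⟨s₀, -, hs₀⟩ := Finset.exists_ne_zero_of_sum_ne_zero ha1
    have hx : 0 < ‖f (s₀ : G)‖ := by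
      rcases lt_or_eq_of_le (norm_nonneg (f (s₀ : G))) with h | h
      · exact h
      · exact absurd (by rw [← h, Real.zero_rpow (ne_of_gt hp0)]) hs₀
    have hxp : 0 < ‖f (s₀ : G)‖ ^ p := Real.rpow_pos_of_pos hx p
    have hsm := hsmooth (f (s₀ : G)) (f (s₀ : G))
    have h2 : f (s₀ : G) + f (s₀ : G) = (2:ℝ) • f (s₀ : G) := (two_smul ℝ _).symm
    rw [h2, sub_self, norm_zero, Real.zero_rpow (ne_of_gt hp0), norm_smul] at hsm
    have hn2 : ‖(2:ℝ)‖ = 2 := by simp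
    rw [hn2, Real.mul_rpow (by norm_num) (norm_nonneg _)] at hsm
    have h2p : (2:ℝ) ^ p ≤ 2 + 2 * Sp ^ p := by nlinarith [hxp, hsm]
    have h2p1 : (2:ℝ) ^ (p-1) = (2:ℝ) ^ p / 2 := by
      rw [Real.rpow_sub (by norm_num), Real.rpow_one]
    rw [h2p1]
    linarith
  -- the mean vector
  set μ : X := ((S.card : ℝ))⁻¹ • ∑ s : {x // x ∈ S}, f (s : G) with hμdef
  have hnsmul : (S.card : ℕ) • μ = ∑ s : {x // x ∈ S}, f (s : G) := by
    rw [hμdef, ← Nat.cast_smul_eq_nsmul ℝ, smul_smul, mul_inv_cancel₀ (ne_of_gt hnR), one_smul]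
  have hsum0M : ∑ s : {x // x ∈ S}, (f (s : G) - μ) = 0 := by
    rw [Finset.sum_sub_distrib, Finset.sum_const, Finset.card_univ, Fintype.card_coe, hnsmul,
      sub_self]
  -- inversion permutation on S
  have hinvmem : ∀ s : {x // x ∈ S}, ((s : G))⁻¹ ∈ S := by
    intro s
    have := hS.1 (s : G) (by exact_mod_cast s.2)
    exact_mod_cast this
  set e : Equiv.Perm {x // x ∈ S} := Function.Involutive.toPerm
    (fun s => (⟨((s : G))⁻¹, hinvmem s⟩ : {x // x ∈ S}))
    (fun s => by ext; simp) with hedef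
  have hecoe : ∀ s : {x // x ∈ S}, ((e s : {x // x ∈ S}) : G) = ((s : G))⁻¹ := fun s => rfl
  have hsum0N : ∑ s : {x // x ∈ S}, (f (((s : G))⁻¹) - μ) = 0 := by
    have h1 := Equiv.sum_comp e (fun s : {x // x ∈ S} => f (s : G) - μ)
    simp only [hecoe] at h1
    rw [h1, Finset.sum_sub_distrib, Finset.sum_const, Finset.card_univ, Fintype.card_coe, hnsmul,
      sub_self]
  set H : ℝ := ∑ s : {x // x ∈ S}, ‖f (s : G) - μ‖ ^ p with hHdef
  have hHnn : (0:ℝ) ≤ H := Finset.sum_nonneg fun s _ => Real.rpow_nonneg (norm_nonneg _) p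
  have hHinv : ∑ s : {x // x ∈ S}, ‖f (((s : G))⁻¹) - μ‖ ^ p = H := by
    have h1 := Equiv.sum_comp e (fun s : {x // x ∈ S} => ‖f (s : G) - μ‖ ^ p)
    simp only [hecoe] at h1
    rw [h1]
  -- ‖μ‖^p is controlled by a1
  have hμnorm : (S.card : ℝ) * ‖μ‖ ^ p ≤ a1 := by
    have h1 : ‖μ‖ ≤ (S.card : ℝ)⁻¹ * ∑ s : {x // x ∈ S}, ‖f (s : G)‖ := by
      rw [hμdef, norm_smul]
      have h0 : ‖((S.card : ℝ))⁻¹‖ = (S.card : ℝ)⁻¹ := by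
        rw [Real.norm_eq_abs, abs_of_nonneg (by positivity)]
      rw [h0]
      exact mul_le_mul_of_nonneg_left (norm_sum_le _ _) (by positivity)
    have h2 : ‖μ‖ ^ p ≤ ((S.card : ℝ)⁻¹ * ∑ s : {x // x ∈ S}, ‖f (s : G)‖) ^ p :=
      Real.rpow_le_rpow (norm_nonneg _) h1 hp0.le
    have h3 : ((S.card : ℝ)⁻¹ * ∑ s : {x // x ∈ S}, ‖f (s : G)‖) ^ p
        = ((S.card : ℝ)⁻¹) ^ p * (∑ s : {x // x ∈ S}, ‖f (s : G)‖) ^ p :=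
      Real.mul_rpow (by positivity) (Finset.sum_nonneg fun s _ => norm_nonneg _)
    have h4 : (∑ s : {x // x ∈ S}, ‖f (s : G)‖) ^ p ≤ (S.card : ℝ) ^ (p-1) * a1 := by
      have h5 := CWAux.sum_pm hp1.le (fun s : {x // x ∈ S} => ‖f (s : G)‖)
        (fun s => norm_nonneg _)
      rw [Fintype.card_coe] at h5
      exact h5
    have h6 : ((S.card : ℝ)⁻¹) ^ p * ((S.card : ℝ) ^ (p-1) * a1) * (S.card : ℝ) = a1 := by
      rw [Real.inv_rpow hnR.le, Real.rpow_sub hnR, Real.rpow_one]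
      field_simp
    have h7 : ‖μ‖ ^ p ≤ ((S.card : ℝ)⁻¹) ^ p * ((S.card : ℝ) ^ (p-1) * a1) := by
      calc ‖μ‖ ^ p ≤ ((S.card : ℝ)⁻¹ * ∑ s : {x // x ∈ S}, ‖f (s : G)‖) ^ p := h2
        _ = ((S.card : ℝ)⁻¹) ^ p * (∑ s : {x // x ∈ S}, ‖f (s : G)‖) ^ p := h3
        _ ≤ ((S.card : ℝ)⁻¹) ^ p * ((S.card : ℝ) ^ (p-1) * a1) :=
            mul_le_mul_of_nonneg_left h4 (by positivity)
    calc (S.card : ℝ) * ‖μ‖ ^ p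
        ≤ (S.card : ℝ) * (((S.card : ℝ)⁻¹) ^ p * ((S.card : ℝ) ^ (p-1) * a1)) :=
          mul_le_mul_of_nonneg_left h7 hnR.le
      _ = ((S.card : ℝ)⁻¹) ^ p * ((S.card : ℝ) ^ (p-1) * a1) * (S.card : ℝ) := by ring
      _ = a1 := h6
  -- H ≤ 2^p a1
  have h2p2 : (2:ℝ) ^ (p-1) * 2 = (2:ℝ) ^ p := by
    rw [← Real.rpow_add_one (by norm_num : (2:ℝ) ≠ 0) (p-1)]
    congr 1
    ring
  have hH2 : H ≤ 2 ^ p * a1 := by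
    have hper : ∀ s : {x // x ∈ S},
        ‖f (s : G) - μ‖ ^ p ≤ 2 ^ (p-1) * (‖f (s : G)‖ ^ p + ‖μ‖ ^ p) := by
      intro s
      have h1 : ‖f (s : G) - μ‖ ^ p ≤ (‖f (s : G)‖ + ‖μ‖) ^ p :=
        Real.rpow_le_rpow (norm_nonneg _) (norm_sub_le _ _) hp0.le
      exact h1.trans (CWAux.two_pm hp1.le (norm_nonneg _) (norm_nonneg _))
    have hsum : H ≤ 2 ^ (p-1) * (a1 + (S.card : ℝ) * ‖μ‖ ^ p) := by
      calc H ≤ ∑ s : {x // x ∈ S}, 2 ^ (p-1) * (‖f (s : G)‖ ^ p + ‖μ‖ ^ p) :=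
            Finset.sum_le_sum fun s _ => hper s
        _ = 2 ^ (p-1) * (a1 + (S.card : ℝ) * ‖μ‖ ^ p) := by
            rw [← Finset.mul_sum, Finset.sum_add_distrib, Finset.sum_const, Finset.card_univ,
              Fintype.card_coe, nsmul_eq_mul, ← ha1def]
    have h2pm1pos : (0:ℝ) ≤ (2:ℝ) ^ (p-1) := by positivity
    nlinarith [hμnorm, hsum, h2pm1pos, h2p2]
  -- martingale bounds
  have hMW_M := CWAux.MW_bound hp1 hSp hsmooth hn π (fun m => CWAux.prodw S m.reverse)
    (fun s => f (s : G) - μ) hsum0M (t'+1)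
  have hMW_N := CWAux.MW_bound hp1 hSp hsmooth hn π (fun m => (CWAux.prodw S m)⁻¹)
    (fun s => f (((s : G))⁻¹) - μ) hsum0N (t'+1)
  rw [hHinv] at hMW_N
  rw [← hHdef] at hMW_M
  -- identify the sums
  have hSM : (∑ σ : Fin (t'+1) → {x // x ∈ S}, ‖CWAux.Mlist π f μ (List.ofFn σ)‖ ^ p)
      = ∑ σ : Fin (t'+1) → {x // x ∈ S},
          ‖CWAux.MW π (fun m => CWAux.prodw S m.reverse)
            (fun s => f (s : G) - μ) (List.ofFn σ)‖ ^ p := by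
    rw [← CWAux.sum_reverse (fun l => ‖CWAux.Mlist π f μ l‖ ^ p)]
    apply Finset.sum_congr rfl
    intro σ _
    rw [CWAux.Mlist_reverse]
  have hSN : (∑ σ : Fin (t'+1) → {x // x ∈ S}, ‖CWAux.Ntil π f μ (List.ofFn σ)‖ ^ p)
      = ∑ σ : Fin (t'+1) → {x // x ∈ S},
          ‖CWAux.MW π (fun m => (CWAux.prodw S m)⁻¹)
            (fun s => f (((s : G))⁻¹) - μ) (List.ofFn σ)‖ ^ p := by
    apply Finset.sum_congr rfl
    intro σ _
    rw [CWAux.Ntil_eq_MW, LinearIsometryEquiv.norm_map]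
  -- abbreviations
  have hpow_pos : (0:ℝ) < (S.card : ℝ) ^ (t'+1) := pow_pos hnR _
  have hpow'_pos : (0:ℝ) < (S.card : ℝ) ^ t' := pow_pos hnR _
  have htR : (1:ℝ) ≤ ((t'+1 : ℕ) : ℝ) := by
    push_cast
    linarith [Nat.cast_nonneg (α := ℝ) t']
  have htRpos : (0:ℝ) < ((t'+1 : ℕ) : ℝ) := lt_of_lt_of_le one_pos htR
  -- the two martingale sum bounds, in convenient form
  have hSMb : (∑ σ : Fin (t'+1) → {x // x ∈ S}, ‖CWAux.Mlist π f μ (List.ofFn σ)‖ ^ p)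
      ≤ (2 ^ (p+1) * Sp ^ p * ((t'+1 : ℕ) : ℝ)) * ((S.card : ℝ) ^ t' * a1) := by
    rw [hSM]
    have h3 : 2 * Sp ^ p * ((t'+1 : ℕ) : ℝ) * (S.card : ℝ) ^ (t'+1) * H
        ≤ (2 ^ (p+1) * Sp ^ p * ((t'+1 : ℕ) : ℝ)) * ((S.card : ℝ) ^ t' * a1) * (S.card : ℝ) := by
      rw [pow_succ]
      have hfact : (0:ℝ) ≤ 2 * Sp ^ p * ((t'+1 : ℕ) : ℝ) * ((S.card : ℝ) ^ t' * (S.card : ℝ)) :=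
        by positivity
      have h2p3 : (2:ℝ) ^ (p+1) = 2 ^ p * 2 := by
        rw [← Real.rpow_add_one (by norm_num : (2:ℝ) ≠ 0) p]
      calc 2 * Sp ^ p * ((t'+1 : ℕ) : ℝ) * ((S.card : ℝ) ^ t' * (S.card : ℝ)) * H
          ≤ 2 * Sp ^ p * ((t'+1 : ℕ) : ℝ) * ((S.card : ℝ) ^ t' * (S.card : ℝ)) * (2 ^ p * a1) :=
            mul_le_mul_of_nonneg_left hH2 hfact
        _ = (2 ^ (p+1) * Sp ^ p * ((t'+1 : ℕ) : ℝ)) * ((S.card : ℝ) ^ t' * a1) * (S.card : ℝ) := by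
            rw [h2p3]
            ring
    exact le_of_mul_le_mul_right (le_trans hMW_M h3) hnR
  have hSNb : (∑ σ : Fin (t'+1) → {x // x ∈ S}, ‖CWAux.Ntil π f μ (List.ofFn σ)‖ ^ p)
      ≤ (2 ^ (p+1) * Sp ^ p * ((t'+1 : ℕ) : ℝ)) * ((S.card : ℝ) ^ t' * a1) := by
    rw [hSN]
    have h3 : 2 * Sp ^ p * ((t'+1 : ℕ) : ℝ) * (S.card : ℝ) ^ (t'+1) * H
        ≤ (2 ^ (p+1) * Sp ^ p * ((t'+1 : ℕ) : ℝ)) * ((S.card : ℝ) ^ t' * a1) * (S.card : ℝ) := by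
      rw [pow_succ]
      have hfact : (0:ℝ) ≤ 2 * Sp ^ p * ((t'+1 : ℕ) : ℝ) * ((S.card : ℝ) ^ t' * (S.card : ℝ)) :=
        by positivity
      have h2p3 : (2:ℝ) ^ (p+1) = 2 ^ p * 2 := by
        rw [← Real.rpow_add_one (by norm_num : (2:ℝ) ≠ 0) p]
      calc 2 * Sp ^ p * ((t'+1 : ℕ) : ℝ) * ((S.card : ℝ) ^ t' * (S.card : ℝ)) * H
          ≤ 2 * Sp ^ p * ((t'+1 : ℕ) : ℝ) * ((S.card : ℝ) ^ t' * (S.card : ℝ)) * (2 ^ p * a1) :=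
            mul_le_mul_of_nonneg_left hH2 hfact
        _ = (2 ^ (p+1) * Sp ^ p * ((t'+1 : ℕ) : ℝ)) * ((S.card : ℝ) ^ t' * a1) * (S.card : ℝ) := by
            rw [h2p3]
            ring
    exact le_of_mul_le_mul_right (le_trans hMW_N h3) hnR
  -- pointwise bound from the identity
  have hpt : ∀ σ : Fin (t'+1) → {x // x ∈ S},
      2 * ‖f (List.ofFn fun i => ((σ i : G))).prod‖ ≤
        ‖CWAux.Mlist π f μ (List.ofFn σ)‖ + (‖CWAux.Ntil π f μ (List.ofFn σ)‖ + 2 * ‖μ‖) := by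
    intro σ
    have hw : (List.ofFn fun i => ((σ i : G))).prod = CWAux.prodw S (List.ofFn σ) := by
      simp [CWAux.prodw, List.map_ofFn]
      rfl
    have hid := CWAux.lz_identity π f hcocycle μ (List.ofFn σ)
    have h1 : 2 * ‖f (CWAux.prodw S (List.ofFn σ))‖
        = ‖f (CWAux.prodw S (List.ofFn σ)) + f (CWAux.prodw S (List.ofFn σ))‖ := by
      rw [← two_smul ℝ, norm_smul]
      simp
    calc 2 * ‖f (List.ofFn fun i => ((σ i : G))).prod‖
        = ‖f (CWAux.prodw S (List.ofFn σ)) + f (CWAux.prodw S (List.ofFn σ))‖ := by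
          rw [hw, h1]
      _ = ‖CWAux.Mlist π f μ (List.ofFn σ) - CWAux.Ntil π f μ (List.ofFn σ)
            + (μ - π (CWAux.prodw S (List.ofFn σ)) μ)‖ := by rw [hid]
      _ ≤ ‖CWAux.Mlist π f μ (List.ofFn σ) - CWAux.Ntil π f μ (List.ofFn σ)‖
            + ‖μ - π (CWAux.prodw S (List.ofFn σ)) μ‖ := norm_add_le _ _
      _ ≤ (‖CWAux.Mlist π f μ (List.ofFn σ)‖ + ‖CWAux.Ntil π f μ (List.ofFn σ)‖)
            + (‖μ‖ + ‖π (CWAux.prodw S (List.ofFn σ)) μ‖) :=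
          add_le_add (norm_sub_le _ _) (norm_sub_le _ _)
      _ = ‖CWAux.Mlist π f μ (List.ofFn σ)‖ + (‖CWAux.Ntil π f μ (List.ofFn σ)‖ + 2 * ‖μ‖) := by
          rw [LinearIsometryEquiv.norm_map]
          ring
  -- step A : 2^p * Σ ‖f w‖^p ≤ T
  have hstepA : 2 ^ p * (∑ σ : Fin (t'+1) → {x // x ∈ S},
        ‖f (List.ofFn fun i => ((σ i : G))).prod‖ ^ p)
      ≤ ∑ σ : Fin (t'+1) → {x // x ∈ S},
          (‖CWAux.Mlist π f μ (List.ofFn σ)‖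
            + (‖CWAux.Ntil π f μ (List.ofFn σ)‖ + 2 * ‖μ‖)) ^ p := by
    rw [Finset.mul_sum]
    apply Finset.sum_le_sum
    intro σ _
    have h1 : (2:ℝ) ^ p * ‖f (List.ofFn fun i => ((σ i : G))).prod‖ ^ p
        = (2 * ‖f (List.ofFn fun i => ((σ i : G))).prod‖) ^ p :=
      (Real.mul_rpow (by norm_num) (norm_nonneg _)).symm
    rw [h1]
    exact Real.rpow_le_rpow (by positivity) (hpt σ) hp0.le
  -- Minkowski
  have hmink := CWAux.mink3 hp1.le
    (fun σ : Fin (t'+1) → {x // x ∈ S} => ‖CWAux.Mlist π f μ (List.ofFn σ)‖)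
    (fun σ : Fin (t'+1) → {x // x ∈ S} => ‖CWAux.Ntil π f μ (List.ofFn σ)‖)
    (fun _ : Fin (t'+1) → {x // x ∈ S} => 2 * ‖μ‖)
    (fun σ => norm_nonneg _) (fun σ => norm_nonneg _) (fun σ => by positivity)
  -- the constant sum
  have hcsum : (∑ _σ : Fin (t'+1) → {x // x ∈ S}, (2 * ‖μ‖) ^ p)
      = (S.card : ℝ) ^ (t'+1) * (2 * ‖μ‖) ^ p := by
    rw [Finset.sum_const, Finset.card_univ, nsmul_eq_mul]
    congr 1
    rw [Fintype.card_fun, Fintype.card_coe, Fintype.card_fin]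
    push_cast
    ring
  have hcb : (S.card : ℝ) ^ (t'+1) * (2 * ‖μ‖) ^ p ≤ 2 ^ p * ((S.card : ℝ) ^ t' * a1) := by
    have h1 : (2 * ‖μ‖) ^ p = 2 ^ p * ‖μ‖ ^ p := Real.mul_rpow (by norm_num) (norm_nonneg _)
    rw [h1, pow_succ]
    have h2 : (0:ℝ) ≤ 2 ^ p * (S.card : ℝ) ^ t' := by positivity
    nlinarith [mul_le_mul_of_nonneg_left hμnorm h2]
  -- put the three bounds into Minkowski
  have hq0 : (0:ℝ) ≤ (S.card : ℝ) ^ t' * a1 := by positivity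
  have hRnn : (0:ℝ) ≤ 2 ^ (p+1) * Sp ^ p * ((t'+1 : ℕ) : ℝ) := by positivity
  have hB3 : (∑ σ : Fin (t'+1) → {x // x ∈ S},
        (‖CWAux.Mlist π f μ (List.ofFn σ)‖
          + (‖CWAux.Ntil π f μ (List.ofFn σ)‖ + 2 * ‖μ‖)) ^ p) ^ (1/p)
      ≤ 2 * ((S.card : ℝ) ^ t' * a1) ^ (1/p)
          * ((2 ^ (p+1) * Sp ^ p * ((t'+1 : ℕ) : ℝ)) ^ (1/p) + 1) := by
    have hm1 : (∑ σ : Fin (t'+1) → {x // x ∈ S}, ‖CWAux.Mlist π f μ (List.ofFn σ)‖ ^ p) ^ (1/p)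
        ≤ (2 ^ (p+1) * Sp ^ p * ((t'+1 : ℕ) : ℝ)) ^ (1/p) * ((S.card : ℝ) ^ t' * a1) ^ (1/p) := by
      rw [← Real.mul_rpow hRnn hq0]
      exact Real.rpow_le_rpow (Finset.sum_nonneg fun σ _ => Real.rpow_nonneg (norm_nonneg _) p)
        hSMb (by positivity)
    have hm2 : (∑ σ : Fin (t'+1) → {x // x ∈ S}, ‖CWAux.Ntil π f μ (List.ofFn σ)‖ ^ p) ^ (1/p)
        ≤ (2 ^ (p+1) * Sp ^ p * ((t'+1 : ℕ) : ℝ)) ^ (1/p) * ((S.card : ℝ) ^ t' * a1) ^ (1/p) := by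
      rw [← Real.mul_rpow hRnn hq0]
      exact Real.rpow_le_rpow (Finset.sum_nonneg fun σ _ => Real.rpow_nonneg (norm_nonneg _) p)
        hSNb (by positivity)
    have hm3 : (∑ _σ : Fin (t'+1) → {x // x ∈ S}, (2 * ‖μ‖) ^ p) ^ (1/p)
        ≤ 2 * ((S.card : ℝ) ^ t' * a1) ^ (1/p) := by
      have h1 : (∑ _σ : Fin (t'+1) → {x // x ∈ S}, (2 * ‖μ‖) ^ p) ^ (1/p)
          ≤ (2 ^ p * ((S.card : ℝ) ^ t' * a1)) ^ (1/p) := by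
        apply Real.rpow_le_rpow (Finset.sum_nonneg fun σ _ => Real.rpow_nonneg (by positivity) p)
          _ (by positivity)
        rw [hcsum]
        exact hcb
      have h2 : ((2:ℝ) ^ p * ((S.card : ℝ) ^ t' * a1)) ^ (1/p)
          = 2 * ((S.card : ℝ) ^ t' * a1) ^ (1/p) := by
        rw [Real.mul_rpow (by positivity) hq0, ← Real.rpow_mul (by norm_num : (0:ℝ) ≤ 2),
          show p * (1/p) = 1 by field_simp, Real.rpow_one]
      rw [h2] at h1
      exact h1
    calc (∑ σ : Fin (t'+1) → {x // x ∈ S},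
          (‖CWAux.Mlist π f μ (List.ofFn σ)‖
            + (‖CWAux.Ntil π f μ (List.ofFn σ)‖ + 2 * ‖μ‖)) ^ p) ^ (1/p)
        ≤ (∑ σ : Fin (t'+1) → {x // x ∈ S}, ‖CWAux.Mlist π f μ (List.ofFn σ)‖ ^ p) ^ (1/p)
          + ((∑ σ : Fin (t'+1) → {x // x ∈ S}, ‖CWAux.Ntil π f μ (List.ofFn σ)‖ ^ p) ^ (1/p)
          + (∑ _σ : Fin (t'+1) → {x // x ∈ S}, (2 * ‖μ‖) ^ p) ^ (1/p)) := hmink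
      _ ≤ ((2 ^ (p+1) * Sp ^ p * ((t'+1 : ℕ) : ℝ)) ^ (1/p) * ((S.card : ℝ) ^ t' * a1) ^ (1/p)
          + ((2 ^ (p+1) * Sp ^ p * ((t'+1 : ℕ) : ℝ)) ^ (1/p) * ((S.card : ℝ) ^ t' * a1) ^ (1/p)
          + 2 * ((S.card : ℝ) ^ t' * a1) ^ (1/p))) := by
          exact add_le_add hm1 (add_le_add hm2 hm3)
      _ = 2 * ((S.card : ℝ) ^ t' * a1) ^ (1/p)
          * ((2 ^ (p+1) * Sp ^ p * ((t'+1 : ℕ) : ℝ)) ^ (1/p) + 1) := by ring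
  -- conclude the key bound on the sum
  have hkey : (∑ σ : Fin (t'+1) → {x // x ∈ S}, ‖f (List.ofFn fun i => ((σ i : G))).prod‖ ^ p)
      ≤ ((S.card : ℝ) ^ t' * a1)
        * ((2 ^ (p+1) * Sp ^ p * ((t'+1 : ℕ) : ℝ)) ^ (1/p) + 1) ^ p := by
    have hTnn : (0:ℝ) ≤ ∑ σ : Fin (t'+1) → {x // x ∈ S},
        (‖CWAux.Mlist π f μ (List.ofFn σ)‖
          + (‖CWAux.Ntil π f μ (List.ofFn σ)‖ + 2 * ‖μ‖)) ^ p :=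
      Finset.sum_nonneg fun σ _ => Real.rpow_nonneg (by positivity) p
    have hTid : (∑ σ : Fin (t'+1) → {x // x ∈ S},
          (‖CWAux.Mlist π f μ (List.ofFn σ)‖
            + (‖CWAux.Ntil π f μ (List.ofFn σ)‖ + 2 * ‖μ‖)) ^ p)
        = ((∑ σ : Fin (t'+1) → {x // x ∈ S},
          (‖CWAux.Mlist π f μ (List.ofFn σ)‖
            + (‖CWAux.Ntil π f μ (List.ofFn σ)‖ + 2 * ‖μ‖)) ^ p) ^ (1/p)) ^ p := by
      rw [← Real.rpow_mul hTnn, show (1/p) * p = 1 by field_simp, Real.rpow_one]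
    have hT2 : (∑ σ : Fin (t'+1) → {x // x ∈ S},
          (‖CWAux.Mlist π f μ (List.ofFn σ)‖
            + (‖CWAux.Ntil π f μ (List.ofFn σ)‖ + 2 * ‖μ‖)) ^ p)
        ≤ (2 * ((S.card : ℝ) ^ t' * a1) ^ (1/p)
            * ((2 ^ (p+1) * Sp ^ p * ((t'+1 : ℕ) : ℝ)) ^ (1/p) + 1)) ^ p := by
      rw [hTid]
      exact Real.rpow_le_rpow (Real.rpow_nonneg hTnn _) hB3 hp0.le
    have hsplit : (2 * ((S.card : ℝ) ^ t' * a1) ^ (1/p)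
            * ((2 ^ (p+1) * Sp ^ p * ((t'+1 : ℕ) : ℝ)) ^ (1/p) + 1)) ^ p
        = 2 ^ p * (((S.card : ℝ) ^ t' * a1)
            * ((2 ^ (p+1) * Sp ^ p * ((t'+1 : ℕ) : ℝ)) ^ (1/p) + 1) ^ p) := by
      rw [Real.mul_rpow (x := 2 * ((S.card : ℝ) ^ t' * a1) ^ (1/p))
          (y := (2 ^ (p+1) * Sp ^ p * ((t'+1 : ℕ) : ℝ)) ^ (1/p) + 1)
          (mul_nonneg (by norm_num) (Real.rpow_nonneg hq0 _))
          (add_nonneg (Real.rpow_nonneg hRnn _) zero_le_one),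
        Real.mul_rpow (x := 2) (y := ((S.card : ℝ) ^ t' * a1) ^ (1/p)) (by norm_num)
          (Real.rpow_nonneg hq0 _),
        ← Real.rpow_mul hq0, show (1/p) * p = 1 by field_simp, Real.rpow_one]
      ring
    rw [hsplit] at hT2
    have := le_trans hstepA hT2
    have h2ppos : (0:ℝ) < 2 ^ p := Real.rpow_pos_of_pos (by norm_num) p
    nlinarith [this]
  -- the numeric core
  have hcore := CWAux.core_num hp1 hp2 hσδ htR
  -- finish
  rw [walkExp, walkExp, CWAux.sum_one (fun w => ‖f w‖ ^ p), pow_one, ← ha1def]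
  rw [div_le_iff₀ hpow_pos]
  calc (∑ σ : Fin (t'+1) → {x // x ∈ S}, ‖f (List.ofFn fun i => ((σ i : G))).prod‖ ^ p)
      ≤ ((S.card : ℝ) ^ t' * a1)
        * ((2 ^ (p+1) * Sp ^ p * ((t'+1 : ℕ) : ℝ)) ^ (1/p) + 1) ^ p := hkey
    _ ≤ ((S.card : ℝ) ^ t' * a1)
        * (2 ^ (2*p) * Sp ^ p / (2 ^ (p-1) - 1) * ((t'+1 : ℕ) : ℝ)) :=
        mul_le_mul_of_nonneg_left hcore hq0
    _ = 2 ^ (2*p) * Sp ^ p / (2 ^ (p-1) - 1) * ((t'+1 : ℕ) : ℝ) * (a1 / (S.card : ℝ))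
        * (S.card : ℝ) ^ (t'+1) := by
        rw [pow_succ]
        field_simp
end

section
/- (Pisier's martingale inequality.) Fix 1 < p ≤ 2 and let X be a Banach space satisfying the p-smoothness inequality with constant S_p. Let (M_k)_{k=0}^n be an X-valued martingale on a probability space with respect to some filtration (each M_k Bochner integrable with E[‖M_k‖^p] < ∞). Then E[‖M_n − M₀‖^p] ≤ (S_p^p / (2^{p−1} − 1)) · Σ_{k=0}^{n−1} E[‖M_{k+1} − M_k‖^p]. -/
open MeasureTheory ENNReal

section PisierAux

variable {α : Type*} {m m0 : MeasurableSpace α} {μ : Measure α}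
    {X : Type*} [NormedAddCommGroup X] [NormedSpace ℝ X] [CompleteSpace X]

theorem my_integral_norm_condexp_le
    (hm : m ≤ m0) [SigmaFinite (μ.trim hm)] {g : α → X} (hg : Integrable g μ) :
    ∫ a, ‖(μ[g|m]) a‖ ∂μ ≤ ∫ a, ‖g a‖ ∂μ := by
  have hnorm : ∀ f : α →₁[μ] X, ‖f‖ = ∫ a, ‖f a‖ ∂μ := fun f => by
    rw [Lp.norm_def, eLpNorm_one_eq_lintegral_enorm,
      integral_norm_eq_lintegral_enorm (Lp.aestronglyMeasurable f)]
  calc ∫ a, ‖(μ[g|m]) a‖ ∂μ = ∫ a, ‖(condExpL1 hm μ g : α → X) a‖ ∂μ :=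
        integral_congr_ae ((condExp_ae_eq_condExpL1 hm g).fun_comp norm)
    _ = ‖condExpL1 hm μ g‖ := (hnorm _).symm
    _ ≤ 1 * ‖hg.toL1 g‖ :=
        norm_setToFun_le (dominatedFinMeasAdditive_condExpInd X hm μ) hg zero_le_one
    _ = ∫ a, ‖g a‖ ∂μ := by
        rw [one_mul, hnorm]
        refine integral_congr_ae ?_
        filter_upwards [hg.coeFn_toL1] with a ha using by rw [ha]

theorem my_setIntegral_norm_condexp_le
    (hm : m ≤ m0) [SigmaFinite (μ.trim hm)] {g : α → X} (hg : Integrable g μ)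
    {s : Set α} (hs : MeasurableSet[m] s) :
    ∫ a in s, ‖(μ[g|m]) a‖ ∂μ ≤ ∫ a in s, ‖g a‖ ∂μ := by
  have hnormcomm : ∀ (h : α → X), (fun a => ‖s.indicator h a‖) = s.indicator fun a => ‖h a‖ := by
    intro h; ext a; rw [norm_indicator_eq_indicator_norm]
  have h1 : ∫ a in s, ‖(μ[g|m]) a‖ ∂μ = ∫ a, ‖s.indicator (μ[g|m]) a‖ ∂μ := by
    rw [hnormcomm, integral_indicator (hm s hs)]
  have h2 : ∫ a, ‖s.indicator (μ[g|m]) a‖ ∂μ = ∫ a, ‖(μ[s.indicator g|m]) a‖ ∂μ := by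
    refine integral_congr_ae ?_
    filter_upwards [condExp_indicator hg hs] with a ha using by rw [ha]
  have h3 : ∫ a, ‖s.indicator g a‖ ∂μ = ∫ a in s, ‖g a‖ ∂μ := by
    rw [hnormcomm, integral_indicator (hm s hs)]
  rw [h1, h2, ← h3]
  exact my_integral_norm_condexp_le hm (hg.indicator (hm s hs))

theorem my_norm_condexp_le_condexp_norm
    (hm : m ≤ m0) [SigmaFinite (μ.trim hm)] {g : α → X} (hg : Integrable g μ) :
    (fun a => ‖(μ[g|m]) a‖) ≤ᵐ[μ] μ[(fun a => ‖g a‖)|m] := by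
  have hf₁m : StronglyMeasurable[m] fun a => ‖(μ[g|m]) a‖ := stronglyMeasurable_condExp.norm
  have hf₂m : StronglyMeasurable[m] (μ[(fun a => ‖g a‖)|m]) := stronglyMeasurable_condExp
  have hf₁i : Integrable (fun a => ‖(μ[g|m]) a‖) μ := integrable_condExp.norm
  have hf₂i : Integrable (μ[(fun a => ‖g a‖)|m]) μ := integrable_condExp
  refine ae_le_of_ae_le_trim (hm := hm) ?_
  refine ae_le_of_forall_setIntegral_le (hf₁i.trim hm hf₁m) (hf₂i.trim hm hf₂m) ?_
  intro s hs _
  rw [← setIntegral_trim hm hf₁m hs, ← setIntegral_trim hm hf₂m hs]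
  calc ∫ a in s, ‖(μ[g|m]) a‖ ∂μ ≤ ∫ a in s, ‖g a‖ ∂μ :=
        my_setIntegral_norm_condexp_le hm hg hs
    _ = ∫ a in s, (μ[(fun a => ‖g a‖)|m]) a ∂μ := (setIntegral_condExp hm hg.norm hs).symm

theorem my_lp_jensen [IsFiniteMeasure μ]
    (hm : m ≤ m0) [SigmaFinite (μ.trim hm)] {p : ℝ} (hp1 : 1 < p)
    {x g : α → X} (hx : MemLp x (ENNReal.ofReal p) μ) (hg : MemLp g (ENNReal.ofReal p) μ)
    (hxg : x =ᵐ[μ] μ[g|m]) :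
    ∫ a, ‖x a‖ ^ p ∂μ ≤ ∫ a, ‖g a‖ ^ p ∂μ := by
  have hp0 : (0:ℝ) < p := lt_trans one_pos hp1
  have hpo0 : ENNReal.ofReal p ≠ 0 := by
    simp [ENNReal.ofReal_eq_zero, not_le, hp0]
  have hpotop : ENNReal.ofReal p ≠ ⊤ := ENNReal.ofReal_ne_top
  have hpq : p.HolderConjugate (p/(p-1)) := Real.HolderConjugate.conjExponent hp1
  set q : ℝ := p / (p - 1) with hq_def
  have hq0 : (0:ℝ) < q := hpq.symm.pos
  -- notation
  set f₁ : α → ℝ := fun a => ‖x a‖ ^ (p - 1) with hf₁_def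
  set h : α → ℝ := fun a => ‖g a‖ with hh_def
  have hgi : Integrable g μ := hg.integrable (by
    rw [← ENNReal.ofReal_one]; exact ENNReal.ofReal_le_ofReal hp1.le)
  have hhi : Integrable h μ := hgi.norm
  -- pointwise rewriting: t^p = t^(p-1) * t for t = ‖x a‖
  have hrw : ∀ a, ‖x a‖ ^ p = f₁ a * ‖x a‖ := by
    intro a
    by_cases hxa : ‖x a‖ = 0
    · simp [hf₁_def, hxa, Real.zero_rpow (by linarith : p - 1 ≠ 0), Real.zero_rpow hp0.ne']
    · rw [hf₁_def]
      have := Real.rpow_add_one hxa (p - 1)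
      simp only [sub_add_cancel] at this
      rw [this]
  -- memℒp facts
  have hupi : Integrable (fun a => ‖x a‖ ^ p) μ := by
    have := hx.integrable_norm_rpow hpo0 hpotop
    simpa [ENNReal.toReal_ofReal hp0.le] using this
  have hhpi : Integrable (fun a => ‖g a‖ ^ p) μ := by
    have := hg.integrable_norm_rpow hpo0 hpotop
    simpa [ENNReal.toReal_ofReal hp0.le] using this
  have hf₁mem : MemLp f₁ (ENNReal.ofReal q) μ := by
    have h1 := hx.norm_rpow_div (ENNReal.ofReal (p - 1))
    have h2 : (ENNReal.ofReal (p-1)).toReal = p - 1 := ENNReal.toReal_ofReal (by linarith)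
    have h3 : ENNReal.ofReal p / ENNReal.ofReal (p - 1) = ENNReal.ofReal q := by
      rw [hq_def, ENNReal.ofReal_div_of_pos (by linarith)]
    rw [h2, h3] at h1
    exact h1
  -- integrability of f₁ * h via Young
  have hf₁meas : AEStronglyMeasurable f₁ μ :=
    (hx.1.norm.aemeasurable.pow_const (p - 1)).aestronglyMeasurable
  have hf₁h_int : Integrable (fun a => f₁ a * h a) μ := by
    refine Integrable.mono' ((hupi.div_const q).add (hhpi.div_const p)) (hf₁meas.mul hhi.1) ?_
    filter_upwards with a
    have h0f : 0 ≤ f₁ a := Real.rpow_nonneg (norm_nonneg _) _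
    have h0h : 0 ≤ h a := norm_nonneg _
    rw [Real.norm_of_nonneg (mul_nonneg h0f h0h)]
    have := Real.young_inequality_of_nonneg h0f h0h hpq.symm
    calc f₁ a * h a ≤ f₁ a ^ q / q + h a ^ p / p := this
      _ = ‖x a‖ ^ p / q + ‖g a‖ ^ p / p := by
          have e : f₁ a ^ q = ‖x a‖ ^ p := by
            rw [hf₁_def, ← Real.rpow_mul (norm_nonneg _), hpq.sub_one_mul_conj]
          rw [e]
  -- pointwise comparison with the conditional expectation of the norm
  have hcond := my_norm_condexp_le_condexp_norm hm hgi
  have humono : (fun a => ‖x a‖) ≤ᵐ[μ] μ[h|m] := by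
    filter_upwards [hxg, hcond] with a ha hb
    rw [ha]; exact hb
  -- pull-out property
  have hf₁' : AEStronglyMeasurable[m] f₁ μ := by
    refine ⟨fun a => ‖(μ[g|m]) a‖ ^ (p - 1), ?_, ?_⟩
    · exact (stronglyMeasurable_condExp.norm.measurable.pow_const (p-1)).stronglyMeasurable
    · filter_upwards [hxg] with a ha
      simp only [hf₁_def, ha]
  have hpull : μ[(f₁ * h)|m] =ᵐ[μ] f₁ * μ[h|m] :=
    condExp_mul_of_aestronglyMeasurable_left hf₁' (by exact hf₁h_int) hhi
  have hint2 : Integrable (f₁ * μ[h|m]) μ := integrable_condExp.congr hpull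
  have step1 : ∫ a, ‖x a‖ ^ p ∂μ ≤ ∫ a, f₁ a * (μ[h|m]) a ∂μ := by
    have hl : Integrable (fun a => f₁ a * ‖x a‖) μ := hupi.congr (Filter.Eventually.of_forall hrw)
    calc ∫ a, ‖x a‖ ^ p ∂μ = ∫ a, f₁ a * ‖x a‖ ∂μ := by simp_rw [hrw]
      _ ≤ ∫ a, f₁ a * (μ[h|m]) a ∂μ := by
          refine integral_mono_ae hl hint2 ?_
          filter_upwards [humono] with a ha
          exact mul_le_mul_of_nonneg_left ha (Real.rpow_nonneg (norm_nonneg _) _)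
  have step2 : ∫ a, f₁ a * (μ[h|m]) a ∂μ = ∫ a, f₁ a * h a ∂μ := by
    rw [show (fun a => f₁ a * (μ[h|m]) a) = f₁ * μ[h|m] from rfl,
      integral_congr_ae hpull.symm]
    exact integral_condExp hm
  have step3 : ∫ a, f₁ a * h a ∂μ ≤
      (∫ a, ‖x a‖ ^ p ∂μ) ^ (1/q) * (∫ a, ‖g a‖ ^ p ∂μ) ^ (1/p) := by
    have H := integral_mul_norm_le_Lp_mul_Lq hpq.symm hf₁mem (hg.norm : MemLp h (ENNReal.ofReal p) μ)
    have e1 : ∀ a, ‖f₁ a‖ * ‖h a‖ = f₁ a * h a := fun a => by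
      rw [Real.norm_of_nonneg (Real.rpow_nonneg (norm_nonneg _) _),
        Real.norm_of_nonneg (norm_nonneg _)]
    have e2 : ∀ a, ‖f₁ a‖ ^ q = ‖x a‖ ^ p := fun a => by
      show ‖‖x a‖ ^ (p - 1)‖ ^ q = ‖x a‖ ^ p
      rw [Real.norm_of_nonneg (Real.rpow_nonneg (norm_nonneg _) _),
        ← Real.rpow_mul (norm_nonneg _), hpq.sub_one_mul_conj]
    have e3 : ∀ a, ‖h a‖ ^ p = ‖g a‖ ^ p := fun a => by rw [hh_def, norm_norm]
    rw [show (fun a => ‖f₁ a‖ * ‖h a‖) = fun a => f₁ a * h a from funext e1,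
      show (fun a => ‖f₁ a‖ ^ q) = fun a => ‖x a‖ ^ p from funext e2,
      show (fun a => ‖h a‖ ^ p) = fun a => ‖g a‖ ^ p from funext e3] at H
    exact H
  set I := ∫ a, ‖x a‖ ^ p ∂μ with hI_def
  set D := ∫ a, ‖g a‖ ^ p ∂μ with hD_def
  have hD0 : 0 ≤ D := integral_nonneg fun a => Real.rpow_nonneg (norm_nonneg _) _
  have key : I ≤ I ^ (1/q) * D ^ (1/p) := le_trans step1 (step2.le.trans step3)
  rcases le_or_gt I 0 with hI | hI
  · exact hI.trans hD0
  · have hq_inv : 1/q + 1/p = 1 := by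
      have : q⁻¹ + p⁻¹ = 1 := by simpa using hpq.symm.inv_add_inv_eq_inv
      rw [one_div, one_div]; exact this
    have h2 : I ^ (1/q) * I ^ (1/p) ≤ I ^ (1/q) * D ^ (1/p) := by
      rw [← Real.rpow_add hI, hq_inv, Real.rpow_one]; exact key
    have h3 : I ^ (1/p) ≤ D ^ (1/p) :=
      le_of_mul_le_mul_left h2 (Real.rpow_pos_of_pos hI _)
    calc I = (I ^ (1/p)) ^ p := by
          rw [← Real.rpow_mul hI.le, one_div_mul_cancel hp0.ne', Real.rpow_one]
      _ ≤ (D ^ (1/p)) ^ p := Real.rpow_le_rpow (Real.rpow_nonneg hI.le _) h3 hp0.le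
      _ = D := by
          rw [← Real.rpow_mul hD0, one_div_mul_cancel hp0.ne', Real.rpow_one]

theorem my_step (p Sp : ℝ) (hp1 : 1 < p) (hSp : 0 < Sp)
    (hsmooth : ∀ x y : X, ‖x + y‖ ^ p + ‖x - y‖ ^ p ≤ 2 * ‖x‖ ^ p + 2 * Sp ^ p * ‖y‖ ^ p)
    (x d : α → X)
    (hx : MemLp x (ENNReal.ofReal p) μ) (hd : MemLp d (ENNReal.ofReal p) μ)
    (hJ : ∀ c : ℝ, ∫ a, ‖x a‖ ^ p ∂μ ≤ ∫ a, ‖x a - c • d a‖ ^ p ∂μ) :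
    ∫ a, ‖x a + d a‖ ^ p ∂μ ≤
      ∫ a, ‖x a‖ ^ p ∂μ + Sp ^ p / (2 ^ (p - 1) - 1) * ∫ a, ‖d a‖ ^ p ∂μ := by
  have hp0 : (0:ℝ) < p := lt_trans one_pos hp1
  have hpo0 : ENNReal.ofReal p ≠ 0 := by simp [ENNReal.ofReal_eq_zero, not_le, hp0]
  have hpotop : ENNReal.ofReal p ≠ ⊤ := ENNReal.ofReal_ne_top
  -- integrability of all the functions involved
  have hint : ∀ c : ℝ, Integrable (fun a => ‖x a + c • d a‖ ^ p) μ := by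
    intro c
    have h1 : MemLp (x + c • d) (ENNReal.ofReal p) μ := hx.add (hd.const_smul c)
    have := h1.integrable_norm_rpow hpo0 hpotop
    simpa [ENNReal.toReal_ofReal hp0.le] using this
  have hint' : ∀ c : ℝ, Integrable (fun a => ‖x a - c • d a‖ ^ p) μ := by
    intro c
    have h1 : MemLp (x - c • d) (ENNReal.ofReal p) μ := hx.sub (hd.const_smul c)
    have := h1.integrable_norm_rpow hpo0 hpotop
    simpa [ENNReal.toReal_ofReal hp0.le] using this
  have hintx : Integrable (fun a => ‖x a‖ ^ p) μ := by
    have := hx.integrable_norm_rpow hpo0 hpotop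
    simpa [ENNReal.toReal_ofReal hp0.le] using this
  have hintd : Integrable (fun a => ‖d a‖ ^ p) μ := by
    have := hd.integrable_norm_rpow hpo0 hpotop
    simpa [ENNReal.toReal_ofReal hp0.le] using this
  set I := ∫ a, ‖x a‖ ^ p ∂μ with hI_def
  set D := ∫ a, ‖d a‖ ^ p ∂μ with hD_def
  have hD0 : 0 ≤ D := integral_nonneg fun a => Real.rpow_nonneg (norm_nonneg _) _
  have hSp0 : (0:ℝ) ≤ Sp ^ p := Real.rpow_nonneg hSp.le _
  set A : ℕ → ℝ := fun j => ∫ a, ‖x a + ((1:ℝ)/2) ^ j • d a‖ ^ p ∂μ with hA_def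
  -- norm of scaled increment
  have hsc : ∀ (c : ℝ), 0 ≤ c → ∀ a : α, ‖c • d a‖ ^ p = c ^ p * ‖d a‖ ^ p := by
    intro c hc a
    rw [norm_smul, Real.norm_of_nonneg hc, Real.mul_rpow hc (norm_nonneg _)]
  -- the recursion inequality
  have key : ∀ j : ℕ, A j + I ≤ 2 * A (j+1) + 2 * Sp ^ p * (((1:ℝ)/2) ^ (j+1)) ^ p * D := by
    intro j
    have pw : ∀ a : α, ‖x a + ((1:ℝ)/2) ^ j • d a‖ ^ p + ‖x a‖ ^ p ≤
        2 * ‖x a + ((1:ℝ)/2) ^ (j+1) • d a‖ ^ p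
          + 2 * Sp ^ p * ((((1:ℝ)/2) ^ (j+1)) ^ p * ‖d a‖ ^ p) := by
      intro a
      have h := hsmooth (x a + ((1:ℝ)/2) ^ (j+1) • d a) (((1:ℝ)/2) ^ (j+1) • d a)
      have e1 : x a + ((1:ℝ)/2) ^ (j+1) • d a + ((1:ℝ)/2) ^ (j+1) • d a
          = x a + ((1:ℝ)/2) ^ j • d a := by
        rw [add_assoc, ← add_smul]
        congr 2
        rw [pow_succ]; ring
      have e2 : x a + ((1:ℝ)/2) ^ (j+1) • d a - ((1:ℝ)/2) ^ (j+1) • d a = x a :=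
        add_sub_cancel_right _ _
      rw [e1, e2, hsc _ (by positivity) a] at h
      linarith
    have hmono := integral_mono
      ((hint (((1:ℝ)/2) ^ j)).add hintx)
      (((hint (((1:ℝ)/2) ^ (j+1))).const_mul 2).add ((hintd.const_mul _).const_mul _)) pw
    simp only [Pi.add_apply] at hmono
    rw [integral_add (hint _) hintx, integral_add ((hint _).const_mul 2)
      ((hintd.const_mul _).const_mul _), integral_const_mul, integral_const_mul,
      integral_const_mul] at hmono
    calc A j + I ≤ 2 * A (j+1) + 2 * Sp ^ p * ((((1:ℝ)/2) ^ (j+1)) ^ p * D) := hmono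
      _ = 2 * A (j+1) + 2 * Sp ^ p * (((1:ℝ)/2) ^ (j+1)) ^ p * D := by ring
  -- the terminal inequality
  have term : ∀ j : ℕ, A j ≤ I + 2 * Sp ^ p * (((1:ℝ)/2) ^ j) ^ p * D := by
    intro j
    have pw : ∀ a : α, ‖x a + ((1:ℝ)/2) ^ j • d a‖ ^ p + ‖x a - ((1:ℝ)/2) ^ j • d a‖ ^ p ≤
        2 * ‖x a‖ ^ p + 2 * Sp ^ p * ((((1:ℝ)/2) ^ j) ^ p * ‖d a‖ ^ p) := by
      intro a
      have h := hsmooth (x a) (((1:ℝ)/2) ^ j • d a)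
      rw [hsc _ (by positivity) a] at h
      linarith
    have hmono := integral_mono
      ((hint (((1:ℝ)/2) ^ j)).add (hint' (((1:ℝ)/2) ^ j)))
      ((hintx.const_mul 2).add ((hintd.const_mul _).const_mul _)) pw
    simp only [Pi.add_apply] at hmono
    rw [integral_add (hint _) (hint' _), integral_add (hintx.const_mul 2)
      ((hintd.const_mul _).const_mul _), integral_const_mul, integral_const_mul,
      integral_const_mul] at hmono
    have hJ' := hJ (((1:ℝ)/2) ^ j)
    have : A j + I ≤ 2 * I + 2 * Sp ^ p * ((((1:ℝ)/2) ^ j) ^ p * D) := by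
      have := hJ'
      linarith [hmono]
    linarith [this]
  -- geometric quantities
  set s : ℝ := ((1:ℝ)/2) ^ p with hs_def
  have hs_pos : 0 < s := Real.rpow_pos_of_pos (by norm_num) _
  have hpowrw : ∀ j : ℕ, ((((1:ℝ)/2) ^ j : ℝ)) ^ p = s ^ j := by
    intro j
    rw [← Real.rpow_natCast ((1:ℝ)/2) j, ← Real.rpow_natCast s j, hs_def,
      ← Real.rpow_mul (by norm_num : (0:ℝ) ≤ 1/2), ← Real.rpow_mul (by norm_num), mul_comm]
  set r : ℝ := 2 * s with hr_def
  have hr_pos : 0 < r := by positivity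
  have hs_eq : s = (2:ℝ) ^ (-p) := by
    rw [hs_def, one_div, ← Real.rpow_neg_one (2:ℝ), ← Real.rpow_mul (by norm_num : (0:ℝ) ≤ 2)]
    norm_num
  have hr_eq : r = (2:ℝ) ^ (1 - p) := by
    rw [hr_def, hs_eq, show (1:ℝ) - p = 1 + (-p) by ring,
      Real.rpow_add (by norm_num : (0:ℝ) < 2), Real.rpow_one]
  have hr_lt1 : r < 1 := by
    rw [hr_eq]
    exact Real.rpow_lt_one_of_one_lt_of_neg (by norm_num) (by linarith)
  set t : ℝ := (2:ℝ) ^ (p - 1) with ht_def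
  have ht1 : 1 < t := by
    rw [ht_def]
    exact (Real.one_lt_rpow_iff_of_pos (by norm_num)).mpr (Or.inl ⟨by norm_num, by linarith⟩)
  have hrt : r * t = 1 := by
    rw [hr_eq, ht_def, ← Real.rpow_add (by norm_num : (0:ℝ) < 2)]
    norm_num
  -- induction
  have ind : ∀ mm : ℕ, A 0 ≤ I + 2*Sp^p*D*(∑ j ∈ Finset.range mm, (2:ℝ)^j * s^(j+1))
      + 2^mm * (A mm - I) := by
    intro mm; induction mm with
    | zero => simp
    | succ k ih =>
      have hk := key k
      rw [hpowrw (k+1)] at hk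
      have h1 : A k - I ≤ 2*(A (k+1) - I) + 2*Sp^p * s^(k+1) * D := by linarith
      have h2 : (2:ℝ)^k * (A k - I) ≤ (2:ℝ)^k * (2*(A (k+1) - I) + 2*Sp^p * s^(k+1) * D) :=
        mul_le_mul_of_nonneg_left h1 (by positivity)
      calc A 0 ≤ I + 2*Sp^p*D*(∑ j ∈ Finset.range k, (2:ℝ)^j * s^(j+1)) + 2^k * (A k - I) := ih
        _ ≤ I + 2*Sp^p*D*(∑ j ∈ Finset.range k, (2:ℝ)^j * s^(j+1))
            + 2^k * (2*(A (k+1) - I) + 2*Sp^p * s^(k+1) * D) := by linarith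
        _ = I + 2*Sp^p*D*(∑ j ∈ Finset.range (k+1), (2:ℝ)^j * s^(j+1))
            + 2^(k+1) * (A (k+1) - I) := by
            rw [Finset.sum_range_succ]; ring
  -- bound valid for every mm
  have allm : ∀ mm : ℕ, A 0 ≤ I + Sp^p/(t-1)*D + 2*Sp^p*D * r^mm := by
    intro mm
    have h1 := ind mm
    have h2 := term mm
    rw [hpowrw mm] at h2
    have h3 : (2:ℝ)^mm * (A mm - I) ≤ 2*Sp^p*D * r^mm := by
      have ht' : A mm - I ≤ 2*Sp^p*s^mm*D := by linarith
      calc (2:ℝ)^mm * (A mm - I) ≤ (2:ℝ)^mm * (2*Sp^p*s^mm*D) :=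
            mul_le_mul_of_nonneg_left ht' (by positivity)
        _ = 2*Sp^p*D * r^mm := by rw [hr_def, mul_pow]; ring
    have h4 : (∑ j ∈ Finset.range mm, (2:ℝ)^j * s^(j+1)) ≤ s / (1 - r) := by
      have he : ∀ j ∈ Finset.range mm, (2:ℝ)^j * s^(j+1) = s * r^j := by
        intro j _; rw [hr_def, mul_pow, pow_succ]; ring
      rw [Finset.sum_congr rfl he, ← Finset.mul_sum]
      have h1r : (0:ℝ) < 1 - r := by linarith
      have hg : (∑ j ∈ Finset.range mm, r^j) ≤ 1/(1-r) := by
        rw [geom_sum_eq (by linarith : r ≠ 1)]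
        have he2 : (r ^ mm - 1) / (r - 1) = (1 - r ^ mm)/(1 - r) := by
          rw [← neg_div_neg_eq]; ring_nf
        rw [he2, div_le_div_iff₀ h1r h1r]
        nlinarith [pow_nonneg hr_pos.le mm]
      calc s * (∑ j ∈ Finset.range mm, r^j) ≤ s * (1/(1-r)) :=
            mul_le_mul_of_nonneg_left hg hs_pos.le
        _ = s / (1 - r) := by ring
    have h5 : 2*Sp^p*D*(∑ j ∈ Finset.range mm, (2:ℝ)^j * s^(j+1)) ≤ Sp^p/(t-1)*D := by
      have hc : 2*Sp^p*(s/(1-r)) = Sp^p/(t-1) := by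
        have h1r : (0:ℝ) < 1 - r := by linarith
        have htpos : (0:ℝ) < t - 1 := by linarith
        have hsr : s = r / 2 := by rw [hr_def]; ring
        rw [hsr]
        field_simp
        nlinarith [hrt]
      calc 2*Sp^p*D*(∑ j ∈ Finset.range mm, (2:ℝ)^j * s^(j+1)) ≤ 2*Sp^p*D*(s/(1-r)) := by
            have : (0:ℝ) ≤ 2*Sp^p*D := by positivity
            exact mul_le_mul_of_nonneg_left h4 this
        _ = (2*Sp^p*(s/(1-r)))*D := by ring
        _ = Sp^p/(t-1)*D := by rw [hc]
    linarith
  -- pass to the limit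
  have htend : Filter.Tendsto (fun mm : ℕ => I + Sp^p/(t-1)*D + 2*Sp^p*D * r^mm)
      Filter.atTop (nhds (I + Sp^p/(t-1)*D + 2*Sp^p*D * 0)) := by
    exact tendsto_const_nhds.add
      ((tendsto_pow_atTop_nhds_zero_of_lt_one hr_pos.le hr_lt1).const_mul _)
  have hfin : A 0 ≤ I + Sp^p/(t-1)*D + 2*Sp^p*D*0 := ge_of_tendsto' htend allm
  have hA0 : A 0 = ∫ a, ‖x a + d a‖ ^ p ∂μ := by
    simp only [hA_def, pow_zero, one_smul]
  rw [← hA0]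
  linarith [hfin]

end PisierAux

/-- **Pisier's martingale inequality.** If `X` is `p`-smooth with constant `S_p`
(`1 < p ≤ 2`) and `(M_k)_{k=0}^n` is an `X`-valued martingale with `E[‖M_k‖^p] < ∞`, then
`E[‖M_n − M₀‖^p] ≤ (S_p^p / (2^{p−1} − 1)) · Σ_{k<n} E[‖M_{k+1} − M_k‖^p]`. -/
theorem pisier_martingale_inequality
    {Ω : Type*} {m : MeasurableSpace Ω} {μ : Measure Ω} [IsProbabilityMeasure μ]
    {X : Type*} [NormedAddCommGroup X] [NormedSpace ℝ X] [CompleteSpace X]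
    (p Sp : ℝ) (hp1 : 1 < p) (hp2 : p ≤ 2) (hSp : 0 < Sp)
    (hsmooth : ∀ x y : X, ‖x + y‖ ^ p + ‖x - y‖ ^ p ≤ 2 * ‖x‖ ^ p + 2 * Sp ^ p * ‖y‖ ^ p)
    (ℱ : Filtration ℕ m) (M : ℕ → Ω → X) (hM : Martingale M ℱ μ)
    (hint : ∀ k : ℕ, MemLp (M k) (ENNReal.ofReal p) μ) (n : ℕ) :
    ∫ ω, ‖M n ω - M 0 ω‖ ^ p ∂μ ≤
      Sp ^ p / (2 ^ (p - 1) - 1) *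
        ∑ k ∈ Finset.range n, ∫ ω, ‖M (k + 1) ω - M k ω‖ ^ p ∂μ := by
  have hp0 : (0:ℝ) < p := lt_trans one_pos hp1
  have hone : (1:ℝ≥0∞) ≤ ENNReal.ofReal p := by
    rw [← ENNReal.ofReal_one]; exact ENNReal.ofReal_le_ofReal hp1.le
  induction n with
  | zero => simp [Real.zero_rpow hp0.ne']
  | succ n ih =>
    have hKnn : 0 ≤ Sp ^ p / (2 ^ (p - 1) - 1) := by
      apply div_nonneg (Real.rpow_nonneg hSp.le _)
      have : (1:ℝ) < 2 ^ (p - 1) :=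
        (Real.one_lt_rpow_iff_of_pos (by norm_num)).mpr (Or.inl ⟨by norm_num, by linarith⟩)
      linarith
    have hxmem : MemLp (fun ω => M n ω - M 0 ω) (ENNReal.ofReal p) μ := (hint n).sub (hint 0)
    have hdmem : MemLp (fun ω => M (n+1) ω - M n ω) (ENNReal.ofReal p) μ :=
      (hint (n+1)).sub (hint n)
    have hJ : ∀ c : ℝ, ∫ ω, ‖M n ω - M 0 ω‖ ^ p ∂μ ≤
        ∫ ω, ‖(fun ω => M n ω - M 0 ω) ω - c • (fun ω => M (n+1) ω - M n ω) ω‖ ^ p ∂μ := by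
      intro c
      set g : Ω → X := fun ω => (M n ω - M 0 ω) - c • (M (n+1) ω - M n ω) with hg_def
      have hgmem : MemLp g (ENNReal.ofReal p) μ := hxmem.sub (hdmem.const_smul c)
      have hxint : Integrable (fun ω => M n ω - M 0 ω) μ := hxmem.integrable hone
      have hdint : Integrable (fun ω => M (n+1) ω - M n ω) μ := hdmem.integrable hone
      have hxg : (fun ω => M n ω - M 0 ω) =ᵐ[μ] μ[g|ℱ n] := by
        have hsm : StronglyMeasurable[ℱ n] (fun ω => M n ω - M 0 ω) :=
          (hM.stronglyAdapted n).sub ((hM.stronglyAdapted 0).mono (ℱ.mono (Nat.zero_le n)))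
        have e1 : μ[g|ℱ n] =ᵐ[μ] μ[(fun ω => M n ω - M 0 ω)|ℱ n]
            - μ[(fun ω => c • (M (n+1) ω - M n ω))|ℱ n] :=
          condExp_sub hxint (hdint.smul c) _
        have e2 : μ[(fun ω => M n ω - M 0 ω)|ℱ n] = fun ω => M n ω - M 0 ω :=
          condExp_of_stronglyMeasurable (ℱ.le n) hsm hxint
        have e3 : μ[(fun ω => c • (M (n+1) ω - M n ω))|ℱ n]
            =ᵐ[μ] c • μ[(fun ω => M (n+1) ω - M n ω)|ℱ n] := condExp_smul c _ _
        have e4 : μ[(fun ω => M (n+1) ω - M n ω)|ℱ n] =ᵐ[μ] 0 := by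
          have e5 : μ[(fun ω => M (n+1) ω - M n ω)|ℱ n] =ᵐ[μ] μ[M (n+1)|ℱ n] - μ[M n|ℱ n] :=
            condExp_sub (hM.integrable (n+1)) (hM.integrable n) _
          have e6 := hM.condExp_ae_eq (Nat.le_succ n)
          have e7 : μ[M n|ℱ n] = M n :=
            condExp_of_stronglyMeasurable (ℱ.le n) (hM.stronglyAdapted n) (hM.integrable n)
          filter_upwards [e5, e6] with ω h5 h6
          rw [h5]
          simp only [Pi.sub_apply, Pi.zero_apply, e7, h6, sub_self]
        filter_upwards [e1, e3, e4] with ω h1 h3 h4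
        rw [h1]
        simp only [Pi.sub_apply, e2, Pi.smul_apply, h3, h4, Pi.zero_apply, smul_zero, sub_zero]
      exact my_lp_jensen (ℱ.le n) hp1 hxmem hgmem hxg
    have hstep := my_step p Sp hp1 hSp hsmooth
      (fun ω => M n ω - M 0 ω) (fun ω => M (n+1) ω - M n ω) hxmem hdmem hJ
    have hrw : ∀ ω, M (n+1) ω - M 0 ω = (M n ω - M 0 ω) + (M (n+1) ω - M n ω) := fun ω => by
      abel
    calc ∫ ω, ‖M (n+1) ω - M 0 ω‖ ^ p ∂μ
        = ∫ ω, ‖(M n ω - M 0 ω) + (M (n+1) ω - M n ω)‖ ^ p ∂μ := by simp_rw [hrw]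
      _ ≤ (∫ ω, ‖M n ω - M 0 ω‖ ^ p ∂μ)
          + Sp ^ p / (2 ^ (p - 1) - 1) * ∫ ω, ‖M (n+1) ω - M n ω‖ ^ p ∂μ := hstep
      _ ≤ Sp ^ p / (2 ^ (p - 1) - 1) * (∑ k ∈ Finset.range n, ∫ ω, ‖M (k+1) ω - M k ω‖ ^ p ∂μ)
          + Sp ^ p / (2 ^ (p - 1) - 1) * ∫ ω, ‖M (n+1) ω - M n ω‖ ^ p ∂μ := by linarith
      _ = Sp ^ p / (2 ^ (p - 1) - 1)
          * ∑ k ∈ Finset.range (n+1), ∫ ω, ‖M (k+1) ω - M k ω‖ ^ p ∂μ := by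
          rw [Finset.sum_range_succ, mul_add]
end

section
/- Let G be a group with a finite symmetric generating set S and let (W_t)_{t≥0} be the simple random walk on the Cayley graph of G determined by S. Let H be a (real or complex) Hilbert space, π a homomorphism from G to the group of linear isometric automorphisms of H, and f ∈ Z¹(G,π) a 1-cocycle. Then for every t ≥ 1, E[‖f(W_{2t})‖²] ≤ 2·E[‖f(W_t)‖²], and consequently for every k ≥ 0, E[‖f(W_{2^k})‖²] ≤ 2^k · E[‖f(W₁)‖²]. -/
open MeasureTheory ENNReal

open scoped RealInnerProductSpace

/-- Reversing and inverting the letters inverts the product. -/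
private lemma ofFn_rev_inv_prod {G : Type*} [Group G] :
    ∀ (t : ℕ) (σ : Fin t → G),
      (List.ofFn fun i => (σ i.rev)⁻¹).prod = ((List.ofFn σ).prod)⁻¹ := by
  intro t
  induction t with
  | zero => intro σ; simp
  | succ t ih =>
    intro σ
    rw [List.ofFn_succ, List.prod_cons, Fin.rev_zero]
    have heq : (fun i : Fin t => (σ i.succ.rev)⁻¹)
        = fun i : Fin t => ((fun j : Fin t => σ j.castSucc) i.rev)⁻¹ := by
      funext i
      simp [Fin.rev_succ]
    rw [heq, ih (fun j => σ j.castSucc)]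
    conv_rhs => rw [List.ofFn_succ' σ]
    simp [mul_inv_rev, Function.comp]

/-- The product of the letters of a walk. -/
private def wprod {G : Type*} [Group G] {S : Finset G} {u : ℕ}
    (σ : Fin u → {x // x ∈ S}) : G :=
  (List.ofFn fun i => (σ i : G)).prod

private lemma wprod_append {G : Type*} [Group G] {S : Finset G} {t : ℕ}
    (a b : Fin t → {x // x ∈ S}) :
    wprod (Fin.append a b) = wprod a * wprod b := by
  unfold wprod
  have h : (List.ofFn fun i : Fin (t + t) => (Fin.append a b i).1)
      = (List.ofFn fun i : Fin t => (a i).1) ++ List.ofFn fun i : Fin t => (b i).1 := by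
    rw [List.ofFn_add]
    congr 1
    · exact congrArg List.ofFn (funext fun i => congrArg Subtype.val (Fin.append_left a b i))
    · exact congrArg List.ofFn (funext fun i => congrArg Subtype.val (Fin.append_right a b i))
  rw [h, List.prod_append]

/-- For a `1`-cocycle `f` of `G` on a Hilbert space `H` one has
`E[‖f(W_{2t})‖²] ≤ 2·E[‖f(W_t)‖²]` for all `t ≥ 1`, and consequently
`E[‖f(W_{2^k})‖²] ≤ 2^k·E[‖f(W₁)‖²]` for all `k ≥ 0`. -/
theorem hilbert_cocycle_doubling
    {G : Type*} [Group G] (S : Finset G) (hS : IsSymmGenSet (S : Set G))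
    {H : Type*} [NormedAddCommGroup H] [InnerProductSpace ℝ H]
    (π : G →* (H ≃ₗᵢ[ℝ] H)) (f : G → H)
    (hcocycle : ∀ x y : G, f (x * y) = π x (f y) + f x) :
    (∀ t : ℕ, 1 ≤ t →
      walkExp S (2 * t) (fun w => ‖f w‖ ^ 2) ≤ 2 * walkExp S t (fun w => ‖f w‖ ^ 2)) ∧
    (∀ k : ℕ,
      walkExp S (2 ^ k) (fun w => ‖f w‖ ^ 2) ≤ 2 ^ k * walkExp S 1 (fun w => ‖f w‖ ^ 2)) := by
  classical
  set F : G → ℝ := fun w => ‖f w‖ ^ 2 with hF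
  -- basic cocycle identities
  have hf1 : f 1 = 0 := by
    have h := hcocycle 1 1
    rw [mul_one, map_one] at h
    have h' : f 1 = f 1 + f 1 := by simpa using h
    have := left_eq_add.mp h'
    exact this
  have hfinv : ∀ x : G, π x⁻¹ (f x) = -(f x⁻¹) := by
    intro x
    have h := hcocycle x⁻¹ x
    rw [inv_mul_cancel, hf1] at h
    have : π x⁻¹ (f x) + f x⁻¹ = 0 := h.symm
    linear_combination (norm := abel) this
  have hkey : ∀ x y : G, ‖f (x * y)‖ ^ 2
      = ‖f x‖ ^ 2 + ‖f y‖ ^ 2 - 2 * ⟪f y, f x⁻¹⟫ := by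
    intro x y
    rw [hcocycle x y, norm_add_sq_real]
    have hnm : ‖(π x) (f y)‖ = ‖f y‖ := (π x).norm_map _
    have hinner : ⟪(π x) (f y), f x⟫ = -⟪f y, f x⁻¹⟫ := by
      have h1 : ⟪(π x) (f y), f x⟫ = ⟪f y, (π x).symm (f x)⟫ := by
        conv_lhs => rw [← (π x).apply_symm_apply (f x)]
        exact (π x).inner_map_map _ _
      have h2 : (π x).symm (f x) = π x⁻¹ (f x) := by
        rw [map_inv, LinearIsometryEquiv.coe_inv]
      rw [h1, h2, hfinv, inner_neg_right]
    rw [hnm, hinner]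
    ring
  -- part 1
  have part1 : ∀ t : ℕ, 1 ≤ t → walkExp S (2 * t) F ≤ 2 * walkExp S t F := by
    intro t ht
    rcases eq_or_ne S ∅ with hSe | hSe
    · have hE : IsEmpty {x // x ∈ S} := by
        subst hSe; exact ⟨fun x => absurd x.2 (Finset.notMem_empty _)⟩
      have hzero : ∀ u : ℕ, 1 ≤ u → walkExp S u F = 0 := by
        intro u hu
        have : IsEmpty (Fin u → {x // x ∈ S}) :=
          ⟨fun g => hE.false (g ⟨0, hu⟩)⟩
        unfold walkExp
        rw [Finset.univ_eq_empty, Finset.sum_empty, zero_div]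
      rw [hzero (2 * t) (by omega), hzero t ht]
      norm_num
    · have hc : (0 : ℝ) < (S.card : ℝ) := by
        have : S.Nonempty := Finset.nonempty_iff_ne_empty.mpr hSe
        exact_mod_cast Finset.card_pos.mpr this
      have hct : ((S.card : ℝ)) ^ t ≠ 0 := pow_ne_zero _ hc.ne'
      set T := {x // x ∈ S}
      set B : ℝ := ∑ σ : Fin t → T, F (wprod σ) with hB
      set A : H := ∑ σ : Fin t → T, f (wprod σ) with hA
      -- the split of the 2t-walk
      have hsplit : ∑ ρ : Fin (t + t) → T, F (wprod ρ)
          = ∑ σ : Fin t → T, ∑ τ : Fin t → T, F (wprod σ * wprod τ) := by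
        have h := Fintype.sum_equiv (Fin.appendEquiv (α := T) t t)
          (fun p : (Fin t → T) × (Fin t → T) => F (wprod p.1 * wprod p.2))
          (fun ρ => F (wprod ρ))
          (fun p => by
            show F (wprod p.1 * wprod p.2) = F (wprod (Fin.append p.1 p.2))
            rw [wprod_append])
        rw [← h, Fintype.sum_prod_type]
      -- symmetry: inverse of the walk has the same distribution
      have hinv_sum : ∑ σ : Fin t → T, f ((wprod σ)⁻¹) = A := by
        rw [hA]
        have hmem : ∀ (σ : Fin t → T) (i : Fin t), ((σ i : G))⁻¹ ∈ S := by
          intro σ i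
          exact hS.1 _ (σ i).2
        set ι : (Fin t → T) → (Fin t → T) :=
          fun σ i => ⟨((σ i.rev : G))⁻¹, hmem σ i.rev⟩ with hι
        have hinvol : Function.Involutive ι := by
          intro σ
          funext i
          simp [hι, Fin.rev_rev]
        refine Fintype.sum_bijective ι hinvol.bijective _ _ ?_
        intro σ
        congr 1
        have := ofFn_rev_inv_prod t (fun i => (σ i : G))
        unfold wprod
        rw [← this]
      -- the double-sum computation
      have hcardT : (Fintype.card (Fin t → T) : ℝ) = (S.card : ℝ) ^ t := by
        rw [Fintype.card_fun, Fintype.card_coe, Fintype.card_fin]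
        push_cast
        ring
      have hsum : ∑ σ : Fin t → T, ∑ τ : Fin t → T, F (wprod σ * wprod τ)
          = (S.card : ℝ) ^ t * B + (S.card : ℝ) ^ t * B - 2 * ‖A‖ ^ 2 := by
        have hpt : ∀ σ : Fin t → T, ∑ τ : Fin t → T, F (wprod σ * wprod τ)
            = (S.card : ℝ) ^ t * F (wprod σ) + B - 2 * ⟪A, f ((wprod σ)⁻¹)⟫ := by
          intro σ
          have : ∀ τ : Fin t → T, F (wprod σ * wprod τ)
              = F (wprod σ) + F (wprod τ) - 2 * ⟪f (wprod τ), f ((wprod σ)⁻¹)⟫ := by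
            intro τ
            exact hkey (wprod σ) (wprod τ)
          rw [Finset.sum_congr rfl (fun τ _ => this τ)]
          rw [Finset.sum_sub_distrib, Finset.sum_add_distrib, Finset.sum_const,
            ← Finset.mul_sum, ← sum_inner]
          simp only [nsmul_eq_mul, Finset.card_univ]
          rw [hcardT, ← hB, ← hA]
          try ring
        rw [Finset.sum_congr rfl (fun σ _ => hpt σ)]
        rw [Finset.sum_sub_distrib, Finset.sum_add_distrib, Finset.sum_const,
          ← Finset.mul_sum, ← Finset.mul_sum, ← inner_sum, hinv_sum,
          real_inner_self_eq_norm_sq]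
        simp only [nsmul_eq_mul, Finset.card_univ]
        rw [hcardT, ← hB]
        try ring
      have hle : ∑ ρ : Fin (t + t) → T, F (wprod ρ) ≤ 2 * ((S.card : ℝ) ^ t * B) := by
        rw [hsplit, hsum]
        nlinarith [sq_nonneg ‖A‖]
      have hW2t : walkExp S (2 * t) F
          = (∑ ρ : Fin (t + t) → T, F (wprod ρ)) / (S.card : ℝ) ^ (t + t) := by
        rw [two_mul]
        rfl
      have hWt : walkExp S t F = B / (S.card : ℝ) ^ t := rfl
      rw [hW2t, hWt]
      calc (∑ ρ : Fin (t + t) → T, F (wprod ρ)) / (S.card : ℝ) ^ (t + t)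
          ≤ (2 * ((S.card : ℝ) ^ t * B)) / (S.card : ℝ) ^ (t + t) := by
            gcongr
        _ = 2 * (B / (S.card : ℝ) ^ t) := by
            rw [pow_add]
            field_simp
  refine ⟨part1, ?_⟩
  intro k
  induction k with
  | zero => simp
  | succ k ih =>
    have h1 : (2 : ℕ) ^ (k + 1) = 2 * 2 ^ k := by ring
    rw [h1]
    calc walkExp S (2 * 2 ^ k) F ≤ 2 * walkExp S (2 ^ k) F :=
          part1 _ Nat.one_le_two_pow
      _ ≤ 2 * (2 ^ k * walkExp S 1 F) := by linarith
      _ = 2 ^ (k + 1) * walkExp S 1 F := by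
          ring
end

section
/- There exists a constant D ≥ 1 such that for every n ≥ 1, the cyclic lamplighter group C₂≀C_n (with the word metric ρ from its canonical generating set, where C₂ is generated by its nonidentity element and C_n by {±1}) admits an embedding f : C₂≀C_n → L₁ satisfying ρ(u,v) ≤ ‖f(u)−f(v)‖₁ ≤ D·ρ(u,v) for all u,v ∈ C₂≀C_n. In particular, the groups C₂≀C_n embed into L₁ with distortion bounded independently of n. -/
open MeasureTheory ENNReal

/-- There is a Lipschitz embedding of `(G, d)` into an `L_p` space with compression `α`. -/
def HasCompressionLp {G : Type*} (p : ℝ≥0∞) (d : G → G → ℕ) (α : ℝ) : Prop :=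
  ∃ (Ω : Type) (_ : MeasurableSpace Ω) (μ : Measure Ω) (f : G → Lp ℝ p μ) (c C : ℝ),
    0 < c ∧ 0 < C ∧
      (∀ x y : G, x ≠ y → c * (d x y : ℝ) ^ α ≤ ‖f x - f y‖) ∧
      (∀ x y : G, ‖f x - f y‖ ≤ C * (d x y : ℝ))

/-- The `L_p` compression exponent `α_p^*` of `(G, d)`; for `p = 2` this is the Hilbert
compression exponent `α^*`. -/
noncomputable def compressionExp {G : Type*} (p : ℝ≥0∞) (d : G → G → ℕ) : ℝ :=
  sSup {α : ℝ | 0 ≤ α ∧ HasCompressionLp p d α}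
/-- The (restricted) wreath product `G ≀ H`: pairs `(f, x)` of a finitely supported function
`f : H → G` and an element `x ∈ H`, with product `(f,x)(g,y) = (z ↦ f(z)g(x⁻¹z), xy)`. -/
@[ext]
structure Wreath (G H : Type*) [One G] where
  toFun : H → G
  pos : H
  finsupp : (Function.mulSupport toFun).Finite

namespace Wreath

variable {G H : Type*} [Group G] [Group H]

instance : One (Wreath G H) :=
  ⟨⟨fun _ => 1, 1, by
    have : Function.mulSupport (fun _ : H => (1 : G)) = ∅ :=
      Function.mulSupport_eq_empty_iff.mpr rfl
    rw [this]; exact Set.finite_empty⟩⟩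

instance : Mul (Wreath G H) :=
  ⟨fun a b =>
    ⟨fun z => a.toFun z * b.toFun (a.pos⁻¹ * z), a.pos * b.pos, by
      have h2 : (Function.mulSupport fun z => b.toFun (a.pos⁻¹ * z)).Finite := by
        have : (Function.mulSupport fun z => b.toFun (a.pos⁻¹ * z)) =
            (fun z : H => a.pos⁻¹ * z) ⁻¹' Function.mulSupport b.toFun :=
          Function.mulSupport_comp_eq_preimage _ _
        rw [this]
        exact b.finsupp.preimage (mul_right_injective a.pos⁻¹).injOn
      exact (a.finsupp.union h2).subset (Function.mulSupport_mul _ _)⟩⟩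

instance : Inv (Wreath G H) :=
  ⟨fun a =>
    ⟨fun z => (a.toFun (a.pos * z))⁻¹, a.pos⁻¹, by
      have : (Function.mulSupport fun z => (a.toFun (a.pos * z))⁻¹) =
          (fun z : H => a.pos * z) ⁻¹' Function.mulSupport a.toFun := by
        ext z
        simp only [Function.mem_mulSupport, ne_eq, inv_eq_one, Set.mem_preimage]
      rw [this]
      exact a.finsupp.preimage (mul_right_injective a.pos).injOn⟩⟩

@[simp] lemma mul_toFun (a b : Wreath G H) :
    (a * b).toFun = fun z => a.toFun z * b.toFun (a.pos⁻¹ * z) := rfl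

@[simp] lemma mul_pos' (a b : Wreath G H) : (a * b).pos = a.pos * b.pos := rfl

@[simp] lemma one_toFun : (1 : Wreath G H).toFun = fun _ => (1 : G) := rfl

@[simp] lemma one_pos' : (1 : Wreath G H).pos = (1 : H) := rfl

@[simp] lemma inv_toFun (a : Wreath G H) :
    (a⁻¹).toFun = fun z => (a.toFun (a.pos * z))⁻¹ := rfl

@[simp] lemma inv_pos' (a : Wreath G H) : (a⁻¹).pos = a.pos⁻¹ := rfl

instance : Group (Wreath G H) where
  mul_assoc a b c := by
    refine Wreath.ext ?_ ?_
    · funext z; simp [mul_assoc, mul_inv_rev]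
    · simp [mul_assoc]
  one_mul a := by
    refine Wreath.ext ?_ ?_
    · funext z; simp
    · simp
  mul_one a := by
    refine Wreath.ext ?_ ?_
    · funext z; simp
    · simp
  inv_mul_cancel a := by
    refine Wreath.ext ?_ ?_
    · funext z; simp
    · simp

end Wreath

open Classical in
/-- The canonical generating set of the wreath product `G ≀ H` associated with a generating
set `S` of `G` and a generating set `T` of `H`: the elements `(𝟙, t)` for `t ∈ T` and
`(δ_s, e_H)` for `s ∈ S`, where `δ_s` takes the value `s` at `e_H` and `e_G` elsewhere. -/
noncomputable def wreathGens {G H : Type*} [Group G] [Group H] (S : Set G) (T : Set H) :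
    Set (Wreath G H) :=
  {w | w.toFun = (fun _ => 1) ∧ w.pos ∈ T} ∪
    {w | w.pos = 1 ∧ ∃ s ∈ S, w.toFun = fun z => if z = 1 then s else 1}

/-- The generating set `{±1}` of the (multiplicative) group of integers. -/
def zGens : Set (Multiplicative ℤ) :=
  {Multiplicative.ofAdd 1, Multiplicative.ofAdd (-1)}

/-- The generating set of the cyclic group `C₂` consisting of its nonidentity element. -/
def c2Gens : Set (Multiplicative (ZMod 2)) := {Multiplicative.ofAdd 1}

/-- The generating set `{±1}` of the cyclic group `C_n`. -/
def cycGens (n : ℕ) : Set (Multiplicative (ZMod n)) :=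
  {Multiplicative.ofAdd 1, Multiplicative.ofAdd (-1)}

set_option linter.unusedSectionVars false


section Cyc
variable {n : ℕ} [NeZero n]

/-- distance to 0 on the cycle -/
def cd0 (z : ZMod n) : ℕ := min z.val (-z).val

lemma cd0_le_val (z : ZMod n) : cd0 z ≤ z.val := min_le_left _ _

lemma cd0_neg (z : ZMod n) : cd0 (-z) = cd0 z := by
  simp [cd0, min_comm]

lemma cast_val (z : ZMod n) : ((z.val : ℕ) : ZMod n) = z := ZMod.natCast_rightInverse z

lemma cd0_cast_le (m : ℕ) : cd0 ((m : ℕ) : ZMod n) ≤ m :=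
  (cd0_le_val _).trans ((ZMod.val_natCast n m).le.trans (Nat.mod_le _ _))

lemma sub_eq_cast (x y : ZMod n) (h : y.val ≤ x.val) :
    x - y = ((x.val - y.val : ℕ) : ZMod n) := by
  rw [Nat.cast_sub h, cast_val, cast_val]

lemma cd0_sub_le_dist (a b : ZMod n) : cd0 (a - b) ≤ Nat.dist a.val b.val := by
  rcases le_total b.val a.val with h | h
  · rw [sub_eq_cast a b h]
    exact (cd0_cast_le _).trans (by simp only [Nat.dist]; omega)
  · rw [show a - b = -(b - a) by ring, cd0_neg, sub_eq_cast b a h]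
    exact (cd0_cast_le _).trans (by simp only [Nat.dist]; omega)

lemma cd0_add_le' (x y : ZMod n) : cd0 (x + y) ≤ x.val + y.val :=
  (cd0_le_val _).trans (ZMod.val_add_le x y)

lemma cd0_add_le (x y : ZMod n) : cd0 (x + y) ≤ cd0 x + cd0 y := by
  have hxy : cd0 (x + y) ≤ x.val + (-y).val := by
    rw [show x + y = x - -y by ring]
    exact (cd0_sub_le_dist x (-y)).trans (by simp only [Nat.dist]; omega)
  have hyx : cd0 (x + y) ≤ (-x).val + y.val := by
    rw [show x + y = y - -x by ring]
    exact (cd0_sub_le_dist y (-x)).trans (by simp only [Nat.dist]; omega)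
  have hnn : cd0 (x + y) ≤ (-x).val + (-y).val := by
    rw [show x + y = -(-x + -y) by ring, cd0_neg]
    exact cd0_add_le' (-x) (-y)
  rcases min_cases x.val (-x).val with ⟨hx, _⟩ | ⟨hx, _⟩ <;>
    rcases min_cases y.val (-y).val with ⟨hy, _⟩ | ⟨hy, _⟩ <;>
      unfold cd0 <;> rw [hx, hy]
  · exact cd0_add_le' x y
  · exact hxy
  · exact hyx
  · exact hnn

lemma cd0_one_le : cd0 (1 : ZMod n) ≤ 1 := by
  simpa using cd0_cast_le (n := n) 1

lemma cd0_le_half (z : ZMod n) : 2 * cd0 z ≤ n := by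
  rcases eq_or_ne z 0 with rfl | hz
  · simp [cd0]
  · have hlt := ZMod.val_lt z
    have hv : z.val ≠ 0 := fun h => hz (by rw [← cast_val z, h]; simp)
    have h1 : z.val + (-z).val = n := by
      rw [ZMod.neg_val, if_neg hz]
      omega
    unfold cd0; omega

end Cyc

open Multiplicative

section Setup
variable (n : ℕ) [NeZero n]

abbrev Gn := Wreath (Multiplicative (ZMod 2)) (Multiplicative (ZMod n))

variable {n}

def tau (p : Multiplicative (ZMod n)) : Gn n :=
  ⟨fun _ => 1, p, by
    have h : (Function.mulSupport fun _ : Multiplicative (ZMod n) =>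
        (1 : Multiplicative (ZMod 2))) = ∅ := Function.mulSupport_eq_empty_iff.mpr rfl
    rw [h]; exact Set.finite_empty⟩

lemma tau_toFun (p : Multiplicative (ZMod n)) (z) : (tau p : Gn n).toFun z = 1 := rfl

lemma tau_one : (tau 1 : Gn n) = 1 := Wreath.ext rfl rfl

def sig : Multiplicative (ZMod 2) := ofAdd 1

def gT : Gn n :=
  ⟨fun z => if z = 1 then sig else 1, 1, by
    apply Set.Finite.subset (Set.finite_singleton (1 : Multiplicative (ZMod n)))
    intro z hz
    simp only [Function.mem_mulSupport] at hz
    by_contra h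
    exact hz (if_neg h)⟩

def gP : Gn n := tau (ofAdd 1)
def gM : Gn n := tau (ofAdd (-1))

lemma gP_mem : (gP : Gn n) ∈ wreathGens c2Gens (cycGens n) := by
  left; exact ⟨rfl, Or.inl rfl⟩

lemma gM_mem : (gM : Gn n) ∈ wreathGens c2Gens (cycGens n) := by
  left; exact ⟨rfl, Or.inr rfl⟩

lemma gT_mem : (gT : Gn n) ∈ wreathGens c2Gens (cycGens n) := by
  right
  refine ⟨rfl, sig, rfl, ?_⟩
  funext z
  by_cases h : z = 1 <;> simp [gT, sig, h]

lemma gen_cases {s : Gn n} (hs : s ∈ wreathGens c2Gens (cycGens n)) :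
    s = gP ∨ s = gM ∨ s = gT := by
  rcases hs with ⟨h1, h2⟩ | ⟨h1, s', hs', h2⟩
  · rcases h2 with h2 | h2
    · left; exact Wreath.ext h1 h2
    · right; left; exact Wreath.ext h1 h2
  · right; right
    refine Wreath.ext ?_ h1
    rw [h2]
    rcases hs' with rfl
    funext z
    by_cases h : z = 1 <;> simp [gT, sig, h]

lemma tau_mul (p q : Multiplicative (ZMod n)) : (tau p : Gn n) * tau q = tau (p * q) := by
  refine Wreath.ext ?_ rfl
  funext z; exact mul_one _

lemma tau_prod_replicate (p : Multiplicative (ZMod n)) (k : ℕ) :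
    (List.replicate k (tau p : Gn n)).prod = tau (p ^ k) := by
  induction k with
  | zero => rw [List.replicate_zero, List.prod_nil, pow_zero]; exact tau_one.symm
  | succ k ih =>
    rw [List.replicate_succ, List.prod_cons, ih, tau_mul, ← pow_succ']

/-- explicit walk word for displacement `z` -/
def walkList (z : ZMod n) : List (Gn n) :=
  if z.val ≤ (-z).val then List.replicate z.val gP else List.replicate (-z).val gM

lemma walkList_length (z : ZMod n) : (walkList z).length = cd0 z := by
  unfold walkList cd0
  split <;> simp <;> omega

lemma walkList_mem (z : ZMod n) : ∀ s ∈ walkList z, s ∈ wreathGens c2Gens (cycGens n) := by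
  unfold walkList
  intro s hs
  split at hs <;> rw [List.eq_of_mem_replicate hs]
  exacts [gP_mem, gM_mem]

lemma ofAdd_pow (a : ZMod n) (k : ℕ) : (ofAdd a) ^ k = ofAdd ((k : ZMod n) * a) := by
  induction k with
  | zero => simp
  | succ k ih => rw [pow_succ, ih, ← ofAdd_add]; push_cast; ring_nf

lemma walkList_prod (z : ZMod n) : (walkList z).prod = tau (ofAdd z) := by
  unfold walkList
  split
  · rw [show (gP : Gn n) = tau (ofAdd 1) from rfl, tau_prod_replicate]
    congr 1
    rw [ofAdd_pow, mul_one, cast_val]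
  · rw [show (gM : Gn n) = tau (ofAdd (-1)) from rfl, tau_prod_replicate]
    congr 1
    rw [ofAdd_pow]
    congr 1
    rw [cast_val]; ring

end Setup

section Word
variable {n : ℕ} [NeZero n]

def lam (q : ZMod n) : Gn n := tau (ofAdd q) * gT * tau (ofAdd (-q))

lemma lam_toFun (q : ZMod n) (z) :
    (lam q).toFun z = if z = ofAdd q then sig else 1 := by
  show (fun z => _) z = _
  simp only [lam, Wreath.mul_toFun, Wreath.mul_pos']
  show (1 : Multiplicative (ZMod 2)) * _ * 1 = _
  rw [one_mul, mul_one]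
  show (if (ofAdd q)⁻¹ * z = 1 then sig else 1) = _
  by_cases hz : z = ofAdd q
  · rw [if_pos hz, if_pos (by rw [hz]; simp)]
  · rw [if_neg hz, if_neg (fun h => hz (by rwa [inv_mul_eq_one, eq_comm] at h))]

lemma lam_pos (q : ZMod n) : (lam q).pos = 1 := by
  show (ofAdd q) * 1 * (ofAdd (-q)) = 1
  rw [mul_one, ← ofAdd_add]
  simp

lemma tau_inv (p : Multiplicative (ZMod n)) : (tau p : Gn n)⁻¹ = tau p⁻¹ := by
  rw [inv_eq_iff_mul_eq_one, tau_mul, mul_inv_cancel]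
  exact tau_one

/-- travel cost of a route -/
def cost : ZMod n → List (ZMod n) → ZMod n → ℕ
  | a, [], p => cd0 (p - a)
  | a, q :: Q, p => cd0 (q - a) + cost q Q p

lemma cost_triangle (a b : ZMod n) (Q : List (ZMod n)) (p : ZMod n) :
    cost a Q p ≤ cd0 (b - a) + cost b Q p := by
  cases Q with
  | nil =>
    show cd0 (p - a) ≤ cd0 (b - a) + cd0 (p - b)
    calc cd0 (p - a) = cd0 ((b - a) + (p - b)) := by ring_nf
    _ ≤ _ := cd0_add_le _ _
  | cons q Q =>
    show cd0 (q - a) + cost q Q p ≤ cd0 (b - a) + (cd0 (q - b) + cost q Q p)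
    have : cd0 (q - a) ≤ cd0 (b - a) + cd0 (q - b) := by
      calc cd0 (q - a) = cd0 ((b - a) + (q - b)) := by ring_nf
      _ ≤ _ := cd0_add_le _ _
    omega

lemma cost_sublist {l Q : List (ZMod n)} (h : l.Sublist Q) :
    ∀ a p, cost a l p ≤ cost a Q p := by
  induction h with
  | slnil => intro a p; exact le_refl _
  | cons q h ih =>
    intro a p
    exact (ih a p).trans (cost_triangle a q _ p)
  | cons_cons q h ih =>
    intro a p
    show cd0 (q - a) + _ ≤ cd0 (q - a) + _
    exact Nat.add_le_add_left (ih q p) _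

lemma cost_le_of_chain : ∀ (a : ZMod n) (Q : List (ZMod n)) (p : ZMod n),
    List.Chain (fun x y => cd0 (y - x) ≤ 1) a Q →
    cost a Q p ≤ Q.length + cd0 (p - Q.getLastD a)
  | a, [], p, _ => by simp [cost]
  | a, q :: Q, p, h => by
    rcases List.chain_cons.mp h with ⟨h1, h2⟩
    have ih := cost_le_of_chain q Q p h2
    show cd0 (q - a) + cost q Q p ≤ (q :: Q).length + cd0 (p - (q :: Q).getLastD a)
    rw [List.getLastD_cons]
    simp only [List.length_cons]
    omega

def buildW : ZMod n → List (ZMod n) → ZMod n → List (Gn n)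
  | a, [], p => walkList (p - a)
  | a, q :: Q, p => walkList (q - a) ++ gT :: buildW q Q p

lemma buildW_mem (a : ZMod n) (l : List (ZMod n)) (p : ZMod n) :
    ∀ s ∈ buildW a l p, s ∈ wreathGens c2Gens (cycGens n) := by
  induction l generalizing a with
  | nil => exact walkList_mem _
  | cons q Q ih =>
    intro s hs
    rcases List.mem_append.mp hs with h | h
    · exact walkList_mem _ s h
    · rcases List.mem_cons.mp h with rfl | h
      · exact gT_mem
      · exact ih q s h

lemma buildW_length (a : ZMod n) (l : List (ZMod n)) (p : ZMod n) :
    (buildW a l p).length = cost a l p + l.length := by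
  induction l generalizing a with
  | nil => simp [buildW, cost, walkList_length]
  | cons q Q ih =>
    simp only [buildW, cost, List.length_append, List.length_cons, walkList_length, ih]
    omega

lemma buildW_prod (a : ZMod n) (l : List (ZMod n)) (p : ZMod n) :
    (buildW a l p).prod = (tau (ofAdd a))⁻¹ * (l.map lam).prod * tau (ofAdd p) := by
  induction l generalizing a with
  | nil =>
    show (walkList (p - a)).prod = _
    rw [walkList_prod, List.map_nil, List.prod_nil, mul_one, tau_inv, tau_mul]
    congr 1
    rw [← ofAdd_neg, ← ofAdd_add]
    congr 1
    ring
  | cons q Q ih =>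
    show (walkList (q - a) ++ gT :: buildW q Q p).prod = _
    have e1 : q - a = -a + q := by ring
    have key : (tau (ofAdd (q - a)) : Gn n) = (tau (ofAdd a))⁻¹ * tau (ofAdd q) := by
      rw [tau_inv, ← ofAdd_neg, tau_mul, ← ofAdd_add, e1]
    rw [List.prod_append, List.prod_cons, walkList_prod, ih, List.map_cons,
      List.prod_cons, key]
    simp only [lam, tau_inv, ← ofAdd_neg, mul_assoc]

lemma lam_list_prod (l : List (ZMod n)) (hnd : l.Nodup) :
    ((l.map lam).prod : Gn n) =
      ⟨fun z => if toAdd z ∈ l then sig else 1, 1, Set.toFinite _⟩ := by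
  induction l with
  | nil =>
    refine (Wreath.ext ?_ ?_).symm
    · funext z; simp
    · rfl
  | cons q Q ih =>
    rcases List.nodup_cons.mp hnd with ⟨hq, hQ⟩
    rw [List.map_cons, List.prod_cons, ih hQ]
    refine Wreath.ext ?_ ?_
    · funext z
      show (lam q).toFun z * (if toAdd ((lam q).pos⁻¹ * z) ∈ Q then sig else 1) =
        (if toAdd z ∈ q :: Q then sig else 1)
      rw [lam_pos, inv_one, one_mul, lam_toFun]
      by_cases hz : z = ofAdd q
      · rw [if_pos hz]
        rw [show toAdd z = q from by rw [hz]; rfl, if_neg hq,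
          if_pos (List.mem_cons_self (a := q) (l := Q)), mul_one]
      · rw [if_neg hz, one_mul]
        have hne : toAdd z ≠ q := fun h => hz (by rw [← h, ofAdd_toAdd])
        simp [List.mem_cons, hne]
    · show (lam q).pos * 1 = 1
      rw [lam_pos, mul_one]

end Word

section Path
variable {n : ℕ} [NeZero n]

lemma cd0_zero : cd0 (0 : ZMod n) = 0 := by simp [cd0]

lemma two_cases (x : Multiplicative (ZMod 2)) : x = 1 ∨ x = sig := by
  revert x; decide

def path (M : ℕ) (s : ℕ) : ZMod n :=
  (Int.cast ((if s ≤ M then (s : ℤ) else 2*(M:ℤ) - (s:ℤ)) : ℤ) : ZMod n)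

lemma cd0_intCast_one : cd0 (((1:ℤ) : ZMod n)) ≤ 1 := by
  rw [Int.cast_one]; exact cd0_one_le

lemma path_step (M s : ℕ) : cd0 (path M (s+1) - (path M s : ZMod n)) ≤ 1 := by
  have key : ∀ e : ℤ, e = 1 ∨ e = -1 → cd0 ((e : ZMod n)) ≤ 1 := by
    rintro e (rfl | rfl)
    · exact cd0_intCast_one
    · rw [Int.cast_neg, cd0_neg]; exact cd0_intCast_one
  unfold path
  rw [← Int.cast_sub]
  by_cases h1 : s + 1 ≤ M
  · rw [if_pos h1, if_pos (by omega)]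
    exact key _ (Or.inl (by push_cast; ring))
  · by_cases h2 : s ≤ M
    · have hs : s = M := by omega
      rw [if_neg h1, if_pos h2]
      exact key _ (Or.inr (by subst hs; push_cast; ring))
    · rw [if_neg h1, if_neg h2]
      exact key _ (Or.inr (by push_cast; ring))

lemma path_chain (M : ℕ) : ∀ (m k : ℕ),
    List.Chain (fun x y => cd0 (y - x) ≤ 1) ((path M k : ZMod n))
      ((List.range' (k+1) m).map (path M))
  | 0, k => by simp; constructor
  | m+1, k => by
    rw [List.range'_succ, List.map_cons]
    exact List.Chain.cons (path_step M k) (path_chain M m (k+1))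

lemma getLastD_map_range' {α : Type*} (f : ℕ → α) :
    ∀ (m s : ℕ) (d : α), ((List.range' s m).map f).getLastD d =
      if m = 0 then d else f (s + m - 1)
  | 0, s, d => by simp
  | m+1, s, d => by
    rw [List.range'_succ, List.map_cons, List.getLastD_cons,
      getLastD_map_range' f m (s+1)]
    cases m with
    | zero => simp
    | succ m => simp; congr 1; omega

open Classical in
lemma word_main (g0 : Gn n) :
    ∃ l : List (Gn n), (∀ s ∈ l, s ∈ wreathGens c2Gens (cycGens n)) ∧ g0 = l.prod ∧
      l.length ≤ (Finset.univ.filter fun q : ZMod n => g0.toFun (ofAdd q) ≠ 1).card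
        + 4 * ((Finset.univ.filter fun q : ZMod n => g0.toFun (ofAdd q) ≠ 1).sup cd0)
        + 1 + cd0 (toAdd g0.pos) := by
  set A := (Finset.univ.filter fun q : ZMod n => g0.toFun (ofAdd q) ≠ 1) with hA
  set M := A.sup cd0 with hM
  set M' := min M (n - 1 - M) with hM'
  set L := 2 * M + M' with hL
  set Q := (List.range (L+1)).map (path M) with hQ
  set l0 := (Q.filter (fun q => g0.toFun (ofAdd q) ≠ 1)).dedup with hl0
  set ppos := (toAdd g0.pos : ZMod n) with hppos
  have hsub : l0.Sublist Q := (List.dedup_sublist _).trans List.filter_sublist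
  have hnd : l0.Nodup := List.nodup_dedup _
  have hmemiff : ∀ q : ZMod n, q ∈ l0 ↔ (q ∈ Q ∧ g0.toFun (ofAdd q) ≠ 1) := by
    intro q
    rw [hl0, List.mem_dedup, List.mem_filter]
    simp
  have cover : ∀ q ∈ A, q ∈ Q := by
    intro q hq
    have hcd : cd0 q ≤ M := Finset.le_sup hq
    rw [hQ]
    by_cases hv : q.val ≤ M
    · refine List.mem_map.mpr ⟨q.val, List.mem_range.mpr (by omega), ?_⟩
      unfold path
      rw [if_pos hv]
      push_cast
      exact cast_val q
    · have hnv : (-q).val ≤ M := by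
        have h := hcd
        simp only [cd0] at h
        omega
      have hq0 : q ≠ 0 := by
        intro h; rw [h] at hv; simp [ZMod.val_zero] at hv
      have hvne : (-q).val ≠ 0 := by
        intro h
        have : (-q) = 0 := by rw [← cast_val (-q), h]; simp
        exact hq0 (by rwa [neg_eq_zero] at this)
      have hvltM' : (-q).val ≤ M' := by
        have h1 : (-q).val = n - q.val := by rw [ZMod.neg_val, if_neg hq0]
        have h2 : q.val < n := ZMod.val_lt q
        rw [hM']
        omega
      refine List.mem_map.mpr ⟨2*M + (-q).val, List.mem_range.mpr (by omega), ?_⟩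
      unfold path
      rw [if_neg (by omega)]
      rw [show 2*(M:ℤ) - ((2*M + (-q).val : ℕ) : ℤ) = -(((-q).val : ℕ) : ℤ) by
        push_cast; ring]
      push_cast
      rw [cast_val, neg_neg]
  have hlen0 : l0.length ≤ A.card := by
    rw [← List.toFinset_card_of_nodup hnd]
    apply Finset.card_le_card
    intro q hq
    rw [List.mem_toFinset] at hq
    rw [hA]
    simp only [Finset.mem_filter, Finset.mem_univ, true_and]
    exact ((hmemiff q).mp hq).2
  have hchain : List.Chain (fun x y : ZMod n => cd0 (y - x) ≤ 1) 0 Q := by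
    rw [hQ, List.range_eq_range']
    rw [show List.range' 0 (L+1) = 0 :: List.range' 1 L from by rw [List.range'_succ]]
    rw [List.map_cons]
    refine List.Chain.cons ?_ (path_chain M L 0)
    unfold path
    rw [if_pos (by omega)]
    simp [cd0_zero]
  refine ⟨buildW 0 l0 ppos, buildW_mem _ _ _, ?_, ?_⟩
  · rw [buildW_prod, lam_list_prod l0 hnd]
    have h0 : (tau (ofAdd (0 : ZMod n)) : Gn n) = 1 := tau_one
    rw [h0, inv_one, one_mul]
    refine Wreath.ext (funext fun z => ?_) ?_
    · rw [Wreath.mul_toFun]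
      show g0.toFun z = (if toAdd z ∈ l0 then sig else 1) * (1 : Multiplicative (ZMod 2))
      rw [mul_one]
      by_cases h : g0.toFun z = 1
      · rw [h, if_neg ?_]
        intro hmem
        exact ((hmemiff _).mp hmem).2 (by rwa [ofAdd_toAdd])
      · have hzA : toAdd z ∈ A := by
          rw [hA]
          simp only [Finset.mem_filter, Finset.mem_univ, true_and]
          rwa [ofAdd_toAdd]
        rw [if_pos ((hmemiff _).mpr ⟨cover _ hzA, by rwa [ofAdd_toAdd]⟩)]
        rcases two_cases (g0.toFun z) with h1 | h1
        · exact absurd h1 h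
        · exact h1
    · show g0.pos = 1 * ofAdd ppos
      rw [one_mul, hppos, ofAdd_toAdd]
  · rw [buildW_length]
    have hc1 : cost 0 l0 ppos ≤ cost 0 Q ppos := cost_sublist hsub 0 ppos
    have hc2 : cost 0 Q ppos ≤ Q.length + cd0 (ppos - Q.getLastD 0) :=
      cost_le_of_chain 0 Q ppos hchain
    have hQlen : Q.length = L + 1 := by rw [hQ]; simp
    have hlast : Q.getLastD 0 = path M L := by
      rw [hQ, List.range_eq_range', getLastD_map_range']
      rw [if_neg (by omega)]
      congr 1
      omega
    have hpl : cd0 (ppos - path M L) ≤ M' + cd0 ppos := by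
      have h1 : (path M L : ZMod n) = -((M' : ℕ) : ZMod n) := by
        unfold path
        by_cases hLM : L ≤ M
        · rw [if_pos hLM]
          have h3 : M' = 0 := by omega
          rw [show L = 0 from by omega]
          rw [h3]
          simp
        · rw [if_neg hLM]
          rw [show 2*(M:ℤ) - (L:ℤ) = -((M' : ℕ) : ℤ) from by rw [hL]; push_cast; ring]
          push_cast
          ring
      rw [h1]
      rw [show ppos - -((M':ℕ):ZMod n) = ((M':ℕ):ZMod n) + ppos from by ring]
      have h2 := cd0_add_le (((M':ℕ):ZMod n)) ppos
      have h3 := cd0_cast_le (n := n) M'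
      omega
    rw [hlast, hQlen] at hc2
    omega

section Emb
variable {n : ℕ} [NeZero n]
open Classical

abbrev Om (n : ℕ) : Type := ZMod n × Bool × ZMod n × (ZMod n → ZMod 2)

def XX (u : Gn n) : ZMod n → ZMod 2 := fun s => toAdd (u.toFun (ofAdd s))
def PX (u : Gn n) : ZMod n := toAdd u.pos
def lpos (c : ZMod n) (u : Gn n) : ℕ := (PX u - c).val

def msk (c : ZMod n) (b : Bool) (t : ℕ) (Y : ZMod n → ZMod 2) : ZMod n → ZMod 2 :=
  fun s => match b with
    | false => if (s - c).val < t then Y s else 0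
    | true => if n - t ≤ (s - c).val then Y s else 0

def actv (c : ZMod n) (b : Bool) (t : ℕ) (u : Gn n) : Prop :=
  t ≤ cond b (n - lpos c u) (lpos c u)

noncomputable def vl (u : Gn n) : Om n → ℝ := fun ω =>
  if actv ω.1 ω.2.1 (ω.2.2.1.val + 1) u ∧
      ω.2.2.2 = msk ω.1 ω.2.1 (ω.2.2.1.val + 1) (XX u) then 1 else 0

noncomputable def inn (u v : Gn n) (c : ZMod n) (b : Bool) (tz : ZMod n) : ℝ :=
  ∑ ξ : ZMod n → ZMod 2, |vl u (c, b, tz, ξ) - vl v (c, b, tz, ξ)|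

noncomputable def scol (u v : Gn n) (c : ZMod n) : ℝ :=
  ∑ p : Bool × ZMod n, inn u v c p.1 p.2

lemma vl_eq (u : Gn n) (c b tz ξ) : vl u (c, b, tz, ξ) =
    if actv c b (tz.val+1) u ∧ ξ = msk c b (tz.val+1) (XX u) then 1 else 0 := rfl

lemma tot_eq (u v : Gn n) :
    ∑ ω : Om n, |vl u ω - vl v ω| = ∑ c : ZMod n, scol u v c := by
  simp only [Fintype.sum_prod_type, scol, inn]

lemma inn_nonneg (u v : Gn n) (c b tz) : 0 ≤ inn u v c b tz :=
  Finset.sum_nonneg fun _ _ => abs_nonneg _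

lemma sum_indicator (A : Prop) [Decidable A] (m : ZMod n → ZMod 2) :
    ∑ ξ : ZMod n → ZMod 2, (if A ∧ ξ = m then (1:ℝ) else 0) = if A then 1 else 0 := by
  by_cases hA : A
  · simp only [hA, true_and]
    rw [Finset.sum_ite_eq' Finset.univ m (fun _ => (1:ℝ))]
    simp
  · simp [hA]

lemma inn_le_two (u v : Gn n) (c b tz) : inn u v c b tz ≤ 2 := by
  unfold inn
  have h : ∀ ξ : ZMod n → ZMod 2, |vl u (c,b,tz,ξ) - vl v (c,b,tz,ξ)| ≤
      vl u (c,b,tz,ξ) + vl v (c,b,tz,ξ) := by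
    intro ξ
    rw [vl_eq, vl_eq]
    split <;> split <;> norm_num
  calc ∑ ξ : ZMod n → ZMod 2, |vl u (c,b,tz,ξ) - vl v (c,b,tz,ξ)|
      ≤ ∑ ξ : ZMod n → ZMod 2, (vl u (c,b,tz,ξ) + vl v (c,b,tz,ξ)) :=
        Finset.sum_le_sum fun ξ _ => h ξ
    _ = (if actv c b (tz.val+1) u then (1:ℝ) else 0)
        + (if actv c b (tz.val+1) v then (1:ℝ) else 0) := by
        rw [Finset.sum_add_distrib]
        congr 1 <;> · simp only [vl_eq]; exact sum_indicator _ _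
    _ ≤ 2 := by split <;> split <;> norm_num

lemma inn_sep_left (u v : Gn n) (c b tz) (h1 : actv c b (tz.val+1) u)
    (h2 : ¬ actv c b (tz.val+1) v ∨
      msk c b (tz.val+1) (XX u) ≠ msk c b (tz.val+1) (XX v)) :
    1 ≤ inn u v c b tz := by
  unfold inn
  have e1 : vl u (c,b,tz, msk c b (tz.val+1) (XX u)) = 1 := by
    rw [vl_eq, if_pos ⟨h1, rfl⟩]
  have e2 : vl v (c,b,tz, msk c b (tz.val+1) (XX u)) = 0 := by
    rw [vl_eq, if_neg]
    rintro ⟨hv, hm⟩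
    rcases h2 with h2 | h2
    · exact h2 hv
    · exact h2 hm
  have key : |vl u (c,b,tz, msk c b (tz.val+1) (XX u))
      - vl v (c,b,tz, msk c b (tz.val+1) (XX u))| = 1 := by
    rw [e1, e2]; norm_num
  calc (1:ℝ) = _ := key.symm
    _ ≤ _ := Finset.single_le_sum (f := fun ξ => |vl u (c,b,tz,ξ) - vl v (c,b,tz,ξ)|)
        (fun _ _ => abs_nonneg _) (Finset.mem_univ _)

lemma inn_sep_right (u v : Gn n) (c b tz) (h1 : actv c b (tz.val+1) v)
    (h2 : ¬ actv c b (tz.val+1) u ∨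
      msk c b (tz.val+1) (XX u) ≠ msk c b (tz.val+1) (XX v)) :
    1 ≤ inn u v c b tz := by
  unfold inn
  have e1 : vl u (c,b,tz, msk c b (tz.val+1) (XX v)) = 0 := by
    rw [vl_eq, if_neg]
    rintro ⟨hu, hm⟩
    rcases h2 with h2 | h2
    · exact h2 hu
    · exact h2 hm.symm
  have e2 : vl v (c,b,tz, msk c b (tz.val+1) (XX v)) = 1 := by
    rw [vl_eq, if_pos ⟨h1, rfl⟩]
  have key : |vl u (c,b,tz, msk c b (tz.val+1) (XX v))
      - vl v (c,b,tz, msk c b (tz.val+1) (XX v))| = 1 := by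
    rw [e1, e2]; norm_num
  calc (1:ℝ) = _ := key.symm
    _ ≤ _ := Finset.single_le_sum (f := fun ξ => |vl u (c,b,tz,ξ) - vl v (c,b,tz,ξ)|)
        (fun _ _ => abs_nonneg _) (Finset.mem_univ _)

lemma inn_zero (u v : Gn n) (c b tz)
    (h1 : actv c b (tz.val+1) u ↔ actv c b (tz.val+1) v)
    (h2 : actv c b (tz.val+1) u → msk c b (tz.val+1) (XX u) = msk c b (tz.val+1) (XX v)) :
    inn u v c b tz = 0 := by
  unfold inn
  refine Finset.sum_eq_zero fun ξ _ => ?_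
  rw [vl_eq, vl_eq]
  by_cases hu : actv c b (tz.val+1) u
  · rw [h2 hu]
    have := h1.mp hu
    by_cases hm : ξ = msk c b (tz.val+1) (XX v) <;> simp [hu, this, hm]
  · rw [if_neg (fun h => hu h.1), if_neg (fun h => hu (h1.mpr h.1))]
    simp

lemma sum_zmod_ge (F : ZMod n → ℝ) (h0 : ∀ z, 0 ≤ F z) (a b : ℕ) (hb : b ≤ n)
    (H : ∀ s : ℕ, a ≤ s → s < b → 1 ≤ F ((s : ℕ) : ZMod n)) :
    ((b - a : ℕ) : ℝ) ≤ ∑ z : ZMod n, F z := by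
  by_cases hab : b ≤ a
  · rw [show b - a = 0 from by omega]
    exact le_trans (by norm_num) (Finset.sum_nonneg fun z _ => h0 z)
  · set T : Finset (ZMod n) := (Finset.Ico a b).image (Nat.cast : ℕ → ZMod n) with hT
    have hinj : ∀ x ∈ Finset.Ico a b, ∀ y ∈ Finset.Ico a b,
        (x : ZMod n) = (y : ZMod n) → x = y := by
      intro x hx y hy hxy
      rw [Finset.mem_Ico] at hx hy
      have h1 : ((x:ZMod n)).val = x := ZMod.val_cast_of_lt (by omega)
      have h2 : ((y:ZMod n)).val = y := ZMod.val_cast_of_lt (by omega)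
      rw [← h1, ← h2, hxy]
    have hcard : T.card = b - a := by
      rw [hT, Finset.card_image_of_injOn hinj, Nat.card_Ico]
    calc ((b - a : ℕ) : ℝ) = T.card • (1:ℝ) := by rw [hcard]; simp
      _ ≤ ∑ z ∈ T, F z := Finset.card_nsmul_le_sum T F 1 (by
          intro x hx
          rw [hT, Finset.mem_image] at hx
          rcases hx with ⟨s, hs, rfl⟩
          rw [Finset.mem_Ico] at hs
          exact H s hs.1 hs.2)
      _ ≤ ∑ z : ZMod n, F z := Finset.sum_le_sum_of_subset_of_nonneg
          (Finset.subset_univ T) (fun z _ _ => h0 z)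

lemma scol_ge (u v : Gn n) (c : ZMod n) (a₁ b₁ a₂ b₂ : ℕ) (hb₁ : b₁ ≤ n) (hb₂ : b₂ ≤ n)
    (H₁ : ∀ s : ℕ, a₁ ≤ s → s < b₁ → 1 ≤ inn u v c false ((s:ℕ) : ZMod n))
    (H₂ : ∀ s : ℕ, a₂ ≤ s → s < b₂ → 1 ≤ inn u v c true ((s:ℕ) : ZMod n)) :
    ((b₁ - a₁ : ℕ) : ℝ) + ((b₂ - a₂ : ℕ) : ℝ) ≤ scol u v c := by
  rw [scol, Fintype.sum_prod_type, Fintype.sum_bool]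
  have g1 := sum_zmod_ge (inn u v c false) (inn_nonneg u v c false) a₁ b₁ hb₁ H₁
  have g2 := sum_zmod_ge (inn u v c true) (inn_nonneg u v c true) a₂ b₂ hb₂ H₂
  linarith

lemma scol_le_pair (u v : Gn n) (c : ZMod n) (p₁ p₂ : Bool × ZMod n)
    (h : ∀ p : Bool × ZMod n, p ≠ p₁ → p ≠ p₂ → inn u v c p.1 p.2 = 0) :
    scol u v c ≤ 4 := by
  rw [scol]
  have : ∑ p : Bool × ZMod n, inn u v c p.1 p.2 = ∑ p ∈ ({p₁, p₂} : Finset _), inn u v c p.1 p.2 :=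
    (Finset.sum_subset (Finset.subset_univ _) (fun p _ hp => by
      simp only [Finset.mem_insert, Finset.mem_singleton] at hp
      push_neg at hp
      exact h p hp.1 hp.2)).symm
  rw [this]
  calc ∑ p ∈ ({p₁, p₂} : Finset _), inn u v c p.1 p.2
      ≤ ({p₁, p₂} : Finset (Bool × ZMod n)).card • (2:ℝ) :=
        Finset.sum_le_card_nsmul _ _ 2 (fun p _ => inn_le_two u v c p.1 p.2)
    _ ≤ 2 • (2:ℝ) := by
        have : ({p₁, p₂} : Finset (Bool × ZMod n)).card ≤ 2 :=
          (Finset.card_insert_le _ _).trans (by simp)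
        exact nsmul_le_nsmul_left (by norm_num) this
    _ = 4 := by norm_num
  
lemma scol_le_single (u v : Gn n) (c : ZMod n) (p₁ : Bool × ZMod n)
    (h : ∀ p : Bool × ZMod n, p ≠ p₁ → inn u v c p.1 p.2 = 0) :
    scol u v c ≤ 2 := by
  rw [scol]
  have : ∑ p : Bool × ZMod n, inn u v c p.1 p.2 = ∑ p ∈ ({p₁} : Finset _), inn u v c p.1 p.2 :=
    (Finset.sum_subset (Finset.subset_univ _) (fun p _ hp => by
      simp only [Finset.mem_singleton] at hp
      exact h p hp)).symm
  rw [this, Finset.sum_singleton]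
  exact inn_le_two u v c p₁.1 p₁.2

lemma scol_le_crude (u v : Gn n) (c : ZMod n) : scol u v c ≤ 4 * n := by
  rw [scol]
  calc ∑ p : Bool × ZMod n, inn u v c p.1 p.2
      ≤ (Finset.univ : Finset (Bool × ZMod n)).card • (2:ℝ) :=
        Finset.sum_le_card_nsmul _ _ 2 (fun p _ => inn_le_two u v c p.1 p.2)
    _ = (2 * n : ℕ) • (2:ℝ) := by
        congr 1
        rw [Finset.card_univ, Fintype.card_prod, Fintype.card_bool, ZMod.card]
    _ ≤ 4 * n := by
        rw [nsmul_eq_mul]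
        push_cast
        linarith

end Emb

section Comb
variable {n : ℕ} [NeZero n]
open Classical

lemma lpos_lt (c : ZMod n) (u : Gn n) : lpos c u < n := ZMod.val_lt _

lemma msk_apply_of (c : ZMod n) (b : Bool) (t : ℕ) (Y : ZMod n → ZMod 2) (k : ZMod n)
    (h : cond b (n - t ≤ (k - c).val) ((k - c).val < t)) : msk c b t Y k = Y k := by
  cases b
  · exact if_pos h
  · exact if_pos h

lemma msk_ne (c : ZMod n) (b : Bool) (t : ℕ) {Y Z : ZMod n → ZMod 2} {k : ZMod n}
    (hk : Y k ≠ Z k) (h : cond b (n - t ≤ (k - c).val) ((k - c).val < t)) :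
    msk c b t Y ≠ msk c b t Z := fun heq => hk (by
  rw [← msk_apply_of c b t Y k h, heq, msk_apply_of c b t Z k h])

/-- α: position lower bound -/
lemma scol_alpha (u v : Gn n) (c : ZMod n) :
    (2 * (cd0 (PX v - PX u) : ℝ)) ≤ scol u v c := by
  set Li := lpos c u with hLi
  set Lj := lpos c v with hLj
  have hLin := lpos_lt c u
  have hLjn := lpos_lt c v
  have hdist : cd0 (PX v - PX u) ≤ Nat.dist Lj Li := by
    have h : PX v - PX u = (PX v - c) - (PX u - c) := by ring
    rw [h]
    exact cd0_sub_le_dist _ _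
  have H₁ : ∀ s : ℕ, min Li Lj ≤ s → s < max Li Lj →
      1 ≤ inn u v c false ((s:ℕ) : ZMod n) := by
    intro s hs1 hs2
    have hsval : ((s:ℕ) : ZMod n).val = s := ZMod.val_cast_of_lt (by omega)
    rcases le_total Li Lj with hLL | hLL
    · refine inn_sep_right u v c false _ ?_ (Or.inl ?_)
      · show ((s:ZMod n)).val + 1 ≤ Lj
        rw [hsval]; omega
      · show ¬ (((s:ZMod n)).val + 1 ≤ Li)
        rw [hsval]; omega
    · refine inn_sep_left u v c false _ ?_ (Or.inl ?_)
      · show ((s:ZMod n)).val + 1 ≤ Li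
        rw [hsval]; omega
      · show ¬ (((s:ZMod n)).val + 1 ≤ Lj)
        rw [hsval]; omega
  have H₂ : ∀ s : ℕ, n - max Li Lj ≤ s → s < n - min Li Lj →
      1 ≤ inn u v c true ((s:ℕ) : ZMod n) := by
    intro s hs1 hs2
    have hsval : ((s:ℕ) : ZMod n).val = s := ZMod.val_cast_of_lt (by omega)
    rcases le_total Li Lj with hLL | hLL
    · refine inn_sep_left u v c true _ ?_ (Or.inl ?_)
      · show ((s:ZMod n)).val + 1 ≤ n - Li
        rw [hsval]; omega
      · show ¬ (((s:ZMod n)).val + 1 ≤ n - Lj)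
        rw [hsval]; omega
    · refine inn_sep_right u v c true _ ?_ (Or.inl ?_)
      · show ((s:ZMod n)).val + 1 ≤ n - Lj
        rw [hsval]; omega
      · show ¬ (((s:ZMod n)).val + 1 ≤ n - Li)
        rw [hsval]; omega
  have key := scol_ge u v c (min Li Lj) (max Li Lj) (n - max Li Lj) (n - min Li Lj)
    (by omega) (by omega) H₁ H₂
  have e1 : max Li Lj - min Li Lj = Nat.dist Lj Li := by
    simp only [Nat.dist]; omega
  have e2 : (n - min Li Lj) - (n - max Li Lj) = Nat.dist Lj Li := by
    simp only [Nat.dist]; omega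
  rw [e1, e2] at key
  have hc : (cd0 (PX v - PX u) : ℝ) ≤ (Nat.dist Lj Li : ℝ) := by exact_mod_cast hdist
  linarith

/-- β: lamp lower bound -/
lemma scol_beta (u v : Gn n) (k : ZMod n) (hk : XX u k ≠ XX v k) (c : ZMod n) :
    ((max (cd0 (k - PX u)) 1 : ℕ) : ℝ) ≤ scol u v c := by
  set Li := lpos c u with hLi
  set Lk := (k - c).val with hLk
  have hLin := lpos_lt c u
  have hLkn : Lk < n := ZMod.val_lt _
  have hdist : cd0 (k - PX u) ≤ Nat.dist Lk Li := by
    have h : k - PX u = (k - c) - (PX u - c) := by ring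
    rw [h]
    exact cd0_sub_le_dist _ _
  by_cases hcase : Lk < Li
  · have H₁ : ∀ s : ℕ, Lk ≤ s → s < Li → 1 ≤ inn u v c false ((s:ℕ) : ZMod n) := by
      intro s hs1 hs2
      have hsval : ((s:ℕ) : ZMod n).val = s := ZMod.val_cast_of_lt (by omega)
      refine inn_sep_left u v c false _ ?_ ?_
      · show ((s:ZMod n)).val + 1 ≤ Li
        rw [hsval]; omega
      · by_cases hv : actv c false (((s:ZMod n)).val + 1) v
        · exact Or.inr (msk_ne c false _ hk (show Lk < _ by rw [hsval]; omega))
        · exact Or.inl hv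
    have key := scol_ge u v c Lk Li 0 0 (by omega) (by omega) H₁ (by omega)
    have e : ((Li - Lk : ℕ) : ℝ) + ((0 - 0 : ℕ) : ℝ) = ((Li - Lk : ℕ) : ℝ) := by norm_num
    rw [e] at key
    refine le_trans ?_ key
    have : max (cd0 (k - PX u)) 1 ≤ Li - Lk := by
      simp only [Nat.dist] at hdist
      omega
    exact_mod_cast this
  · have H₂ : ∀ s : ℕ, n - Lk - 1 ≤ s → s < n - Li → 1 ≤ inn u v c true ((s:ℕ) : ZMod n) := by
      intro s hs1 hs2
      have hsval : ((s:ℕ) : ZMod n).val = s := ZMod.val_cast_of_lt (by omega)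
      refine inn_sep_left u v c true _ ?_ ?_
      · show ((s:ZMod n)).val + 1 ≤ n - Li
        rw [hsval]; omega
      · by_cases hv : actv c true (((s:ZMod n)).val + 1) v
        · exact Or.inr (msk_ne c true _ hk (show n - _ ≤ Lk by rw [hsval]; omega))
        · exact Or.inl hv
    have key := scol_ge u v c 0 0 (n - Lk - 1) (n - Li) (by omega) (by omega) (by omega) H₂
    have e : ((0 - 0 : ℕ) : ℝ) + (((n - Li) - (n - Lk - 1) : ℕ) : ℝ)
        = (((n - Li) - (n - Lk - 1) : ℕ) : ℝ) := by norm_num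
    rw [e] at key
    refine le_trans ?_ key
    have : max (cd0 (k - PX u)) 1 ≤ (n - Li) - (n - Lk - 1) := by
      simp only [Nat.dist] at hdist
      omega
    exact_mod_cast this

end Comb

section Upper
variable {n : ℕ} [NeZero n]
open Classical

lemma XX_mul_tau (u : Gn n) (p : Multiplicative (ZMod n)) : XX (u * tau p) = XX u := by
  funext s
  show toAdd ((u * tau p).toFun (ofAdd s)) = _
  rw [Wreath.mul_toFun]
  show toAdd (u.toFun (ofAdd s) * 1) = _
  rw [mul_one]
  rfl

lemma PX_mul_gT (u : Gn n) : PX (u * gT) = PX u := by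
  show toAdd (u.pos * 1) = _
  rw [mul_one]
  rfl

lemma lpos_mul_gT (c : ZMod n) (u : Gn n) : lpos c (u * gT) = lpos c u := by
  rw [lpos, PX_mul_gT]; rfl

lemma XX_mul_gT (u : Gn n) (s : ZMod n) (hs : s ≠ PX u) : XX (u * gT) s = XX u s := by
  show toAdd ((u * gT).toFun (ofAdd s)) = _
  rw [Wreath.mul_toFun]
  show toAdd (u.toFun (ofAdd s) * (if u.pos⁻¹ * ofAdd s = 1 then sig else 1)) = _
  rw [if_neg, mul_one]
  · rfl
  · intro h
    apply hs
    rw [inv_mul_eq_one] at h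
    rw [show s = toAdd (ofAdd s) from rfl, ← h]
    rfl

/-- Lipschitz bound for the toggle generator. -/
lemma scol_gT (u : Gn n) (c : ZMod n) : scol u (u * gT) c ≤ 2 := by
  set Li := lpos c u with hLi
  have hLin := lpos_lt c u
  refine scol_le_single u (u * gT) c (true, ((n - Li - 1 : ℕ) : ZMod n)) ?_
  rintro ⟨b, tz⟩ hp
  have hact : ∀ t, actv c b t u ↔ actv c b t (u * gT) := by
    intro t
    unfold actv
    rw [lpos_mul_gT]
  cases b with
  | false =>
    refine inn_zero _ _ _ _ _ (hact _) ?_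
    intro hu
    have hu' : tz.val + 1 ≤ Li := hu
    funext s
    show (if (s-c).val < tz.val+1 then XX u s else 0)
        = (if (s-c).val < tz.val+1 then XX (u * gT) s else 0)
    by_cases hreg : (s-c).val < tz.val + 1
    · rw [if_pos hreg, if_pos hreg]
      refine (XX_mul_gT u s ?_).symm
      intro hspx
      rw [hspx] at hreg
      have : (PX u - c).val = Li := rfl
      omega
    · rw [if_neg hreg, if_neg hreg]
  | true =>
    have htz : tz.val + 1 ≠ n - Li := by
      intro h
      apply hp
      have h1 : tz = ((n - Li - 1 : ℕ) : ZMod n) := by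
        rw [← cast_val tz, show tz.val = n - Li - 1 from by omega]
      rw [h1]
    refine inn_zero _ _ _ _ _ (hact _) ?_
    intro hu
    have hu' : tz.val + 1 ≤ n - Li := hu
    funext s
    show (if n - (tz.val+1) ≤ (s-c).val then XX u s else 0)
        = (if n - (tz.val+1) ≤ (s-c).val then XX (u * gT) s else 0)
    by_cases hreg : n - (tz.val+1) ≤ (s-c).val
    · rw [if_pos hreg, if_pos hreg]
      refine (XX_mul_gT u s ?_).symm
      intro hspx
      rw [hspx] at hreg
      have : (PX u - c).val = Li := rfl
      omega
    · rw [if_neg hreg, if_neg hreg]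

/-- Lipschitz bound for walk generators away from the wrap column. -/
lemma scol_shift (u v : Gn n) (c : ZMod n) (hX : XX v = XX u)
    (h : lpos c v = lpos c u + 1 ∨ lpos c u = lpos c v + 1) : scol u v c ≤ 4 := by
  set Li := lpos c u with hLi
  set Lj := lpos c v with hLj
  set m := min Li Lj with hm
  have hLin := lpos_lt c u
  have hLjn := lpos_lt c v
  have hmn : m < n := by omega
  have hmsk : ∀ b t, msk c b t (XX u) = msk c b t (XX v) := fun b t => by rw [hX]
  refine scol_le_pair u v c (false, ((m:ℕ) : ZMod n)) (true, ((n - m - 1 : ℕ) : ZMod n)) ?_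
  rintro ⟨b, tz⟩ hp1 hp2
  cases b with
  | false =>
    have htz : tz.val ≠ m := by
      intro h1
      apply hp1
      rw [← cast_val tz, h1]
    refine inn_zero _ _ _ _ _ ?_ (fun _ => hmsk _ _)
    show tz.val + 1 ≤ Li ↔ tz.val + 1 ≤ Lj
    omega
  | true =>
    have htz : tz.val ≠ n - m - 1 := by
      intro h1
      apply hp2
      rw [← cast_val tz, h1]
    refine inn_zero _ _ _ _ _ ?_ (fun _ => hmsk _ _)
    show tz.val + 1 ≤ n - Li ↔ tz.val + 1 ≤ n - Lj
    omega

lemma neg_one_cast : ((-1 : ZMod n)) = ((n - 1 : ℕ) : ZMod n) := by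
  rw [Nat.cast_sub (NeZero.one_le), ZMod.natCast_self, Nat.cast_one, zero_sub]

lemma lpos_gP (c : ZMod n) (u : Gn n) (h : c ≠ PX u + 1) :
    lpos c (u * gP) = lpos c u + 1 := by
  have hLin := lpos_lt c u
  have hne : lpos c u ≠ n - 1 := by
    intro h1
    apply h
    have h2 : PX u - c = ((n-1 : ℕ) : ZMod n) := by rw [← h1, lpos, cast_val]
    rw [← neg_one_cast] at h2
    have h4 : PX u = -1 + c := by rwa [sub_eq_iff_eq_add] at h2
    rw [h4]; ring
  show (PX (u * gP) - c).val = lpos c u + 1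
  have hPX : PX (u * gP) = PX u + 1 := rfl
  have he : PX (u * gP) - c = ((lpos c u + 1 : ℕ) : ZMod n) := by
    rw [hPX, Nat.cast_add, Nat.cast_one, lpos, cast_val]
    ring
  rw [he, ZMod.val_cast_of_lt (by omega)]

lemma lpos_gM (c : ZMod n) (u : Gn n) (h : c ≠ PX u) :
    lpos c u = lpos c (u * gM) + 1 := by
  have hLin := lpos_lt c u
  have hne : lpos c u ≠ 0 := by
    intro h1
    apply h
    have h2 : PX u - c = ((0 : ℕ) : ZMod n) := by rw [← h1, lpos, cast_val]
    rw [Nat.cast_zero] at h2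
    have h4 : PX u = 0 + c := by rwa [sub_eq_iff_eq_add] at h2
    rw [h4, zero_add]
  have hPX : PX (u * gM) = PX u + (-1) := rfl
  have he : PX (u * gM) - c = ((lpos c u - 1 : ℕ) : ZMod n) := by
    have h5 : PX u + (-1) - c = (PX u - c) - 1 := by ring
    have h6 : ((lpos c u - 1 : ℕ) : ZMod n) = ((lpos c u : ℕ) : ZMod n) - 1 := by
      rw [Nat.cast_sub (by omega : 1 ≤ lpos c u), Nat.cast_one]
    rw [hPX, h5, h6, show ((lpos c u : ℕ) : ZMod n) = PX u - c from cast_val _]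
  have : lpos c (u * gM) = lpos c u - 1 := by
    show (PX (u * gM) - c).val = _
    rw [he, ZMod.val_cast_of_lt (by omega)]
  omega

lemma sum_scol_gT (u : Gn n) : ∑ c : ZMod n, scol u (u * gT) c ≤ 2 * n := by
  calc ∑ c : ZMod n, scol u (u * gT) c ≤ ∑ _c : ZMod n, (2:ℝ) :=
      Finset.sum_le_sum fun c _ => scol_gT u c
    _ = 2 * n := by rw [Finset.sum_const, Finset.card_univ, ZMod.card, nsmul_eq_mul]; ring

lemma sum_scol_walk (u : Gn n) (v : Gn n) (p : ZMod n) (hX : XX v = XX u)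
    (h : ∀ c ≠ p, lpos c v = lpos c u + 1 ∨ lpos c u = lpos c v + 1) :
    ∑ c : ZMod n, scol u v c ≤ 8 * n := by
  have hb : ∀ c : ZMod n, scol u v c ≤ 4 + (if c = p then 4 * (n:ℝ) else 0) := by
    intro c
    by_cases hc : c = p
    · rw [if_pos hc]
      have h1 := scol_le_crude u v c
      have h2 : (0:ℝ) ≤ 4 := by norm_num
      push_cast at h1 ⊢
      linarith
    · rw [if_neg hc]
      have := scol_shift u v c hX (h c hc)
      linarith
  calc ∑ c : ZMod n, scol u v c ≤ ∑ c : ZMod n, (4 + (if c = p then 4 * (n:ℝ) else 0)) :=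
      Finset.sum_le_sum fun c _ => hb c
    _ = 4 * n + 4 * n := by
      rw [Finset.sum_add_distrib, Finset.sum_const, Finset.sum_ite_eq' Finset.univ p]
      rw [Finset.card_univ, ZMod.card, nsmul_eq_mul]
      simp
      ring
    _ ≤ 8 * n := by linarith

end Upper

section Final
variable {n : ℕ} [NeZero n]
open Classical

lemma word_triv (g0 : Gn n) (h : ∀ z, g0.toFun z = 1) :
    ∃ l : List (Gn n), (∀ s ∈ l, s ∈ wreathGens c2Gens (cycGens n)) ∧ g0 = l.prod ∧
      l.length = cd0 (toAdd g0.pos) := by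
  refine ⟨walkList (toAdd g0.pos), walkList_mem _, ?_, walkList_length _⟩
  rw [walkList_prod]
  refine Wreath.ext (funext fun z => ?_) ?_
  · rw [h z]; rfl
  · show g0.pos = ofAdd (toAdd g0.pos)
    rw [ofAdd_toAdd]

lemma card_ball (M0 : ℕ) :
    (Finset.univ.filter (fun q : ZMod n => cd0 q ≤ M0)).card ≤ 2 * M0 + 1 := by
  set T1 := (Finset.range (M0+1)).image (Nat.cast : ℕ → ZMod n) with hT1
  set T2 := (Finset.range M0).image (fun s : ℕ => -((s+1 : ℕ) : ZMod n)) with hT2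
  have hsub : (Finset.univ.filter (fun q : ZMod n => cd0 q ≤ M0)) ⊆ T1 ∪ T2 := by
    intro q hq
    rw [Finset.mem_filter] at hq
    have hq' : min q.val (-q).val ≤ M0 := hq.2
    rw [Finset.mem_union]
    by_cases hv : q.val ≤ M0
    · left
      rw [hT1, Finset.mem_image]
      exact ⟨q.val, Finset.mem_range.mpr (by omega), cast_val q⟩
    · right
      have hnv : (-q).val ≤ M0 := by omega
      have hnv0 : (-q).val ≠ 0 := by
        intro h0
        have : -q = 0 := by rw [← cast_val (-q), h0]; simp
        have : q = 0 := by rwa [neg_eq_zero] at this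
        rw [this] at hv
        simp [ZMod.val_zero] at hv
      rw [hT2, Finset.mem_image]
      refine ⟨(-q).val - 1, Finset.mem_range.mpr (by omega), ?_⟩
      rw [show (-q).val - 1 + 1 = (-q).val from by omega, cast_val, neg_neg]
  calc (Finset.univ.filter (fun q : ZMod n => cd0 q ≤ M0)).card
      ≤ (T1 ∪ T2).card := Finset.card_le_card hsub
    _ ≤ T1.card + T2.card := Finset.card_union_le _ _
    _ ≤ (M0 + 1) + M0 := by
        gcongr
        · exact (Finset.card_image_le).trans (by rw [Finset.card_range])
        · exact (Finset.card_image_le).trans (by rw [Finset.card_range])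
    _ ≤ 2 * M0 + 1 := by omega

end Final

section L1
variable {Ω : Type} [Fintype Ω] [MeasurableSpace Ω] [DiscreteMeasurableSpace Ω]

lemma memL1 (g : Ω → ℝ) : MemLp g 1 (Measure.count : Measure Ω) := by
  refine ⟨(Measurable.of_discrete).aestronglyMeasurable, ?_⟩
  rw [eLpNorm_one_eq_lintegral_enorm, lintegral_count, tsum_fintype]
  exact ENNReal.sum_lt_top.mpr (fun a _ => ENNReal.coe_lt_top)

lemma normL1 (g : Ω → ℝ) : ‖(memL1 g).toLp g‖ = ∑ ω : Ω, |g ω| := by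
  rw [Lp.norm_toLp, eLpNorm_one_eq_lintegral_enorm, lintegral_count, tsum_fintype,
    ENNReal.toReal_sum (fun a _ => enorm_ne_top)]
  simp [Real.norm_eq_abs]

end L1

/-- The cyclic lamplighter groups `C₂ ≀ C_n` embed into `L₁` with distortion
bounded independently of `n`: there is `D ≥ 1` such that for every `n ≥ 1` there is a map
`f : C₂ ≀ C_n → L₁` with `ρ(u,v) ≤ ‖f(u) − f(v)‖₁ ≤ D·ρ(u,v)` for all `u, v`, where `ρ` is
the word metric of `C₂ ≀ C_n`. -/
theorem cyclic_lamplighter_embeds_L1 :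
    ∃ D : ℝ, 1 ≤ D ∧ ∀ n : ℕ, 1 ≤ n →
      ∃ (Ω : Type) (_ : MeasurableSpace Ω) (μ : Measure Ω)
        (f : Wreath (Multiplicative (ZMod 2)) (Multiplicative (ZMod n)) → Lp ℝ 1 μ),
        ∀ u v : Wreath (Multiplicative (ZMod 2)) (Multiplicative (ZMod n)),
          (wordDist (wreathGens c2Gens (cycGens n)) u v : ℝ) ≤ ‖f u - f v‖ ∧
          ‖f u - f v‖ ≤ D * (wordDist (wreathGens c2Gens (cycGens n)) u v : ℝ) := by
  classical
  refine ⟨72, by norm_num, ?_⟩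
  intro n hn
  haveI : NeZero n := ⟨by omega⟩
  letI msp : MeasurableSpace (Om n) := ⊤
  haveI hdm : DiscreteMeasurableSpace (Om n) := ⟨fun _ => trivial⟩
  haveI hfact : Fact ((1:ℝ≥0∞) ≤ 1) := ⟨le_refl _⟩
  have hn0 : (n:ℝ) ≠ 0 := Nat.cast_ne_zero.mpr (by omega)
  have hnpos : (0:ℝ) < n := by positivity
  set F : Gn n → (Lp ℝ 1 (Measure.count : Measure (Om n))) :=
    fun u => ((9 : ℝ)/n) • ((memL1 (vl u)).toLp (vl u)) with hF
  have hdiff : ∀ u v : Gn n, ‖F u - F v‖ = (9/(n:ℝ)) * ∑ c : ZMod n, scol u v c := by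
    intro u v
    rw [hF]
    simp only
    rw [← smul_sub, norm_smul]
    have h1 : (memL1 (vl u)).toLp (vl u) - (memL1 (vl v)).toLp (vl v)
        = (memL1 (vl u - vl v)).toLp (vl u - vl v) := (MemLp.toLp_sub _ _).symm
    rw [h1, normL1]
    have h2 : ∑ ω : Om n, |(vl u - vl v) ω| = ∑ c : ZMod n, scol u v c := by
      rw [← tot_eq]
      exact Finset.sum_congr rfl fun ω _ => by rw [Pi.sub_apply]
    rw [h2, Real.norm_eq_abs, abs_of_nonneg (by positivity)]
  have hstep : ∀ (w : Gn n) (s : Gn n), s ∈ wreathGens c2Gens (cycGens n) →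
      ‖F w - F (w * s)‖ ≤ 72 := by
    intro w s hs
    have key : ∑ c : ZMod n, scol w (w * s) c ≤ 8 * n := by
      rcases gen_cases hs with rfl | rfl | rfl
      · exact sum_scol_walk w (w * gP) (PX w + 1) (XX_mul_tau w _)
          (fun c hc => Or.inl (lpos_gP c w hc))
      · exact sum_scol_walk w (w * gM) (PX w) (XX_mul_tau w _)
          (fun c hc => Or.inr (lpos_gM c w hc))
      · exact le_trans (sum_scol_gT w) (by push_cast; linarith)
    rw [hdiff]
    have h1 : (9/(n:ℝ)) * ∑ c : ZMod n, scol w (w * s) c ≤ (9/(n:ℝ)) * (8 * n) :=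
      mul_le_mul_of_nonneg_left key (by positivity)
    have h2 : (9/(n:ℝ)) * (8 * n) = 72 := by field_simp; ring
    linarith
  have hind : ∀ (l' : List (Gn n)), (∀ s ∈ l', s ∈ wreathGens c2Gens (cycGens n)) →
      ∀ w : Gn n, ‖F w - F (w * l'.prod)‖ ≤ 72 * l'.length := by
    intro l'
    induction l' with
    | nil =>
      intro _ w
      simp
    | cons s t ih =>
      intro hgen w
      have h1 : w * (s :: t).prod = (w * s) * t.prod := by
        rw [List.prod_cons, mul_assoc]
      rw [h1]
      have h2 : F w - F ((w * s) * t.prod)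
          = (F w - F (w * s)) + (F (w * s) - F ((w * s) * t.prod)) := by abel
      calc ‖F w - F ((w * s) * t.prod)‖
          ≤ ‖F w - F (w * s)‖ + ‖F (w * s) - F ((w * s) * t.prod)‖ := by
            exact norm_sub_le_norm_sub_add_norm_sub _ _ _
        _ ≤ 72 + 72 * t.length :=
            add_le_add (hstep w s (hgen s (List.mem_cons_self (a := s) (l := t))))
              (ih (fun x hx => hgen x (List.mem_cons_of_mem s hx)) (w * s))
        _ = 72 * ((s :: t).length : ℝ) := by
            rw [List.length_cons]
            push_cast
            ring
  refine ⟨Om n, msp, Measure.count, F, ?_⟩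
  intro u v
  constructor
  · -- LOWER BOUND
    set g0 := u⁻¹ * v with hg0
    set A0 := (Finset.univ.filter fun q : ZMod n => g0.toFun (ofAdd q) ≠ 1) with hA0
    set M0 := A0.sup cd0 with hM0
    set d0 := cd0 (toAdd g0.pos) with hd0set
    have hd0' : d0 = cd0 (PX v - PX u) := by
      rw [hd0set]
      congr 1
      show toAdd (u.pos⁻¹ * v.pos) = PX v - PX u
      rw [toAdd_mul, toAdd_inv]
      show -PX u + PX v = PX v - PX u
      ring
    have halpha : ∀ c : ZMod n, (2 * (d0:ℝ)) ≤ scol u v c := by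
      intro c
      have h := scol_alpha u v c
      rw [← hd0'] at h
      exact h
    rcases A0.eq_empty_or_nonempty with hA | hA
    · have hzero : ∀ z, g0.toFun z = 1 := by
        intro z
        by_contra hz
        have hmem : toAdd z ∈ A0 := by
          rw [hA0]
          simp only [Finset.mem_filter, Finset.mem_univ, true_and]
          rwa [ofAdd_toAdd]
        rw [hA] at hmem
        exact absurd hmem (Finset.notMem_empty _)
      obtain ⟨l, hgen, hprod, hlen⟩ := word_triv g0 hzero
      have hρ : wordDist (wreathGens c2Gens (cycGens n)) u v ≤ d0 :=
        Nat.sInf_le ⟨l, hlen.trans hd0set.symm, hgen, hg0.symm.trans hprod⟩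
      have hsum : (n:ℝ) * (2 * (d0:ℝ)) ≤ ∑ c : ZMod n, scol u v c := by
        have h := Finset.card_nsmul_le_sum Finset.univ (scol u v) (2 * (d0:ℝ))
          (fun c _ => halpha c)
        rwa [Finset.card_univ, ZMod.card, nsmul_eq_mul] at h
      have hchain : (d0 : ℝ) ≤ ‖F u - F v‖ := by
        rw [hdiff u v]
        have h1 : (9/(n:ℝ)) * ((n:ℝ) * (2 * (d0:ℝ)))
            ≤ (9/(n:ℝ)) * ∑ c : ZMod n, scol u v c :=
          mul_le_mul_of_nonneg_left hsum (by positivity)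
        have h2 : (9/(n:ℝ)) * ((n:ℝ) * (2 * (d0:ℝ))) = 18 * d0 := by
          field_simp
          ring
        rw [h2] at h1
        have h3 : (0:ℝ) ≤ (d0:ℝ) := Nat.cast_nonneg _
        linarith
      refine le_trans ?_ hchain
      exact_mod_cast hρ
    · obtain ⟨q0, hq0A, hq0⟩ := Finset.exists_mem_eq_sup A0 hA cd0
      set k := PX u + q0 with hk
      have hkdiff : XX u k ≠ XX v k := by
        rw [hA0] at hq0A
        simp only [Finset.mem_filter, Finset.mem_univ, true_and] at hq0A
        intro heq
        apply hq0A
        have hpq : u.pos * ofAdd q0 = ofAdd k := by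
          rw [hk, ofAdd_add]
          rfl
        have heq' : u.toFun (ofAdd k) = v.toFun (ofAdd k) :=
          Multiplicative.toAdd.injective heq
        show (u⁻¹ * v).toFun (ofAdd q0) = 1
        rw [Wreath.mul_toFun]
        show (u.toFun (u.pos * ofAdd q0))⁻¹ * v.toFun ((u.pos⁻¹)⁻¹ * ofAdd q0) = 1
        rw [inv_inv, hpq, heq', inv_mul_cancel]
      have hkd : cd0 (k - PX u) = M0 := by
        rw [hk, add_sub_cancel_left]
        exact hq0.symm
      set B := max (2 * d0) (max M0 1) with hB
      have hptw : ∀ c : ZMod n, (B:ℝ) ≤ scol u v c := by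
        intro c
        have hbeta := scol_beta u v k hkdiff c
        rw [hkd] at hbeta
        push_cast [Nat.cast_max] at hbeta
        rw [hB]
        push_cast [Nat.cast_max]
        exact max_le (halpha c) hbeta
      have hsum : (n:ℝ) * (B:ℝ) ≤ ∑ c : ZMod n, scol u v c := by
        have h := Finset.card_nsmul_le_sum Finset.univ (scol u v) ((B:ℝ))
          (fun c _ => hptw c)
        rwa [Finset.card_univ, ZMod.card, nsmul_eq_mul] at h
      obtain ⟨l, hgen, hprod, hlen⟩ := word_main g0
      have hρ : wordDist (wreathGens c2Gens (cycGens n)) u v ≤ l.length :=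
        Nat.sInf_le ⟨l, rfl, hgen, hg0.symm.trans hprod⟩
      have hcard : A0.card ≤ 2 * M0 + 1 := by
        refine le_trans (Finset.card_le_card ?_) (card_ball M0)
        intro q hq
        rw [Finset.mem_filter]
        exact ⟨Finset.mem_univ _, Finset.le_sup hq⟩
      rw [← hA0, ← hM0, ← hd0set] at hlen
      have hlen' : l.length ≤ 9 * B := by
        rw [hB]
        omega
      rw [hdiff u v]
      have h1 : (9/(n:ℝ)) * ((n:ℝ) * B) ≤ (9/(n:ℝ)) * ∑ c : ZMod n, scol u v c :=
        mul_le_mul_of_nonneg_left hsum (by positivity)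
      have h2 : (9/(n:ℝ)) * ((n:ℝ) * B) = 9 * B := by field_simp
      calc (wordDist (wreathGens c2Gens (cycGens n)) u v : ℝ)
          ≤ (l.length : ℝ) := by exact_mod_cast hρ
        _ ≤ 9 * (B:ℝ) := by exact_mod_cast hlen'
        _ ≤ _ := by rw [← h2]; exact h1
  · -- UPPER BOUND
    have hne : {m : ℕ | ∃ l : List (Gn n), l.length = m ∧
        (∀ s ∈ l, s ∈ wreathGens c2Gens (cycGens n)) ∧ u⁻¹ * v = l.prod}.Nonempty := by
      obtain ⟨l, hgen, hprod, -⟩ := word_main (u⁻¹ * v)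
      exact ⟨l.length, l, rfl, hgen, hprod⟩
    obtain ⟨l, hlen, hgen, hprod⟩ := Nat.sInf_mem hne
    have hv : v = u * l.prod := by
      rw [← hprod, mul_inv_cancel_left]
    have h := hind l hgen u
    rw [← hv] at h
    have he : wordDist (wreathGens c2Gens (cycGens n)) u v = l.length := hlen.symm
    rw [he]
    exact h
end Path
end

section
/- Let G be a group with a finite symmetric generating set S and let (W_t)_{t≥0} be the simple random walk on the Cayley graph of G determined by S. For n ∈ ℕ let X_n = |{0 ≤ k ≤ n : W_k = e}| be the number of visits to the identity up to time n, and let W_{[0,n]} = {W₀, W₁, …, W_n} be the range of the walk. Then for every k ≥ 1 and n ≥ 1, P[|W_{[0,n]}| ≤ k] ≤ k·E[X_n]/n. -/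
/-- The position `W_k = σ₁ ⋯ σ_k` of the walk with steps `σ` after `k` steps. -/
noncomputable def walkAt {G : Type*} [Group G] {n : ℕ} (σ : Fin n → G) (k : ℕ) : G :=
  ((List.ofFn σ).take k).prod

/-- The expectation `E[F(σ₁, …, σ_n)]` of a functional of the first `n` steps of the simple
random walk on the Cayley graph of `G` determined by `S`, where the steps `σ_i` are i.i.d.
uniform on the finite set `S`. -/
noncomputable def pathExp {G : Type*} [Group G] (S : Finset G) (n : ℕ)
    (F : (Fin n → G) → ℝ) : ℝ :=
  (∑ σ : Fin n → {x // x ∈ S}, F fun i => (σ i : G)) / (S.card : ℝ) ^ n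

open Classical in
/-- `X_n`, the number of indices `0 ≤ k ≤ n` with `W_k = e`, as a functional of the steps
`σ₁, …, σ_n` of the walk. -/
noncomputable def visits {G : Type*} [Group G] {n : ℕ} (σ : Fin n → G) : ℕ :=
  ((Finset.range (n + 1)).filter fun k => walkAt σ k = 1).card

open Classical in
/-- `|W_{[0,n]}|`, the number of distinct points visited by the walk up to time `n`, as a
functional of the steps `σ₁, …, σ_n`. -/
noncomputable def rangeCard {G : Type*} [Group G] {n : ℕ} (σ : Fin n → G) : ℕ :=
  ((Finset.range (n + 1)).image fun k => walkAt σ k).card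

open Classical Finset

/-- first visit to a site, and sites so far ≤ k -/
noncomputable def firstGood {G : Type*} [Group G] {n : ℕ} (k j : ℕ) (σ : Fin n → G) : Prop :=
  (∀ t < j, walkAt σ t ≠ walkAt σ j) ∧ (((range (j+1)).image (walkAt σ)).card ≤ k)

noncomputable def retCount {G : Type*} [Group G] {n : ℕ} (j : ℕ) (σ : Fin n → G) : ℕ :=
  ((Finset.Icc j n).filter fun t => walkAt σ t = walkAt σ j).card

section
variable {G : Type*} [Group G] {n k : ℕ}

lemma step1 (σ : Fin n → G) (h : rangeCard σ ≤ k) :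
    n + 1 ≤ ∑ j ∈ range (n+1), (if firstGood k j σ then 1 else 0) * retCount j σ := by
  have hex : ∀ t : ℕ, ∃ j, walkAt σ j = walkAt σ t := fun t => ⟨t, rfl⟩
  set f : ℕ → ℕ := fun t => Nat.find (hex t) with hf
  have hfspec : ∀ t, walkAt σ (f t) = walkAt σ t := fun t => Nat.find_spec (hex t)
  have hfle : ∀ t, f t ≤ t := fun t => Nat.find_le rfl
  have hfmin : ∀ t m, m < f t → walkAt σ m ≠ walkAt σ t := fun t m hm => Nat.find_min (hex t) hm
  have hmaps : ∀ t ∈ range (n+1), f t ∈ range (n+1) := by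
    intro t ht; rw [mem_range] at *; exact lt_of_le_of_lt (hfle t) ht
  have hcard := Finset.card_eq_sum_card_fiberwise hmaps
  rw [Finset.card_range] at hcard
  refine hcard.trans_le ?_
  apply Finset.sum_le_sum
  intro j hj
  rcases Finset.eq_empty_or_nonempty ((range (n+1)).filter fun t => f t = j) with he | ⟨t₀, ht₀⟩
  · rw [he]; simp
  · rw [mem_filter, mem_range] at ht₀
    obtain ⟨ht₀n, ht₀j⟩ := ht₀
    have hWj : walkAt σ j = walkAt σ t₀ := ht₀j ▸ hfspec t₀
    have hfg : firstGood k j σ := by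
      constructor
      · intro t ht hWt
        exact hfmin t₀ t (ht₀j ▸ ht) (hWt.symm ▸ hWj)
      · calc ((range (j+1)).image (walkAt σ)).card
            ≤ ((range (n+1)).image (walkAt σ)).card := by
              apply Finset.card_le_card
              apply Finset.image_subset_image
              exact Finset.range_subset_range.2 (by rw [mem_range] at hj; omega)
          _ ≤ k := h
    rw [if_pos hfg, one_mul]
    apply Finset.card_le_card
    intro t ht
    rw [mem_filter, mem_range] at ht
    rw [mem_filter, Finset.mem_Icc]
    obtain ⟨htn, htj⟩ := ht
    refine ⟨⟨htj ▸ hfle t, by omega⟩, ?_⟩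
    rw [← htj, hfspec t]
end

section
variable {G : Type*} [Group G] {n k : ℕ}

lemma step2 (σ : Fin n → G) (hk : 1 ≤ k) :
    ∑ j ∈ range (n+1), (if firstGood k j σ then 1 else 0) ≤ k := by
  rw [← Finset.card_filter]
  set J := (range (n+1)).filter (fun j => firstGood k j σ) with hJ
  rcases Finset.eq_empty_or_nonempty J with he | hne
  · rw [he]; simpa using hk
  · have hinj : Set.InjOn (walkAt σ) J := by
      intro a ha b hb hab
      rw [hJ, Finset.coe_filter, Set.mem_setOf_eq] at ha hb
      by_contra hne'
      rcases lt_or_gt_of_ne hne' with hlt | hlt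
      · exact hb.2.1 a hlt hab
      · exact ha.2.1 b hlt hab.symm
    rw [← Finset.card_image_of_injOn hinj]
    set m := J.max' hne with hm
    have hmJ : m ∈ J := J.max'_mem hne
    have hmfg : firstGood k m σ := (Finset.mem_filter.1 hmJ).2
    calc (J.image (walkAt σ)).card ≤ (((range (m+1)).image (walkAt σ))).card := by
          apply Finset.card_le_card
          intro x hx
          rw [Finset.mem_image] at hx ⊢
          obtain ⟨j, hjJ, hjx⟩ := hx
          exact ⟨j, Finset.mem_range.2 (by have := Finset.le_max' J j hjJ; omega), hjx⟩
      _ ≤ k := hmfg.2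
end

section
variable {G : Type*} [Group G] {n k : ℕ}

lemma walkAt_congr' {σ τ : Fin n → G} {t : ℕ}
    (h : ∀ i : Fin n, (i : ℕ) < t → σ i = τ i) : walkAt σ t = walkAt τ t := by
  unfold walkAt
  congr 1
  apply List.ext_getElem
  · simp
  · intro i h1 h2
    simp only [List.getElem_take, List.getElem_ofFn]
    simp only [List.length_take, List.length_ofFn, lt_min_iff] at h1
    exact h _ h1.1

def rotSh (n : ℕ) [NeZero n] (j : ℕ) : Fin n ≃ Fin n :=
  Equiv.addRight ⟨j % n, Nat.mod_lt _ (Nat.pos_of_neZero n)⟩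

lemma walkAt_add' (σ : Fin n → G) (j u : ℕ) :
    walkAt σ (j + u) = walkAt σ j * ((((List.ofFn σ).drop j).take u).prod) := by
  unfold walkAt
  rw [List.take_add, List.prod_append]

lemma walkAt_shift' [NeZero n] (σ : Fin n → G) (j u : ℕ) (hu : j + u ≤ n) :
    walkAt (σ ∘ (rotSh n j)) u = (walkAt σ j)⁻¹ * walkAt σ (j + u) := by
  have hn : 0 < n := Nat.pos_of_neZero n
  rw [walkAt_add', inv_mul_cancel_left]
  unfold walkAt rotSh
  congr 1
  apply List.ext_getElem
  · simp; omega
  · intro i h1 h2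
    simp only [List.length_take, List.length_ofFn, List.length_drop, lt_min_iff] at h1 h2
    simp only [List.getElem_take, List.getElem_ofFn, List.getElem_drop, Function.comp_apply]
    congr 1
    have hjn : j < n := by omega
    apply Fin.ext
    simp [Equiv.addRight, Fin.add_def]
    have hij : i + j < n := by omega
    rw [Nat.mod_eq_of_lt hij]
    omega

lemma retCount_eq_shift [NeZero n] (σ : Fin n → G) (j : ℕ) (hj : j ≤ n) :
    retCount j σ = ((range (n - j + 1)).filter fun u =>
      walkAt (σ ∘ (rotSh n j)) u = 1).card := by
  unfold retCount
  apply Finset.card_bij' (fun t _ => t - j) (fun u _ => j + u)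
  · intro t ht
    rw [mem_filter, Finset.mem_Icc] at ht
    rw [mem_filter, mem_range]
    obtain ⟨⟨h1, h2⟩, h3⟩ := ht
    refine ⟨by omega, ?_⟩
    rw [walkAt_shift' σ j (t - j) (by omega)]
    have : j + (t - j) = t := by omega
    rw [this, h3, inv_mul_cancel]
  · intro u hu
    rw [mem_filter, mem_range] at hu
    rw [mem_filter, Finset.mem_Icc]
    obtain ⟨h1, h2⟩ := hu
    rw [walkAt_shift' σ j u (by omega)] at h2
    refine ⟨⟨by omega, by omega⟩, ?_⟩
    rw [eq_comm, ← inv_mul_eq_one]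
    exact h2
  · intro t ht
    rw [mem_filter, Finset.mem_Icc] at ht
    omega
  · intro u hu
    omega

lemma shiftcount_le_visits (τ : Fin n → G) (j : ℕ) :
    ((range (n - j + 1)).filter fun u => walkAt τ u = 1).card ≤ visits τ := by
  unfold visits
  apply Finset.card_le_card
  apply Finset.filter_subset_filter
  apply Finset.range_subset_range.2
  omega
end

section
open Classical Finset
variable {G : Type*} [Group G] {n k : ℕ}

lemma firstGood_congr {σ τ : Fin n → G} {j : ℕ}
    (h : ∀ i : Fin n, (i : ℕ) < j → σ i = τ i) : firstGood k j σ ↔ firstGood k j τ := by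
  have hW : ∀ t, t ≤ j → walkAt σ t = walkAt τ t := fun t ht =>
    walkAt_congr' (fun i hi => h i (lt_of_lt_of_le hi ht))
  have himg : (range (j+1)).image (walkAt σ) = (range (j+1)).image (walkAt τ) := by
    apply Finset.image_congr
    intro t ht
    have ht' : t < j + 1 := by simpa using ht
    exact hW t (by omega)
  unfold firstGood
  rw [himg]
  constructor <;> rintro ⟨h1, h2⟩ <;> refine ⟨?_, h2⟩ <;> intro t ht
  · rw [← hW t (le_of_lt ht), ← hW j le_rfl]; exact h1 t ht
  · rw [hW t (le_of_lt ht), hW j le_rfl]; exact h1 t ht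

lemma mid_congr {σ τ : Fin n → G} {j : ℕ}
    (h : ∀ i : Fin n, j ≤ (i : ℕ) → σ i = τ i) (t : ℕ) (h1 : j ≤ t) :
    (walkAt σ j)⁻¹ * walkAt σ t = (walkAt τ j)⁻¹ * walkAt τ t := by
  have ht : t = j + (t - j) := by omega
  rw [ht, walkAt_add', walkAt_add', inv_mul_cancel_left, inv_mul_cancel_left]
  congr 1
  apply List.ext_getElem
  · simp
  · intro i hi1 hi2
    simp only [List.length_take, List.length_drop, List.length_ofFn, lt_min_iff] at hi1 hi2
    simp only [List.getElem_take, List.getElem_drop, List.getElem_ofFn]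
    exact h _ (Nat.le_add_right j i)

lemma retCount_congr {σ τ : Fin n → G} {j : ℕ}
    (h : ∀ i : Fin n, j ≤ (i : ℕ) → σ i = τ i) : retCount j σ = retCount j τ := by
  unfold retCount
  congr 1
  apply Finset.filter_congr
  intro t ht
  rw [Finset.mem_Icc] at ht
  have key := mid_congr h t ht.1
  constructor <;> intro hh
  · have h2 : (walkAt τ j)⁻¹ * walkAt τ t = 1 := by rw [← key, hh, inv_mul_cancel]
    exact (inv_mul_eq_one.mp h2).symm
  · have h2 : (walkAt σ j)⁻¹ * walkAt σ t = 1 := by rw [key, hh, inv_mul_cancel]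
    exact (inv_mul_eq_one.mp h2).symm

end

def splitEquiv (β : Type*) (n j : ℕ) (hj : j ≤ n) :
    ((Fin j → β) × (Fin (n - j) → β)) ≃ (Fin n → β) where
  toFun := fun ps i => if h : (i : ℕ) < j then ps.1 ⟨i, h⟩ else ps.2 ⟨(i : ℕ) - j, by omega⟩
  invFun := fun σ => (fun i => σ ⟨i, by omega⟩, fun i => σ ⟨j + i, by omega⟩)
  left_inv := by
    rintro ⟨p, s⟩
    ext i
    · simp
    · simp only
      rw [dif_neg (by omega)]
      congr 1
      apply Fin.ext
      simp
  right_inv := by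
    intro σ
    funext i
    simp only
    split_ifs with h
    · congr 1
    · congr 1
      apply Fin.ext
      simp
      omega

lemma indep_sum {β : Type*} [Fintype β] [Nonempty β] {n : ℕ} (j : ℕ) (hj : j ≤ n)
    (F N : (Fin n → β) → ℕ)
    (hF : ∀ σ τ : Fin n → β, (∀ i : Fin n, (i : ℕ) < j → σ i = τ i) → F σ = F τ)
    (hN : ∀ σ τ : Fin n → β, (∀ i : Fin n, j ≤ (i : ℕ) → σ i = τ i) → N σ = N τ) :
    (∑ σ : Fin n → β, F σ * N σ) * (Fintype.card β) ^ n
      = (∑ σ : Fin n → β, F σ) * (∑ σ : Fin n → β, N σ) := by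
  classical
  set e := splitEquiv β n j hj with he
  set s₀ : Fin (n - j) → β := fun _ => Classical.arbitrary β with hs₀
  set p₀ : Fin j → β := fun _ => Classical.arbitrary β with hp₀
  have hFe : ∀ p s, F (e (p, s)) = F (e (p, s₀)) := by
    intro p s
    apply hF
    intro i hi
    show (if h : (i : ℕ) < j then _ else _) = (if h : (i : ℕ) < j then _ else _)
    rw [dif_pos hi, dif_pos hi]
  have hNe : ∀ p s, N (e (p, s)) = N (e (p₀, s)) := by
    intro p s
    apply hN
    intro i hi
    show (if h : (i : ℕ) < j then _ else _) = (if h : (i : ℕ) < j then _ else _)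
    rw [dif_neg (by omega), dif_neg (by omega)]
  have key : ∀ H : (Fin n → β) → ℕ, ∑ σ : Fin n → β, H σ = ∑ p : Fin j → β, ∑ s : Fin (n - j) → β, H (e (p, s)) := by
    intro H
    rw [← Equiv.sum_comp e, Fintype.sum_prod_type]
  rw [key (fun σ => F σ * N σ), key F, key N]
  simp only [hFe, hNe]
  have h1 : ∀ p : Fin j → β, ∑ s : Fin (n - j) → β, F (e (p, s₀)) = (Fintype.card β) ^ (n - j) * F (e (p, s₀)) := by
    intro p; rw [Finset.sum_const, Finset.card_univ, smul_eq_mul]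
    congr 1
    simp [Fintype.card_fun]
  have h2 : ∑ p : Fin j → β, ∑ s : Fin (n - j) → β, N (e (p₀, s)) = (Fintype.card β) ^ j * ∑ s : Fin (n - j) → β, N (e (p₀, s)) := by
    rw [Finset.sum_const, Finset.card_univ, smul_eq_mul]
    congr 1
    simp [Fintype.card_fun]
  rw [h2]
  simp only [h1]
  rw [← Finset.sum_mul_sum, ← Finset.mul_sum]
  have hpow : (Fintype.card β) ^ (n - j) * (Fintype.card β) ^ j = (Fintype.card β) ^ n := by
    rw [← pow_add]; congr 1; omega
  rw [← hpow]
  ring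

section
open Classical Finset
variable {G : Type*} [Group G] {n k : ℕ}

lemma sum_ret_le [NeZero n] (S : Finset G) (j : ℕ) (hj : j ≤ n) :
    ∑ σ : Fin n → {x // x ∈ S}, retCount j (fun i => ((σ i : G)))
      ≤ ∑ σ : Fin n → {x // x ∈ S}, visits (fun i => ((σ i : G))) := by
  set Φ : (Fin n → {x // x ∈ S}) ≃ (Fin n → {x // x ∈ S}) :=
    Equiv.arrowCongr (rotSh n j).symm (Equiv.refl _) with hΦ
  set g : (Fin n → {x // x ∈ S}) → ℕ := fun σ =>
    ((range (n - j + 1)).filter fun u => walkAt (fun i => ((σ i : G))) u = 1).card with hg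
  have h1 : ∀ σ : Fin n → {x // x ∈ S}, retCount j (fun i => ((σ i : G))) = g (Φ σ) := by
    intro σ
    rw [retCount_eq_shift _ j hj, hg]
    congr 1
  calc ∑ σ : Fin n → {x // x ∈ S}, retCount j (fun i => ((σ i : G)))
      = ∑ σ : Fin n → {x // x ∈ S}, g (Φ σ) := Finset.sum_congr rfl (fun σ _ => h1 σ)
    _ = ∑ σ : Fin n → {x // x ∈ S}, g σ := Equiv.sum_comp Φ g
    _ ≤ ∑ σ : Fin n → {x // x ∈ S}, visits (fun i => ((σ i : G))) :=
        Finset.sum_le_sum (fun σ _ => shiftcount_le_visits _ j)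

lemma key_nat (S : Finset G) [Nonempty {x // x ∈ S}] (hn : 0 < n) (hk : 1 ≤ k) :
    (n+1) * (∑ σ : Fin n → {x // x ∈ S}, if rangeCard (fun i => ((σ i : G))) ≤ k then 1 else 0)
      ≤ k * ∑ σ : Fin n → {x // x ∈ S}, visits (fun i => ((σ i : G))) := by
  haveI : NeZero n := ⟨by omega⟩
  set V := ∑ σ : Fin n → {x // x ∈ S}, visits (fun i => ((σ i : G))) with hV
  set c := Fintype.card {x // x ∈ S} with hc
  have hcpos : 0 < c := Fintype.card_pos
  set F : ℕ → (Fin n → {x // x ∈ S}) → ℕ :=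
    fun j σ => if firstGood k j (fun i => ((σ i : G))) then 1 else 0 with hF
  set N : ℕ → (Fin n → {x // x ∈ S}) → ℕ :=
    fun j σ => retCount j (fun i => ((σ i : G))) with hN
  have hA : (n+1) * (∑ σ : Fin n → {x // x ∈ S}, if rangeCard (fun i => ((σ i : G))) ≤ k then 1 else 0)
      ≤ ∑ σ : Fin n → {x // x ∈ S}, ∑ j ∈ range (n+1), F j σ * N j σ := by
    rw [Finset.mul_sum]
    apply Finset.sum_le_sum
    intro σ _
    by_cases h : rangeCard (fun i => ((σ i : G))) ≤ k
    · rw [if_pos h, mul_one]; exact step1 _ h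
    · rw [if_neg h, mul_zero]; exact Nat.zero_le _
  have hB : ∀ j ∈ range (n+1), (∑ σ : Fin n → {x // x ∈ S}, F j σ * N j σ) * c ^ n
      = (∑ σ : Fin n → {x // x ∈ S}, F j σ) * (∑ σ : Fin n → {x // x ∈ S}, N j σ) := by
    intro j hj
    have hj' : j ≤ n := Nat.lt_succ_iff.mp (mem_range.mp hj)
    refine indep_sum j hj' (F j) (N j) ?_ ?_
    · intro σ τ hστ
      simp only [hF]
      exact if_congr (firstGood_congr (fun i hi => by rw [hστ i hi])) rfl rfl
    · intro σ τ hστ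
      simp only [hN]
      exact retCount_congr (fun i hi => by rw [hστ i hi])
  have hC : ∀ j ∈ range (n+1), ∑ σ : Fin n → {x // x ∈ S}, N j σ ≤ V := by
    intro j hj
    have hj' : j ≤ n := Nat.lt_succ_iff.mp (mem_range.mp hj)
    exact sum_ret_le S j hj'
  have main : ((n+1) * (∑ σ : Fin n → {x // x ∈ S}, if rangeCard (fun i => ((σ i : G))) ≤ k then 1 else 0)) * c ^ n
      ≤ (k * V) * c ^ n := by
    calc ((n+1) * (∑ σ : Fin n → {x // x ∈ S}, if rangeCard (fun i => ((σ i : G))) ≤ k then 1 else 0)) * c ^ n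
        ≤ (∑ σ : Fin n → {x // x ∈ S}, ∑ j ∈ range (n+1), F j σ * N j σ) * c ^ n :=
          Nat.mul_le_mul_right _ hA
      _ = (∑ j ∈ range (n+1), ∑ σ : Fin n → {x // x ∈ S}, F j σ * N j σ) * c ^ n := by
          rw [Finset.sum_comm]
      _ = ∑ j ∈ range (n+1), (∑ σ : Fin n → {x // x ∈ S}, F j σ * N j σ) * c ^ n := by
          rw [Finset.sum_mul]
      _ = ∑ j ∈ range (n+1), (∑ σ : Fin n → {x // x ∈ S}, F j σ) * (∑ σ : Fin n → {x // x ∈ S}, N j σ) :=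
          Finset.sum_congr rfl hB
      _ ≤ ∑ j ∈ range (n+1), (∑ σ : Fin n → {x // x ∈ S}, F j σ) * V :=
          Finset.sum_le_sum (fun j hj => Nat.mul_le_mul_left _ (hC j hj))
      _ = (∑ j ∈ range (n+1), ∑ σ : Fin n → {x // x ∈ S}, F j σ) * V := by
          rw [Finset.sum_mul]
      _ = (∑ σ : Fin n → {x // x ∈ S}, ∑ j ∈ range (n+1), F j σ) * V := by
          rw [Finset.sum_comm]
      _ ≤ (∑ _σ : Fin n → {x // x ∈ S}, k) * V :=
          Nat.mul_le_mul_right _ (Finset.sum_le_sum (fun σ _ => step2 _ hk))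
      _ = (c ^ n * k) * V := by
          rw [Finset.sum_const, Finset.card_univ, smul_eq_mul]
          congr 2
          simp [Fintype.card_fun, hc]
      _ = (k * V) * c ^ n := by ring
  exact Nat.le_of_mul_le_mul_right main (pow_pos hcpos n)

end

/-- For every `k ≥ 1` and `n ≥ 1`, the range of the simple random walk
satisfies `P[|W_{[0,n]}| ≤ k] ≤ k·E[X_n]/n`, where `X_n` is the number of visits to the
identity up to time `n`. -/
theorem range_lower_bound
    {G : Type*} [Group G] (S : Finset G) (hS : IsSymmGenSet (S : Set G))
    (k n : ℕ) (hk : 1 ≤ k) (hn : 1 ≤ n) :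
    pathExp S n (fun σ => if rangeCard σ ≤ k then (1 : ℝ) else 0) ≤
      k * (pathExp S n fun σ => (visits σ : ℝ)) / n := by
  classical
  by_cases hS0 : S.card = 0
  · have hSe : S = ∅ := Finset.card_eq_zero.mp hS0
    haveI : IsEmpty {x // x ∈ S} := ⟨fun x => by simpa [hSe] using x.2⟩
    haveI : IsEmpty (Fin n → {x // x ∈ S}) := ⟨fun f => IsEmpty.false (f ⟨0, by omega⟩)⟩
    simp only [pathExp, Finset.univ_eq_empty, Finset.sum_empty]
    norm_num
  · haveI : Nonempty {x // x ∈ S} := by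
      obtain ⟨x, hx⟩ := Finset.card_pos.mp (Nat.pos_of_ne_zero hS0)
      exact ⟨⟨x, hx⟩⟩
    have KEY := key_nat (k := k) (n := n) S (by omega) hk
    unfold pathExp
    set R : ℕ := ∑ σ : Fin n → {x // x ∈ S}, if rangeCard (fun i => ((σ i : G))) ≤ k then 1 else 0 with hR
    set V : ℕ := ∑ σ : Fin n → {x // x ∈ S}, visits (fun i => ((σ i : G))) with hV
    have hNr : (∑ σ : Fin n → {x // x ∈ S}, if rangeCard (fun i => ((σ i : G))) ≤ k then (1:ℝ) else 0) = (R : ℝ) := by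
      rw [hR]; push_cast; rfl
    have hNv : (∑ σ : Fin n → {x // x ∈ S}, ((visits (fun i => ((σ i : G))) : ℝ))) = (V : ℝ) := by
      rw [hV]; push_cast; rfl
    rw [hNr, hNv]
    have hcn : (0:ℝ) < (S.card : ℝ) ^ n := by
      apply pow_pos
      exact_mod_cast Nat.pos_of_ne_zero hS0
    have hn' : (0:ℝ) < (n : ℝ) := by exact_mod_cast hn
    have hform : (k : ℝ) * ((V : ℝ) / (S.card : ℝ) ^ n) / (n : ℝ)
        = ((k : ℝ) * (V : ℝ)) / ((S.card : ℝ) ^ n * (n : ℝ)) := by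
      field_simp
    rw [hform, div_le_div_iff₀ hcn (by positivity)]
    have hkey2 : (n : ℝ) * (R : ℝ) ≤ (k : ℝ) * (V : ℝ) := by
      have h1 : n * R ≤ k * V := le_trans (Nat.mul_le_mul_right R (Nat.le_succ n)) KEY
      exact_mod_cast h1
    calc (R : ℝ) * ((S.card : ℝ) ^ n * (n : ℝ)) = ((n : ℝ) * (R : ℝ)) * (S.card : ℝ) ^ n := by ring
      _ ≤ ((k : ℝ) * (V : ℝ)) * (S.card : ℝ) ^ n := mul_le_mul_of_nonneg_right hkey2 hcn.le
      _ = (k : ℝ) * (V : ℝ) * (S.card : ℝ) ^ n := by ring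
end
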